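/- arXiv:0906.5089 — 2 statements merged into one kernel-verified Lean document; each statement's English description precedes it below -/
import Mathlib

section
/- Let P be a profile of length k of rooted (respectively unrooted) phylogenies over taxon set S such that every input tree P(i), i ∈ [k], is fully resolved. If p ≥ 2/3, then there exists a median tree T for P relative to the parametric triplet (respectively quartet) distance d^(p) such that T is fully resolved. -/
open Finset

attribute [local instance] Classical.propDecidable

/-- A rooted phylogenetic tree over the taxon set `Fin n`, encoded by its hierarchy of
clusters: for each node of the tree, the set of leaves descending from that node.
The conditions say that the whole leaf set and all singletons are clusters, the empty
set is not a cluster, and that the family is laminar.  Such families correspond exactly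
to rooted phylogenies in which every internal node has at least two children. -/
structure RTree (n : ℕ) where
  clusters : Finset (Finset (Fin n))
  univ_mem : Finset.univ ∈ clusters
  singleton_mem : ∀ x : Fin n, {x} ∈ clusters
  empty_not_mem : ∅ ∉ clusters
  laminar : ∀ C ∈ clusters, ∀ D ∈ clusters, C ⊆ D ∨ D ⊆ C ∨ C ∩ D = ∅

/-- All triplets (3-element subsets) of `Fin n`. -/
def triplets (n : ℕ) : Finset (Finset (Fin n)) :=
  Finset.powersetCard 3 Finset.univ

/-- The cluster family of the restriction `T|X`, for a rooted tree with cluster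
family `F`: the nonempty intersections of clusters with `X`. -/
noncomputable def famRestrict {n : ℕ} (F : Finset (Finset (Fin n))) (X : Finset (Fin n)) :
    Finset (Finset (Fin n)) :=
  (F.image (· ∩ X)).filter (· ≠ ∅)

/-- A triplet `X` is resolved in a rooted tree with cluster family `F` iff the
restriction `T|X` is fully resolved, equivalently iff some cluster contains exactly
two of the three elements of `X`. -/
def famResolved {n : ℕ} (F : Finset (Finset (Fin n))) (X : Finset (Fin n)) : Prop :=
  ∃ C ∈ F, (C ∩ X).card = 2

/-- Triplets resolved, identically, in both trees. -/
noncomputable def famSetS {n : ℕ} (F G : Finset (Finset (Fin n))) :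
    Finset (Finset (Fin n)) :=
  (triplets n).filter fun X =>
    famResolved F X ∧ famResolved G X ∧ famRestrict F X = famRestrict G X

/-- Triplets resolved, differently, in both trees. -/
noncomputable def famSetD {n : ℕ} (F G : Finset (Finset (Fin n))) :
    Finset (Finset (Fin n)) :=
  (triplets n).filter fun X =>
    famResolved F X ∧ famResolved G X ∧ famRestrict F X ≠ famRestrict G X

/-- Triplets resolved in the first tree but not in the second. -/
noncomputable def famSetR1 {n : ℕ} (F G : Finset (Finset (Fin n))) :
    Finset (Finset (Fin n)) :=
  (triplets n).filter fun X => famResolved F X ∧ ¬ famResolved G X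

/-- Triplets resolved in the second tree but not in the first. -/
noncomputable def famSetR2 {n : ℕ} (F G : Finset (Finset (Fin n))) :
    Finset (Finset (Fin n)) :=
  (triplets n).filter fun X => famResolved G X ∧ ¬ famResolved F X

/-- Triplets unresolved in both trees. -/
noncomputable def famSetU {n : ℕ} (F G : Finset (Finset (Fin n))) :
    Finset (Finset (Fin n)) :=
  (triplets n).filter fun X => ¬ famResolved F X ∧ ¬ famResolved G X

/-- The parametric triplet distance, at the level of cluster families. -/
noncomputable def famPdist {n : ℕ} (p : ℝ) (F G : Finset (Finset (Fin n))) : ℝ :=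
  ((famSetD F G).card : ℝ) +
    p * (((famSetR1 F G).card : ℝ) + ((famSetR2 F G).card : ℝ))

namespace RTree

variable {n : ℕ}

/-- The cluster family of the restriction `T|X`. -/
noncomputable def restrict (T : RTree n) (X : Finset (Fin n)) : Finset (Finset (Fin n)) :=
  famRestrict T.clusters X

/-- The triplet `X` is resolved in `T`, i.e. `T|X` is fully resolved. -/
def Resolved (T : RTree n) (X : Finset (Fin n)) : Prop :=
  famResolved T.clusters X

/-- A rooted phylogeny is fully resolved (all internal nodes have exactly two
children) iff every triplet is resolved in it. -/
def FullyResolved (T : RTree n) : Prop :=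
  ∀ X ∈ triplets n, T.Resolved X

noncomputable def setS (T₁ T₂ : RTree n) : Finset (Finset (Fin n)) :=
  famSetS T₁.clusters T₂.clusters

noncomputable def setD (T₁ T₂ : RTree n) : Finset (Finset (Fin n)) :=
  famSetD T₁.clusters T₂.clusters

noncomputable def setR1 (T₁ T₂ : RTree n) : Finset (Finset (Fin n)) :=
  famSetR1 T₁.clusters T₂.clusters

noncomputable def setR2 (T₁ T₂ : RTree n) : Finset (Finset (Fin n)) :=
  famSetR2 T₁.clusters T₂.clusters

noncomputable def setU (T₁ T₂ : RTree n) : Finset (Finset (Fin n)) :=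
  famSetU T₁.clusters T₂.clusters

/-- The parametric triplet distance `d⁽ᵖ⁾(T₁,T₂)`. -/
noncomputable def pdist (p : ℝ) (T₁ T₂ : RTree n) : ℝ :=
  famPdist p T₁.clusters T₂.clusters

theorem clusters_injective : Function.Injective (clusters (n := n)) := by
  rintro ⟨s₁, _, _, _, _⟩ ⟨s₂, _, _, _, _⟩ h
  simp only [mk.injEq] at h ⊢
  exact h

noncomputable instance : Fintype (RTree n) :=
  Fintype.ofInjective clusters clusters_injective

end RTree

/-- An unrooted phylogenetic tree over the taxon set `Fin n`, encoded by its split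
system: the collection of all sets of leaves lying on one side of some edge of the
tree.  By the splits-equivalence (Buneman) theorem, the families satisfying these
conditions (all trivial splits present, closure under complementation, pairwise
compatibility) correspond exactly to unrooted phylogenies in which every internal
node has degree at least three. -/
structure UTree (n : ℕ) where
  splits : Finset (Finset (Fin n))
  empty_not_mem : ∅ ∉ splits
  trivial_mem : ∀ x : Fin n, ({x} : Finset (Fin n)) = Finset.univ ∨ {x} ∈ splits
  compl_mem : ∀ A ∈ splits, Finset.univ \ A ∈ splits
  compat : ∀ A ∈ splits, ∀ B ∈ splits, A ⊆ B ∨ B ⊆ A ∨ A ∩ B = ∅ ∨ A ∪ B = Finset.univ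

/-- All quartets (4-element subsets) of `Fin n`. -/
def quartets (n : ℕ) : Finset (Finset (Fin n)) :=
  Finset.powersetCard 4 Finset.univ

/-- The split system of the restriction `T|X`, for an unrooted tree with split
system `F`: the proper nonempty intersections of split sides with `X`. -/
noncomputable def famRestrictU {n : ℕ} (F : Finset (Finset (Fin n))) (X : Finset (Fin n)) :
    Finset (Finset (Fin n)) :=
  (F.image (· ∩ X)).filter fun A => A ≠ ∅ ∧ A ≠ X

/-- A quartet `X` is resolved in an unrooted tree with split system `F` iff the
restriction `T|X` is fully resolved, equivalently iff some split side contains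
exactly two of the four elements of `X`. -/
def famResolvedU {n : ℕ} (F : Finset (Finset (Fin n))) (X : Finset (Fin n)) : Prop :=
  ∃ A ∈ F, (A ∩ X).card = 2

/-- Quartets resolved, identically, in both trees. -/
noncomputable def famSetSU {n : ℕ} (F G : Finset (Finset (Fin n))) :
    Finset (Finset (Fin n)) :=
  (quartets n).filter fun X =>
    famResolvedU F X ∧ famResolvedU G X ∧ famRestrictU F X = famRestrictU G X

/-- Quartets resolved, differently, in both trees. -/
noncomputable def famSetDU {n : ℕ} (F G : Finset (Finset (Fin n))) :
    Finset (Finset (Fin n)) :=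
  (quartets n).filter fun X =>
    famResolvedU F X ∧ famResolvedU G X ∧ famRestrictU F X ≠ famRestrictU G X

/-- Quartets resolved in the first tree but not in the second. -/
noncomputable def famSetR1U {n : ℕ} (F G : Finset (Finset (Fin n))) :
    Finset (Finset (Fin n)) :=
  (quartets n).filter fun X => famResolvedU F X ∧ ¬ famResolvedU G X

/-- Quartets resolved in the second tree but not in the first. -/
noncomputable def famSetR2U {n : ℕ} (F G : Finset (Finset (Fin n))) :
    Finset (Finset (Fin n)) :=
  (quartets n).filter fun X => famResolvedU G X ∧ ¬ famResolvedU F X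

/-- Quartets unresolved in both trees. -/
noncomputable def famSetUU {n : ℕ} (F G : Finset (Finset (Fin n))) :
    Finset (Finset (Fin n)) :=
  (quartets n).filter fun X => ¬ famResolvedU F X ∧ ¬ famResolvedU G X

/-- The parametric quartet distance, at the level of split systems. -/
noncomputable def famPdistU {n : ℕ} (p : ℝ) (F G : Finset (Finset (Fin n))) : ℝ :=
  ((famSetDU F G).card : ℝ) +
    p * (((famSetR1U F G).card : ℝ) + ((famSetR2U F G).card : ℝ))

namespace UTree

variable {n : ℕ}

/-- The split system of the restriction `T|X`. -/
noncomputable def restrict (T : UTree n) (X : Finset (Fin n)) : Finset (Finset (Fin n)) :=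
  famRestrictU T.splits X

/-- The quartet `X` is resolved in `T`, i.e. `T|X` is fully resolved. -/
def Resolved (T : UTree n) (X : Finset (Fin n)) : Prop :=
  famResolvedU T.splits X

/-- An unrooted phylogeny is fully resolved (all internal nodes have degree exactly
three) iff every quartet is resolved in it. -/
def FullyResolved (T : UTree n) : Prop :=
  ∀ X ∈ quartets n, T.Resolved X

noncomputable def setS (T₁ T₂ : UTree n) : Finset (Finset (Fin n)) :=
  famSetSU T₁.splits T₂.splits

noncomputable def setD (T₁ T₂ : UTree n) : Finset (Finset (Fin n)) :=
  famSetDU T₁.splits T₂.splits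

noncomputable def setR1 (T₁ T₂ : UTree n) : Finset (Finset (Fin n)) :=
  famSetR1U T₁.splits T₂.splits

noncomputable def setR2 (T₁ T₂ : UTree n) : Finset (Finset (Fin n)) :=
  famSetR2U T₁.splits T₂.splits

noncomputable def setU (T₁ T₂ : UTree n) : Finset (Finset (Fin n)) :=
  famSetUU T₁.splits T₂.splits

/-- The parametric quartet distance `d⁽ᵖ⁾(T₁,T₂)`. -/
noncomputable def pdist (p : ℝ) (T₁ T₂ : UTree n) : ℝ :=
  famPdistU p T₁.splits T₂.splits

theorem splits_injective : Function.Injective (splits (n := n)) := by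
  rintro ⟨s₁, _, _, _, _⟩ ⟨s₂, _, _, _, _⟩ h
  simp only [mk.injEq] at h ⊢
  exact h

noncomputable instance : Fintype (UTree n) :=
  Fintype.ofInjective splits splits_injective

end UTree

namespace PDM

variable {n : ℕ}

structure Lam (n : ℕ) where
  F : Finset (Finset (Fin n))
  Ω : Finset (Fin n)
  top_mem : Ω ∈ F
  le_top : ∀ A ∈ F, A ⊆ Ω
  sing : ∀ x ∈ Ω, ({x} : Finset (Fin n)) ∈ F
  emp : ∅ ∉ F
  lam : ∀ C ∈ F, ∀ D ∈ F, C ⊆ D ∨ D ⊆ C ∨ C ∩ D = ∅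

noncomputable def key (σ : Equiv.Perm (Fin n)) (D : Finset (Fin n)) : ℕ :=
  if h : D.Nonempty then (σ (D.min' h) : ℕ) else 0

def childs (F : Finset (Finset (Fin n))) (C : Finset (Fin n)) : Finset (Finset (Fin n)) :=
  F.filter fun D => D ⊂ C ∧ ∀ E ∈ F, D ⊂ E → ¬ E ⊂ C

noncomputable def pre (F : Finset (Finset (Fin n))) (σ : Equiv.Perm (Fin n))
    (C : Finset (Fin n)) (y : ℕ) : Finset (Fin n) :=
  ((childs F C).filter fun D => key σ D ≤ y).sup id

noncomputable def ref (F : Finset (Finset (Fin n))) (σ : Equiv.Perm (Fin n)) :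
    Finset (Finset (Fin n)) :=
  F ∪ ((F ×ˢ Finset.range (n+1)).image fun q => pre F σ q.1 q.2).filter (· ≠ ∅)

variable {L : Lam n} {σ : Equiv.Perm (Fin n)}

lemma Lam.nonempty (L : Lam n) {A : Finset (Fin n)} (hA : A ∈ L.F) : A.Nonempty := by
  rcases eq_empty_or_nonempty A with h | h
  · exact absurd (h ▸ hA) L.emp
  · exact h

lemma mem_childs {D C : Finset (Fin n)} :
    D ∈ childs L.F C ↔ D ∈ L.F ∧ D ⊂ C ∧ ∀ E ∈ L.F, D ⊂ E → ¬ E ⊂ C := by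
  simp [childs]

lemma exists_child {C : Finset (Fin n)} (hC : C ∈ L.F) {x : Fin n} (hx : x ∈ C)
    (hne : ({x} : Finset (Fin n)) ≠ C) : ∃ D ∈ childs L.F C, x ∈ D := by
  have hxΩ : x ∈ L.Ω := L.le_top C hC hx
  have hsx : ({x} : Finset (Fin n)) ∈ L.F := L.sing x hxΩ
  set s := L.F.filter fun D => x ∈ D ∧ D ⊂ C with hs
  have hne' : s.Nonempty := ⟨{x}, by
    simp only [hs, mem_filter]
    exact ⟨hsx, by simp, Finset.ssubset_iff_subset_ne.2 ⟨by simpa using hx, hne⟩⟩⟩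
  obtain ⟨D, hD, hmax⟩ := s.exists_max_image (·.card) hne'
  simp only [hs, mem_filter] at hD
  refine ⟨D, mem_childs.2 ⟨hD.1, hD.2.2, ?_⟩, hD.2.1⟩
  intro E hE hDE hEC
  have hEs : E ∈ s := by
    simp only [hs, mem_filter]
    exact ⟨hE, hDE.subset hD.2.1, hEC⟩
  exact absurd (hmax E hEs) (not_le.2 (card_lt_card hDE))

lemma childs_disjoint {C D D' : Finset (Fin n)} (hD : D ∈ childs L.F C)
    (hD' : D' ∈ childs L.F C) (hne : D ≠ D') : D ∩ D' = ∅ := by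
  rw [mem_childs] at hD hD'
  rcases L.lam D hD.1 D' hD'.1 with h | h | h
  · exact absurd hD'.2.1 (hD.2.2 D' hD'.1 (Finset.ssubset_iff_subset_ne.2 ⟨h, hne⟩))
  · exact absurd hD.2.1 (hD'.2.2 D hD.1 (Finset.ssubset_iff_subset_ne.2 ⟨h, hne.symm⟩))
  · exact h

lemma childs_eq_of_mem {C D D' : Finset (Fin n)} (hD : D ∈ childs L.F C)
    (hD' : D' ∈ childs L.F C) {x : Fin n} (hx : x ∈ D) (hx' : x ∈ D') : D = D' := by
  by_contra hne
  have := childs_disjoint hD hD' hne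
  exact absurd (mem_inter.2 ⟨hx, hx'⟩) (by simp [this])

lemma subset_child {C E : Finset (Fin n)} (hC : C ∈ L.F) (hE : E ∈ L.F) (hEC : E ⊂ C) :
    ∃ D ∈ childs L.F C, E ⊆ D := by
  obtain ⟨x, hx⟩ := L.nonempty hE
  have hxC : x ∈ C := hEC.subset hx
  have hsx : ({x} : Finset (Fin n)) ≠ C := by
    rintro rfl
    have h1 : E ⊆ {x} := hEC.subset
    have h2 : E = {x} := by
      have := Finset.subset_singleton_iff.1 h1
      rcases this with he | he
      · exact absurd (he ▸ hE) L.emp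
      · exact he
    exact hEC.ne h2
  obtain ⟨D, hD, hxD⟩ := exists_child hC hxC hsx
  have hD' := mem_childs.1 hD
  rcases L.lam E hE D hD'.1 with h | h | h
  · exact ⟨D, hD, h⟩
  · rcases eq_or_ne D E with rfl | hne
    · exact ⟨D, hD, le_refl _⟩
    · exact absurd hEC (hD'.2.2 E hE (Finset.ssubset_iff_subset_ne.2 ⟨h, hne⟩))
  · exact absurd (mem_inter.2 ⟨hx, hxD⟩) (by simp [h])


lemma mem_pre {C : Finset (Fin n)} {y : ℕ} {x : Fin n} :
    x ∈ pre L.F σ C y ↔ ∃ D ∈ childs L.F C, key σ D ≤ y ∧ x ∈ D := by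
  simp only [pre, Finset.mem_sup, mem_filter, id]
  tauto

lemma pre_subset {C : Finset (Fin n)} {y : ℕ} : pre L.F σ C y ⊆ C := by
  intro x hx
  obtain ⟨D, hD, _, hxD⟩ := mem_pre.1 hx
  exact (mem_childs.1 hD).2.1.subset hxD

lemma pre_mono {C : Finset (Fin n)} {y y' : ℕ} (h : y ≤ y') :
    pre L.F σ C y ⊆ pre L.F σ C y' := by
  intro x hx
  obtain ⟨D, hD, hk, hxD⟩ := mem_pre.1 hx
  exact mem_pre.2 ⟨D, hD, hk.trans h, hxD⟩

/-- If `A` sits inside a single child of `C`, it is contained in or disjoint from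
any prefix union at `C`. -/
lemma subset_or_disjoint_pre {A C D : Finset (Fin n)} (hD : D ∈ childs L.F C)
    (hA : A ⊆ D) {y : ℕ} : A ⊆ pre L.F σ C y ∨ A ∩ pre L.F σ C y = ∅ := by
  by_cases hk : key σ D ≤ y
  · left
    intro x hx
    exact mem_pre.2 ⟨D, hD, hk, hA hx⟩
  · right
    rw [eq_empty_iff_forall_notMem]
    rintro x hx
    rw [mem_inter] at hx
    obtain ⟨D', hD', hk', hxD'⟩ := mem_pre.1 hx.2
    have : D = D' := childs_eq_of_mem hD hD' (hA hx.1) hxD'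
    exact hk (this ▸ hk')

lemma mem_ref {A : Finset (Fin n)} :
    A ∈ ref L.F σ ↔ A ∈ L.F ∨ ((∃ C ∈ L.F, ∃ y ≤ n, pre L.F σ C y = A) ∧ A ≠ ∅) := by
  simp only [ref, mem_union, mem_filter, mem_image, mem_product, Finset.mem_range, Prod.exists]
  constructor
  · rintro (h | ⟨⟨C, y, ⟨hC, hy⟩, hpre⟩, hne⟩)
    · exact Or.inl h
    · exact Or.inr ⟨⟨C, hC, y, by omega, hpre⟩, hne⟩
  · rintro (h | ⟨⟨C, hC, y, hy, hpre⟩, hne⟩)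
    · exact Or.inl h
    · exact Or.inr ⟨⟨C, y, ⟨hC, by omega⟩, hpre⟩, hne⟩

lemma F_subset_ref : L.F ⊆ ref L.F σ := Finset.subset_union_left

/-- Any member of the refinement is contained in or disjoint from a prefix union,
provided it is contained in `C` or disjoint etc.  Core laminarity. -/
lemma ref_laminar :
    ∀ A ∈ ref L.F σ, ∀ B ∈ ref L.F σ, A ⊆ B ∨ B ⊆ A ∨ A ∩ B = ∅ := by
  -- helper: an original cluster versus a prefix union
  have hFP : ∀ A ∈ L.F, ∀ C ∈ L.F, ∀ y : ℕ,
      A ⊆ pre L.F σ C y ∨ pre L.F σ C y ⊆ A ∨ A ∩ pre L.F σ C y = ∅ := by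
    intro A hA C hC y
    rcases L.lam A hA C hC with h | h | h
    · rcases eq_or_ne A C with rfl | hne
      · exact Or.inr (Or.inl pre_subset)
      · obtain ⟨D, hD, hAD⟩ := subset_child hC hA (Finset.ssubset_iff_subset_ne.2 ⟨h, hne⟩)
        rcases subset_or_disjoint_pre hD hAD (y := y) with h' | h'
        · exact Or.inl h'
        · exact Or.inr (Or.inr h')
    · exact Or.inr (Or.inl (pre_subset.trans h))
    · refine Or.inr (Or.inr ?_)
      rw [eq_empty_iff_forall_notMem]
      intro x hx
      rw [mem_inter] at hx
      have : x ∈ A ∩ C := mem_inter.2 ⟨hx.1, pre_subset hx.2⟩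
      simp [h] at this
  intro A hA B hB
  rcases mem_ref.1 hA with hA' | ⟨⟨C, hC, y, hy, hpre⟩, hne⟩
  · rcases mem_ref.1 hB with hB' | ⟨⟨C', hC', y', hy', hpre'⟩, hne'⟩
    · exact L.lam A hA' B hB'
    · exact hpre' ▸ hFP A hA' C' hC' y'
  · rcases mem_ref.1 hB with hB' | ⟨⟨C', hC', y', hy', hpre'⟩, hne'⟩
    · rcases hpre ▸ hFP B hB' C hC y with h | h | h
      · exact Or.inr (Or.inl h)
      · exact Or.inl h
      · exact Or.inr (Or.inr (by rwa [inter_comm]))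
    · -- two prefix unions
      subst hpre hpre'
      rcases eq_or_ne C C' with rfl | hCC
      · rcases le_total y y' with h | h
        · exact Or.inl (pre_mono h)
        · exact Or.inr (Or.inl (pre_mono h))
      · rcases L.lam C hC C' hC' with h | h | h
        · obtain ⟨D, hD, hsub⟩ := subset_child hC' hC (Finset.ssubset_iff_subset_ne.2 ⟨h, hCC⟩)
          rcases subset_or_disjoint_pre hD ((pre_subset).trans hsub) (y := y') with h' | h'
          · exact Or.inl h'
          · exact Or.inr (Or.inr h')
        · obtain ⟨D, hD, hsub⟩ := subset_child hC hC' (Finset.ssubset_iff_subset_ne.2 ⟨h, hCC.symm⟩)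
          rcases subset_or_disjoint_pre hD ((pre_subset).trans hsub) (y := y) with h' | h'
          · exact Or.inr (Or.inl h')
          · exact Or.inr (Or.inr (by rwa [inter_comm]))
        · refine Or.inr (Or.inr ?_)
          rw [eq_empty_iff_forall_notMem]
          intro x hx
          rw [mem_inter] at hx
          have : x ∈ C ∩ C' := mem_inter.2 ⟨pre_subset hx.1, pre_subset hx.2⟩
          simp [h] at this

/-- The refinement of a laminar family is again a laminar family. -/
noncomputable def Lam.refine (L : Lam n) (σ : Equiv.Perm (Fin n)) : Lam n where
  F := ref L.F σ
  Ω := L.Ω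
  top_mem := F_subset_ref L.top_mem
  le_top := by
    intro A hA
    rcases mem_ref.1 hA with h | ⟨⟨C, hC, y, hy, hpre⟩, hne⟩
    · exact L.le_top A h
    · exact hpre ▸ pre_subset.trans (L.le_top C hC)
  sing := fun x hx => F_subset_ref (L.sing x hx)
  emp := by
    rw [mem_ref]
    rintro (h | ⟨_, hne⟩)
    · exact L.emp h
    · exact hne rfl
  lam := ref_laminar


lemma key_eq (σ : Equiv.Perm (Fin n)) {D : Finset (Fin n)} (h : D.Nonempty) :
    key σ D = (σ (D.min' h) : ℕ) := dif_pos h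

/-- `T` consists of the two elements of `S` whose associated children have the
smallest keys. -/
def Bot2 (f : Fin n → Finset (Fin n)) (S : Finset (Fin n)) (σ : Equiv.Perm (Fin n))
    (T : Finset (Fin n)) : Prop :=
  T ⊆ S ∧ T.card = 2 ∧ ∀ u ∈ T, ∀ v ∈ S, v ∉ T → key σ (f u) < key σ (f v)

section Core

variable {X₀ C S : Finset (Fin n)} {f : Fin n → Finset (Fin n)}

/-- Hypotheses for the refinement setup. -/
def Setup (L : Lam n) (X₀ C S : Finset (Fin n)) (f : Fin n → Finset (Fin n)) : Prop :=
  C ∈ L.F ∧ S = C ∩ X₀ ∧ 3 ≤ S.card ∧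
    ∀ x ∈ S, f x ∈ childs L.F C ∧ x ∈ f x ∧ f x ∩ X₀ = {x}

lemma Setup.S_subset' (h : Setup L X₀ C S f) : S ⊆ X₀ := by
  rw [h.2.1]; exact inter_subset_right

lemma Setup.f_ne (h : Setup L X₀ C S f) {x x' : Fin n} (hx : x ∈ S) (hx' : x' ∈ S)
    (hne : x ≠ x') : f x ≠ f x' := by
  intro he
  have h2 := (h.2.2.2 x' hx').2.1
  have h3 := (h.2.2.2 x hx).2.2
  have : x' ∈ f x ∩ X₀ := by
    rw [he]; exact mem_inter.2 ⟨h2, h.S_subset' hx'⟩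
  rw [h3] at this
  have hx'x : x' = x := by simpa using this
  exact hne hx'x.symm

lemma Setup.f_nonempty (h : Setup L X₀ C S f) {x : Fin n} (hx : x ∈ S) : (f x).Nonempty :=
  ⟨x, (h.2.2.2 x hx).2.1⟩

/-- the representative of `x`: the minimum of its child. -/
noncomputable def rep (f : Fin n → Finset (Fin n)) (x : Fin n) : Fin n :=
  if h : (f x).Nonempty then (f x).min' h else x

lemma Setup.key_eq_rep (h : Setup L X₀ C S f) (σ : Equiv.Perm (Fin n)) {x : Fin n}
    (hx : x ∈ S) : key σ (f x) = (σ (rep f x) : ℕ) := by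
  rw [key_eq σ (h.f_nonempty hx), rep, dif_pos (h.f_nonempty hx)]

lemma Setup.rep_mem (h : Setup L X₀ C S f) {x : Fin n} (hx : x ∈ S) : rep f x ∈ f x := by
  rw [rep, dif_pos (h.f_nonempty hx)]
  exact Finset.min'_mem _ _

lemma Setup.rep_inj (h : Setup L X₀ C S f) {x x' : Fin n} (hx : x ∈ S) (hx' : x' ∈ S)
    (hne : x ≠ x') : rep f x ≠ rep f x' := by
  intro he
  have hfne := h.f_ne hx hx' hne
  have hd := childs_disjoint (L := L) (h.2.2.2 x hx).1 (h.2.2.2 x' hx').1 hfne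
  have : rep f x ∈ f x ∩ f x' := mem_inter.2 ⟨h.rep_mem hx, he ▸ h.rep_mem hx'⟩
  rw [hd] at this
  exact absurd this (notMem_empty _)

lemma Setup.key_inj (h : Setup L X₀ C S f) (σ : Equiv.Perm (Fin n)) {x x' : Fin n}
    (hx : x ∈ S) (hx' : x' ∈ S) (hne : x ≠ x') : key σ (f x) ≠ key σ (f x') := by
  rw [h.key_eq_rep σ hx, h.key_eq_rep σ hx']
  intro he
  exact h.rep_inj hx hx' hne (σ.injective (Fin.val_injective he))

lemma Setup.bot2_exists (h : Setup L X₀ C S f) (σ : Equiv.Perm (Fin n)) :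
    ∃ T, Bot2 f S σ T := by
  have hS3 := h.2.2.1
  have hS1 : S.Nonempty := card_pos.1 (by omega)
  obtain ⟨x₁, hx₁, hmin₁⟩ := S.exists_min_image (fun x => key σ (f x)) hS1
  have hS2 : (S.erase x₁).Nonempty := by
    rw [← card_pos, card_erase_of_mem hx₁]
    omega
  obtain ⟨x₂, hx₂, hmin₂⟩ := (S.erase x₁).exists_min_image (fun x => key σ (f x)) hS2
  have hx₂S : x₂ ∈ S := mem_of_mem_erase hx₂
  have hne : x₁ ≠ x₂ := fun he => (mem_erase.1 hx₂).1 he.symm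
  refine ⟨{x₁, x₂}, ?_, ?_, ?_⟩
  · intro z hz
    rcases mem_insert.1 hz with rfl | hz
    · exact hx₁
    · exact (mem_singleton.1 hz) ▸ hx₂S
  · rw [card_insert_of_notMem (by simpa using hne), card_singleton]
  · intro u hu v hv hvT
    have hvne₁ : v ≠ x₁ := fun he => hvT (he ▸ mem_insert_self _ _)
    have hvne₂ : v ≠ x₂ := fun he => hvT (he ▸ mem_insert.2 (Or.inr (mem_singleton_self _)))
    have hvE : v ∈ S.erase x₁ := mem_erase.2 ⟨hvne₁, hv⟩
    rcases mem_insert.1 hu with he | he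
    · rw [he]
      exact lt_of_le_of_ne (hmin₁ v hv) (h.key_inj σ hx₁ hv hvne₁.symm)
    · rw [mem_singleton.1 he]
      exact lt_of_le_of_ne (hmin₂ v hvE) (h.key_inj σ hx₂S hv hvne₂.symm)

lemma bot2_unique {σ : Equiv.Perm (Fin n)} {T T' : Finset (Fin n)}
    (hT : Bot2 f S σ T) (hT' : Bot2 f S σ T') : T = T' := by
  by_contra hne
  have h1 : ¬ T ⊆ T' := fun hss =>
    hne (Finset.eq_of_subset_of_card_le hss (by rw [hT.2.1, hT'.2.1]))
  have h2 : ¬ T' ⊆ T := fun hss =>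
    hne (Finset.eq_of_subset_of_card_le hss (by rw [hT.2.1, hT'.2.1])).symm
  obtain ⟨u, hu, hu'⟩ := Finset.not_subset.1 h1
  obtain ⟨v, hv, hv'⟩ := Finset.not_subset.1 h2
  have l1 := hT.2.2 u hu v (hT'.1 hv) hv'
  have l2 := hT'.2.2 v hv u (hT.1 hu) hu'
  omega

lemma Setup.bot2_realize (h : Setup L X₀ C S f) {σ : Equiv.Perm (Fin n)}
    {T : Finset (Fin n)} (hT : Bot2 f S σ T) :
    ∃ A ∈ ref L.F σ, A ∩ X₀ = T := by
  obtain ⟨u₁, u₂, hu12, hTe⟩ := Finset.card_eq_two.1 hT.2.1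
  have hu₁S : u₁ ∈ S := hT.1 (hTe ▸ mem_insert_self _ _)
  have hu₂S : u₂ ∈ S := hT.1 (hTe ▸ mem_insert.2 (Or.inr (mem_singleton_self _)))
  set y := max (key σ (f u₁)) (key σ (f u₂)) with hy
  refine ⟨pre L.F σ C y, ?_, ?_⟩
  · refine mem_ref.2 (Or.inr ⟨⟨C, h.1, y, ?_, rfl⟩, ?_⟩)
    · have e1 : key σ (f u₁) = (σ (rep f u₁) : ℕ) := h.key_eq_rep σ hu₁S
      have e2 : key σ (f u₂) = (σ (rep f u₂) : ℕ) := h.key_eq_rep σ hu₂S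
      have i1 := (σ (rep f u₁)).isLt
      have i2 := (σ (rep f u₂)).isLt
      rw [hy, max_le_iff]
      omega
    · intro he
      have : u₁ ∈ pre L.F σ C y :=
        mem_pre.2 ⟨f u₁, (h.2.2.2 u₁ hu₁S).1, le_max_left _ _, (h.2.2.2 u₁ hu₁S).2.1⟩
      rw [he] at this
      exact absurd this (notMem_empty _)
  · ext z
    constructor
    · intro hz
      rw [mem_inter] at hz
      have hzC : z ∈ C := pre_subset (L := L) hz.1
      have hzS : z ∈ S := h.2.1 ▸ mem_inter.2 ⟨hzC, hz.2⟩
      obtain ⟨D, hD, hkD, hzD⟩ := mem_pre.1 hz.1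
      have hDz : D = f z := childs_eq_of_mem (L := L) hD (h.2.2.2 z hzS).1 hzD (h.2.2.2 z hzS).2.1
      by_contra hzT
      have l1 := hT.2.2 u₁ (hTe ▸ mem_insert_self _ _) z hzS hzT
      have l2 := hT.2.2 u₂ (hTe ▸ mem_insert.2 (Or.inr (mem_singleton_self _))) z hzS hzT
      rw [hDz] at hkD
      have : y < key σ (f z) := by rw [hy, max_lt_iff]; exact ⟨l1, l2⟩
      omega
    · intro hz
      rw [mem_inter]
      have hzS : z ∈ S := hT.1 hz
      refine ⟨?_, h.S_subset' hzS⟩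
      rw [hTe] at hz
      rcases mem_insert.1 hz with he | he
      · exact mem_pre.2 ⟨f u₁, (h.2.2.2 u₁ hu₁S).1, le_max_left _ _, he ▸ (h.2.2.2 u₁ hu₁S).2.1⟩
      · rw [mem_singleton.1 he]
        exact mem_pre.2 ⟨f u₂, (h.2.2.2 u₂ hu₂S).1, le_max_right _ _, (h.2.2.2 u₂ hu₂S).2.1⟩

lemma Setup.E_swap (h : Setup L X₀ C S f) {a b : Fin n} (ha : a ∈ S) (hb : b ∈ S)
    (T : Finset (Fin n)) :
    ((univ : Finset (Equiv.Perm (Fin n))).filter fun σ => Bot2 f S σ T).card =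
      ((univ : Finset (Equiv.Perm (Fin n))).filter fun σ =>
        Bot2 f S σ (T.image (Equiv.swap a b))).card := by
  set e := Equiv.swap a b with he
  set τ := Equiv.swap (rep f a) (rep f b) with hτ
  have heS : ∀ x ∈ S, e x ∈ S := by
    intro x hx
    by_cases h1 : x = a
    · simp [he, h1, Equiv.swap_apply_left]; exact hb
    · by_cases h2 : x = b
      · simp [he, h2, Equiv.swap_apply_right]; exact ha
      · rw [he, Equiv.swap_apply_of_ne_of_ne h1 h2]; exact hx
  have hkey : ∀ (σ : Equiv.Perm (Fin n)), ∀ x ∈ S, key (σ * τ) (f x) = key σ (f (e x)) := by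
    intro σ x hx
    have hex : e x ∈ S := heS x hx
    rw [h.key_eq_rep _ hx, h.key_eq_rep _ hex]
    have : τ (rep f x) = rep f (e x) := by
      by_cases h1 : x = a
      · subst h1
        simp [hτ, he, Equiv.swap_apply_left]
      · by_cases h2 : x = b
        · subst h2
          simp [hτ, he, Equiv.swap_apply_right]
        · have r1 : rep f x ≠ rep f a := h.rep_inj hx ha h1
          have r2 : rep f x ≠ rep f b := h.rep_inj hx hb h2
          rw [hτ, Equiv.swap_apply_of_ne_of_ne r1 r2, he, Equiv.swap_apply_of_ne_of_ne h1 h2]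
    rw [Equiv.Perm.mul_apply, this]
  have himage : ∀ U : Finset (Fin n), (U.image e).image e = U := by
    intro U
    rw [Finset.image_image]
    have : (e ∘ e) = id := by
      funext z
      simp [he, Equiv.swap_apply_self]
    rw [this, Finset.image_id]
  have hstep : ∀ (σ : Equiv.Perm (Fin n)) (U : Finset (Fin n)), U ⊆ S → Bot2 f S σ U →
      Bot2 f S (σ * τ) (U.image e) := by
    intro σ U hUS hU
    refine ⟨?_, ?_, ?_⟩
    · intro z hz
      obtain ⟨w, hw, rfl⟩ := Finset.mem_image.1 hz
      exact heS w (hUS hw)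
    · rw [Finset.card_image_of_injective _ e.injective, hU.2.1]
    · intro u hu v hv hvT
      have huS : u ∈ S := by
        obtain ⟨w, hw, rfl⟩ := Finset.mem_image.1 hu
        exact heS w (hUS hw)
      rw [hkey σ u huS, hkey σ v hv]
      have heu : e u ∈ U := by
        obtain ⟨w, hw, rfl⟩ := Finset.mem_image.1 hu
        rw [he]
        simp only [Equiv.swap_apply_self]
        exact hw
      have hev : e v ∈ S := heS v hv
      have hevU : e v ∉ U := by
        intro hc
        exact hvT (Finset.mem_image.2 ⟨e v, hc, by simp [he, Equiv.swap_apply_self]⟩)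
      exact hU.2.2 (e u) heu (e v) hev hevU
  refine Finset.card_bij' (fun σ _ => σ * τ) (fun σ _ => σ * τ) ?_ ?_ ?_ ?_
  · intro σ hσ
    rw [mem_filter] at hσ ⊢
    exact ⟨mem_univ _, hstep σ T hσ.2.1 hσ.2⟩
  · intro σ hσ
    rw [mem_filter] at hσ ⊢
    refine ⟨mem_univ _, ?_⟩
    have := hstep σ (T.image e) hσ.2.1 hσ.2
    rwa [himage] at this
  · intro σ _
    show σ * τ * τ = σ
    rw [mul_assoc, hτ, Equiv.swap_mul_self, mul_one]
  · intro σ _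
    show σ * τ * τ = σ
    rw [mul_assoc, hτ, Equiv.swap_mul_self, mul_one]

lemma Setup.E_any (h : Setup L X₀ C S f) {T T' : Finset (Fin n)}
    (hT : T ∈ S.powersetCard 2) (hT' : T' ∈ S.powersetCard 2) :
    ((univ : Finset (Equiv.Perm (Fin n))).filter fun σ => Bot2 f S σ T).card =
      ((univ : Finset (Equiv.Perm (Fin n))).filter fun σ => Bot2 f S σ T').card := by
  rw [Finset.mem_powersetCard] at hT hT'
  obtain ⟨u, v, huv, rfl⟩ := Finset.card_eq_two.1 hT.2
  obtain ⟨u', v', huv', rfl⟩ := Finset.card_eq_two.1 hT'.2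
  have huS : u ∈ S := hT.1 (mem_insert_self _ _)
  have hvS : v ∈ S := hT.1 (mem_insert.2 (Or.inr (mem_singleton_self _)))
  have huS' : u' ∈ S := hT'.1 (mem_insert_self _ _)
  have hvS' : v' ∈ S := hT'.1 (mem_insert.2 (Or.inr (mem_singleton_self _)))
  set e1 := Equiv.swap u u' with he1
  have step1 := h.E_swap huS huS' ({u, v} : Finset (Fin n))
  have himg1 : ({u, v} : Finset (Fin n)).image e1 = {u', e1 v} := by
    rw [Finset.image_insert, Finset.image_singleton, he1, Equiv.swap_apply_left]
  set w := e1 v with hw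
  have hwS : w ∈ S := by
    rw [hw, he1, Equiv.swap_apply_def]
    split
    · exact huS'
    · split
      · exact huS
      · exact hvS
  have hwu' : w ≠ u' := by
    rw [hw, ← Equiv.swap_apply_left u u', ← he1]
    exact fun hc => huv.symm (e1.injective hc)
  have step2 := h.E_swap hwS hvS' ({u', w} : Finset (Fin n))
  have himg2 : ({u', w} : Finset (Fin n)).image (Equiv.swap w v') = {u', v'} := by
    rw [Finset.image_insert, Finset.image_singleton, Equiv.swap_apply_left,
      Equiv.swap_apply_of_ne_of_ne hwu'.symm huv']
  rw [himg1] at step1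
  rw [himg2] at step2
  rw [step1, step2]

lemma Setup.E_sum (h : Setup L X₀ C S f) :
    ∑ T ∈ S.powersetCard 2,
      ((univ : Finset (Equiv.Perm (Fin n))).filter fun σ => Bot2 f S σ T).card =
      Fintype.card (Equiv.Perm (Fin n)) := by
  choose b hb using h.bot2_exists
  have hmem : ∀ σ ∈ (univ : Finset (Equiv.Perm (Fin n))), b σ ∈ S.powersetCard 2 := by
    intro σ _
    exact Finset.mem_powersetCard.2 ⟨(hb σ).1, (hb σ).2.1⟩
  have hfib := Finset.card_eq_sum_card_fiberwise hmem
  rw [Finset.card_univ] at hfib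
  rw [hfib]
  refine Finset.sum_congr rfl fun T hT => ?_
  congr 1
  ext σ
  simp only [mem_filter, mem_univ, true_and]
  constructor
  · intro hB
    exact bot2_unique (hb σ) hB
  · rintro rfl
    exact hb σ

end Core

lemma exists_setup (L : Lam n) (X₀ : Finset (Fin n)) (hX : X₀ ⊆ L.Ω) (h2 : 2 ≤ X₀.card)
    (hunres : ∀ C ∈ L.F, (C ∩ X₀).card ≠ 2) :
    ∃ C fc, Setup L X₀ C (C ∩ X₀) fc := by
  have hM : (L.F.filter fun C => 2 ≤ (C ∩ X₀).card).Nonempty := by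
    refine ⟨L.Ω, mem_filter.2 ⟨L.top_mem, ?_⟩⟩
    rw [Finset.inter_eq_right.2 hX]
    exact h2
  obtain ⟨C, hC, hmin⟩ := (L.F.filter fun C => 2 ≤ (C ∩ X₀).card).exists_min_image (·.card) hM
  rw [mem_filter] at hC
  have h3 : 3 ≤ (C ∩ X₀).card := by
    have := hunres C hC.1
    have := hC.2
    omega
  have hch : ∀ x ∈ C ∩ X₀, ∃ D, D ∈ childs L.F C ∧ x ∈ D ∧ D ∩ X₀ = {x} := by
    intro x hx
    have hxC : x ∈ C := (mem_inter.1 hx).1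
    have hsx : ({x} : Finset (Fin n)) ≠ C := by
      intro he
      have hsub : C ∩ X₀ ⊆ {x} := he ▸ inter_subset_left
      have := card_le_card hsub
      simp only [card_singleton] at this
      omega
    obtain ⟨D, hD, hxD⟩ := exists_child (L := L) hC.1 hxC hsx
    refine ⟨D, hD, hxD, ?_⟩
    have hDF : D ∈ L.F := (mem_childs.1 hD).1
    have hDC : D ⊂ C := (mem_childs.1 hD).2.1
    have hcard : (D ∩ X₀).card < 2 := by
      by_contra hcon
      push_neg at hcon
      have := hmin D (mem_filter.2 ⟨hDF, hcon⟩)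
      exact absurd (card_lt_card hDC) (not_lt.2 this)
    have hxm : x ∈ D ∩ X₀ := mem_inter.2 ⟨hxD, (mem_inter.1 hx).2⟩
    refine Finset.eq_singleton_iff_unique_mem.2 ⟨hxm, fun y hy => ?_⟩
    exact Finset.card_le_one.1 (by omega) y hy x hxm
  choose fc hfc using hch
  refine ⟨C, fun x => if h : x ∈ C ∩ X₀ then fc x h else ∅, hC.1, rfl, h3, fun x hx => ?_⟩
  simp only [dif_pos hx]
  exact hfc x hx

lemma master_count (L : Lam n) (X₀ : Finset (Fin n)) (hX : X₀ ⊆ L.Ω) (h2 : 2 ≤ X₀.card)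
    (h34 : X₀.card = 3 ∨ X₀.card = 4)
    (hunres : ∀ C ∈ L.F, (C ∩ X₀).card ≠ 2)
    (Q : Finset (Fin n)) (hQX : Q ⊆ X₀) (hQ2 : Q.card = 2) :
    Fintype.card (Equiv.Perm (Fin n)) ≤
      3 * ((univ : Finset (Equiv.Perm (Fin n))).filter fun σ =>
        ∃ A ∈ ref L.F σ, (A ∩ X₀).card = 2 ∧ (A ∩ X₀ = Q ∨ A ∩ X₀ = X₀ \ Q)).card := by
  obtain ⟨C, fc, hset⟩ := exists_setup L X₀ hX h2 hunres
  set S := C ∩ X₀ with hSdef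
  set M := (univ : Finset (Equiv.Perm (Fin n))).filter fun σ =>
        ∃ A ∈ ref L.F σ, (A ∩ X₀).card = 2 ∧ (A ∩ X₀ = Q ∨ A ∩ X₀ = X₀ \ Q) with hM
  have hS3 : 3 ≤ S.card := hset.2.2.1
  have hSX : S ⊆ X₀ := hset.S_subset'
  have hSle : S.card ≤ X₀.card := card_le_card hSX
  have hEM : ∀ T : Finset (Fin n), T ⊆ S → T.card = 2 → (T = Q ∨ T = X₀ \ Q) →
      ((univ : Finset (Equiv.Perm (Fin n))).filter fun σ => Bot2 fc S σ T) ⊆ M := by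
    intro T hTS hT2 hTQ σ hσ
    rw [mem_filter] at hσ
    obtain ⟨A, hA, hAX⟩ := hset.bot2_realize hσ.2
    rw [hM, mem_filter]
    exact ⟨mem_univ _, A, hA, hAX ▸ hT2, hAX ▸ hTQ⟩
  have hS34 : S.card = 3 ∨ S.card = 4 := by omega
  rcases hS34 with hSc | hSc
  · obtain ⟨Tq, hTqS, hTq2, hTqQ⟩ :
        ∃ Tq : Finset (Fin n), Tq ⊆ S ∧ Tq.card = 2 ∧ (Tq = Q ∨ Tq = X₀ \ Q) := by
      by_cases hQS : Q ⊆ S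
      · exact ⟨Q, hQS, hQ2, Or.inl rfl⟩
      · have hX4 : X₀.card = 4 := by
          rcases h34 with h | h
          · have hSeq : S = X₀ := Finset.eq_of_subset_of_card_le hSX (by omega)
            refine absurd ?_ hQS
            rw [hSeq]
            exact hQX
          · exact h
        have hXS : (X₀ \ S).card = 1 := by
          rw [card_sdiff_of_subset hSX]
          omega
        obtain ⟨d, hd⟩ := Finset.card_eq_one.1 hXS
        have hdQ : d ∈ Q := by
          obtain ⟨q, hq, hq'⟩ := Finset.not_subset.1 hQS
          have : q ∈ X₀ \ S := mem_sdiff.2 ⟨hQX hq, hq'⟩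
          rw [hd, mem_singleton] at this
          exact this ▸ hq
        refine ⟨X₀ \ Q, ?_, ?_, Or.inr rfl⟩
        · intro z hz
          rw [mem_sdiff] at hz
          by_contra hzS
          have : z ∈ X₀ \ S := mem_sdiff.2 ⟨hz.1, hzS⟩
          rw [hd, mem_singleton] at this
          exact hz.2 (this ▸ hdQ)
        · rw [card_sdiff_of_subset hQX]
          omega
    have hTqmem : Tq ∈ S.powersetCard 2 := Finset.mem_powersetCard.2 ⟨hTqS, hTq2⟩
    have hsum := hset.E_sum
    have hconst : ∀ T ∈ S.powersetCard 2,
        ((univ : Finset (Equiv.Perm (Fin n))).filter fun σ => Bot2 fc S σ T).card =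
        ((univ : Finset (Equiv.Perm (Fin n))).filter fun σ => Bot2 fc S σ Tq).card :=
      fun T hT => hset.E_any hT hTqmem
    rw [Finset.sum_congr rfl hconst, Finset.sum_const, smul_eq_mul,
      Finset.card_powersetCard, hSc] at hsum
    have hle := card_le_card (hEM Tq hTqS hTq2 hTqQ)
    calc Fintype.card (Equiv.Perm (Fin n))
        = Nat.choose 3 2 * _ := hsum.symm
      _ ≤ 3 * M.card := by
          rw [show Nat.choose 3 2 = 3 by decide]
          exact Nat.mul_le_mul_left 3 hle
  · have hX4 : X₀.card = 4 := by omega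
    have hSeq : S = X₀ := Finset.eq_of_subset_of_card_le hSX (by omega)
    have hQS : Q ⊆ S := hSeq ▸ hQX
    have hQ'S : X₀ \ Q ⊆ S := hSeq ▸ sdiff_subset
    have hQ'2 : (X₀ \ Q).card = 2 := by rw [card_sdiff_of_subset hQX]; omega
    have hQmem : Q ∈ S.powersetCard 2 := Finset.mem_powersetCard.2 ⟨hQS, hQ2⟩
    have hQ'mem : X₀ \ Q ∈ S.powersetCard 2 := Finset.mem_powersetCard.2 ⟨hQ'S, hQ'2⟩
    have hQne : Q ≠ X₀ \ Q := by
      obtain ⟨q, hq⟩ := Finset.card_pos.1 (by omega : 0 < Q.card)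
      intro he
      have : q ∈ X₀ \ Q := he ▸ hq
      exact (mem_sdiff.1 this).2 hq
    have hsum := hset.E_sum
    have hconst : ∀ T ∈ S.powersetCard 2,
        ((univ : Finset (Equiv.Perm (Fin n))).filter fun σ => Bot2 fc S σ T).card =
        ((univ : Finset (Equiv.Perm (Fin n))).filter fun σ => Bot2 fc S σ Q).card :=
      fun T hT => hset.E_any hT hQmem
    rw [Finset.sum_congr rfl hconst, Finset.sum_const, smul_eq_mul,
      Finset.card_powersetCard, hSc] at hsum
    have he' : ((univ : Finset (Equiv.Perm (Fin n))).filter fun σ =>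
          Bot2 fc S σ (X₀ \ Q)).card =
        ((univ : Finset (Equiv.Perm (Fin n))).filter fun σ => Bot2 fc S σ Q).card :=
      hset.E_any hQ'mem hQmem
    have hdisj : Disjoint
        ((univ : Finset (Equiv.Perm (Fin n))).filter fun σ => Bot2 fc S σ Q)
        ((univ : Finset (Equiv.Perm (Fin n))).filter fun σ => Bot2 fc S σ (X₀ \ Q)) := by
      rw [Finset.disjoint_left]
      intro σ h1 h2
      rw [mem_filter] at h1 h2
      exact hQne (bot2_unique h1.2 h2.2)
    have hsub : ((univ : Finset (Equiv.Perm (Fin n))).filter fun σ => Bot2 fc S σ Q) ∪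
        ((univ : Finset (Equiv.Perm (Fin n))).filter fun σ => Bot2 fc S σ (X₀ \ Q)) ⊆ M :=
      Finset.union_subset (hEM Q hQS hQ2 (Or.inl rfl)) (hEM _ hQ'S hQ'2 (Or.inr rfl))
    have hle := card_le_card hsub
    rw [Finset.card_union_of_disjoint hdisj, he'] at hle
    calc Fintype.card (Equiv.Perm (Fin n))
        = Nat.choose 4 2 * _ := hsum.symm
      _ ≤ 3 * M.card := by
          rw [show Nat.choose 4 2 = 6 by decide]
          omega

lemma ref_resolve (L : Lam n) (X₀ : Finset (Fin n)) (hX : X₀ ⊆ L.Ω) (h2 : 2 ≤ X₀.card)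
    (σ : Equiv.Perm (Fin n)) : ∃ A ∈ ref L.F σ, (A ∩ X₀).card = 2 := by
  by_cases hres : ∃ C ∈ L.F, (C ∩ X₀).card = 2
  · obtain ⟨C, hC, h⟩ := hres
    exact ⟨C, F_subset_ref hC, h⟩
  · push_neg at hres
    obtain ⟨C, fc, hset⟩ := exists_setup L X₀ hX h2 hres
    obtain ⟨T, hT⟩ := hset.bot2_exists σ
    obtain ⟨A, hA, hAX⟩ := hset.bot2_realize hT
    exact ⟨A, hA, hAX ▸ hT.2.1⟩


/-- The canonical restriction of a resolved triplet. -/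
noncomputable def tripRes (X P : Finset (Fin n)) : Finset (Finset (Fin n)) :=
  insert X (insert P (X.image fun x => ({x} : Finset (Fin n))))

lemma famRestrict_eq_tripRes {F : Finset (Finset (Fin n))}
    (hlam : ∀ C ∈ F, ∀ D ∈ F, C ⊆ D ∨ D ⊆ C ∨ C ∩ D = ∅)
    (hsing : ∀ x : Fin n, ({x} : Finset (Fin n)) ∈ F)
    (huniv : (Finset.univ : Finset (Fin n)) ∈ F)
    {X P B : Finset (Fin n)} (hX3 : X.card = 3) (hB : B ∈ F) (hBX : B ∩ X = P)
    (hP2 : P.card = 2) :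
    famRestrict F X = tripRes X P := by
  ext A
  simp only [famRestrict, tripRes, mem_filter, Finset.mem_image, mem_insert, ne_eq]
  constructor
  · rintro ⟨⟨C, hC, rfl⟩, hne⟩
    have hsub : C ∩ X ⊆ X := inter_subset_right
    have hcard : (C ∩ X).card ≤ 3 := hX3 ▸ card_le_card hsub
    have hpos : 0 < (C ∩ X).card := card_pos.2 (nonempty_iff_ne_empty.2 hne)
    have h123 : (C ∩ X).card = 1 ∨ (C ∩ X).card = 2 ∨ (C ∩ X).card = 3 := by omega
    rcases h123 with h1 | h2 | h3
    · obtain ⟨x, hx⟩ := Finset.card_eq_one.1 h1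
      have hxX : x ∈ X := hsub (hx ▸ mem_singleton_self x)
      exact Or.inr (Or.inr ⟨x, hxX, hx.symm⟩)
    · rcases hlam C hC B hB with h | h | h
      · refine Or.inr (Or.inl ?_)
        have hss : C ∩ X ⊆ P := hBX ▸ inter_subset_inter h (le_refl X)
        exact Finset.eq_of_subset_of_card_le hss (by omega)
      · refine Or.inr (Or.inl ?_)
        have hss : P ⊆ C ∩ X := hBX ▸ inter_subset_inter h (le_refl X)
        exact (Finset.eq_of_subset_of_card_le hss (by omega)).symm
      · exfalso
        have hdisj : (C ∩ X) ∩ P = ∅ := by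
          rw [← hBX, eq_empty_iff_forall_notMem]
          intro z hz
          simp only [mem_inter] at hz
          have : z ∈ C ∩ B := mem_inter.2 ⟨hz.1.1, hz.2.1⟩
          rw [h] at this
          exact absurd this (notMem_empty _)
        have hu : (C ∩ X) ∪ P ⊆ X := by
          rw [← hBX]
          exact Finset.union_subset inter_subset_right inter_subset_right
        have := card_le_card hu
        rw [Finset.card_union_of_disjoint (Finset.disjoint_iff_inter_eq_empty.2 hdisj)] at this
        omega
    · exact Or.inl (Finset.eq_of_subset_of_card_le hsub (by omega))
  · rintro (rfl | rfl | ⟨x, hx, rfl⟩)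
    · refine ⟨⟨Finset.univ, huniv, Finset.univ_inter A⟩, ?_⟩
      intro he
      rw [he] at hX3
      simp at hX3
    · refine ⟨⟨B, hB, hBX⟩, ?_⟩
      intro he
      rw [he] at hP2
      simp at hP2
    · refine ⟨⟨{x}, hsing x, ?_⟩, by simp⟩
      rw [Finset.singleton_inter_of_mem hx]

lemma tripRes_ne (X : Finset (Fin n)) {P Q : Finset (Fin n)} (hX3 : X.card = 3)
    (hP2 : P.card = 2) (hQ2 : Q.card = 2) (h : tripRes X P = tripRes X Q) : P = Q := by
  have hPm : P ∈ tripRes X Q := h ▸ (by simp [tripRes])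
  simp only [tripRes, mem_insert, Finset.mem_image] at hPm
  rcases hPm with rfl | rfl | ⟨x, hx, he⟩
  · omega
  · rfl
  · rw [← he] at hP2
    simp at hP2

section Rooted

noncomputable def rtLam (T : RTree n) : Lam n where
  F := T.clusters
  Ω := Finset.univ
  top_mem := T.univ_mem
  le_top := fun A _ => Finset.subset_univ A
  sing := fun x _ => T.singleton_mem x
  emp := T.empty_not_mem
  lam := T.laminar

noncomputable def rtRefine (T : RTree n) (σ : Equiv.Perm (Fin n)) : RTree n where
  clusters := ref T.clusters σ
  univ_mem := F_subset_ref (L := rtLam T) T.univ_mem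
  singleton_mem := fun x => F_subset_ref (L := rtLam T) (T.singleton_mem x)
  empty_not_mem := ((rtLam T).refine σ).emp
  laminar := ((rtLam T).refine σ).lam

lemma rtRefine_resolved (T : RTree n) (σ : Equiv.Perm (Fin n)) {X : Finset (Fin n)}
    (hX : X ∈ triplets n) : famResolved (rtRefine T σ).clusters X := by
  rw [triplets, Finset.mem_powersetCard] at hX
  exact ref_resolve (rtLam T) X (Finset.subset_univ X) (by omega) σ

lemma rtRefine_fullyResolved (T : RTree n) (σ : Equiv.Perm (Fin n)) :
    (rtRefine T σ).FullyResolved := fun X hX => rtRefine_resolved T σ hX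

lemma rtRefine_restrict (T : RTree n) (σ : Equiv.Perm (Fin n)) {X : Finset (Fin n)}
    (hX3 : X.card = 3) (hres : famResolved T.clusters X) :
    famRestrict (rtRefine T σ).clusters X = famRestrict T.clusters X := by
  obtain ⟨B, hB, hB2⟩ := hres
  have h1 := famRestrict_eq_tripRes T.laminar T.singleton_mem T.univ_mem hX3 hB rfl hB2
  have h2 := famRestrict_eq_tripRes (rtRefine T σ).laminar (rtRefine T σ).singleton_mem
    (rtRefine T σ).univ_mem hX3 (F_subset_ref (L := rtLam T) hB : B ∈ (rtRefine T σ).clusters)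
    rfl hB2
  rw [h1, h2]

noncomputable def costR (p : ℝ) (F G : Finset (Finset (Fin n))) (X : Finset (Fin n)) : ℝ :=
  if famResolved F X then (if famRestrict F X = famRestrict G X then 0 else 1) else p

lemma famPdist_eq_sum {p : ℝ} {F G : Finset (Finset (Fin n))}
    (hG : ∀ X ∈ triplets n, famResolved G X) :
    famPdist p F G = ∑ X ∈ triplets n, costR p F G X := by
  have hpt : ∀ X ∈ triplets n, costR p F G X =
      (if famResolved F X ∧ famResolved G X ∧ famRestrict F X ≠ famRestrict G X
        then (1:ℝ) else 0)
      + p * ((if famResolved F X ∧ ¬ famResolved G X then (1:ℝ) else 0)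
        + (if famResolved G X ∧ ¬ famResolved F X then (1:ℝ) else 0)) := by
    intro X hX
    have hGX := hG X hX
    by_cases h1 : famResolved F X
    · by_cases h2 : famRestrict F X = famRestrict G X
      · simp [costR, h1, h2, hGX]
      · simp [costR, h1, h2, hGX]
    · simp [costR, h1, hGX]
  rw [Finset.sum_congr rfl hpt, Finset.sum_add_distrib, ← Finset.mul_sum,
    Finset.sum_add_distrib]
  simp only [Finset.sum_boole]
  rfl

lemma cost_refine_resolved (T : RTree n) (σ : Equiv.Perm (Fin n))
    {X : Finset (Fin n)} {GG : Finset (Finset (Fin n))} (hX : X ∈ triplets n)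
    (hres : famResolved T.clusters X) (p : ℝ) :
    costR p (rtRefine T σ).clusters GG X = costR p T.clusters GG X := by
  have h3 : X.card = 3 := (Finset.mem_powersetCard.1 hX).2
  have hres' : famResolved (rtRefine T σ).clusters X := by
    obtain ⟨B, hB, hB2⟩ := hres
    exact ⟨B, F_subset_ref (L := rtLam T) hB, hB2⟩
  rw [costR, costR, if_pos hres', if_pos hres, rtRefine_restrict T σ h3 hres]

lemma sum_cost_refine_unresolved (T G : RTree n) {X : Finset (Fin n)}
    (hX : X ∈ triplets n) (hunres : ¬ famResolved T.clusters X)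
    (hGres : famResolved G.clusters X) {p : ℝ} (hp : 2/3 ≤ p) :
    ∑ σ : Equiv.Perm (Fin n), costR p (rtRefine T σ).clusters G.clusters X ≤
      (Fintype.card (Equiv.Perm (Fin n)) : ℝ) * p := by
  have h3 : X.card = 3 := (Finset.mem_powersetCard.1 hX).2
  obtain ⟨B, hB, hB2⟩ := hGres
  have hcost : ∀ σ : Equiv.Perm (Fin n),
      costR p (rtRefine T σ).clusters G.clusters X =
      if ¬ (famRestrict (rtRefine T σ).clusters X = famRestrict G.clusters X)
        then (1:ℝ) else 0 := by
    intro σ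
    rw [costR, if_pos (rtRefine_resolved T σ hX)]
    by_cases h : famRestrict (rtRefine T σ).clusters X = famRestrict G.clusters X
    · simp [h]
    · simp [h]
  rw [Finset.sum_congr rfl (fun σ _ => hcost σ)]
  have hsplit : ∀ σ : Equiv.Perm (Fin n),
      (if ¬ (famRestrict (rtRefine T σ).clusters X = famRestrict G.clusters X)
        then (1:ℝ) else 0) =
      1 - (if famRestrict (rtRefine T σ).clusters X = famRestrict G.clusters X
        then (1:ℝ) else 0) := by
    intro σ
    by_cases h : famRestrict (rtRefine T σ).clusters X = famRestrict G.clusters X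
    · simp [h]
    · simp [h]
  rw [Finset.sum_congr rfl (fun σ _ => hsplit σ), Finset.sum_sub_distrib, Finset.sum_const,
    Finset.card_univ, nsmul_eq_mul, mul_one, Finset.sum_boole]
  have hunres' : ∀ C ∈ T.clusters, (C ∩ X).card ≠ 2 := by
    intro C hC h2
    exact hunres ⟨C, hC, h2⟩
  have hmc := master_count (rtLam T) X (Finset.subset_univ X) (by omega) (Or.inl h3)
    hunres' (B ∩ X) inter_subset_right hB2
  have hGrestr := famRestrict_eq_tripRes G.laminar G.singleton_mem G.univ_mem h3 hB rfl hB2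
  have hMsub : ((univ : Finset (Equiv.Perm (Fin n))).filter fun σ =>
        ∃ A ∈ ref (rtLam T).F σ, (A ∩ X).card = 2 ∧ (A ∩ X = B ∩ X ∨ A ∩ X = X \ (B ∩ X))) ⊆
      ((univ : Finset (Equiv.Perm (Fin n))).filter fun σ =>
        famRestrict (rtRefine T σ).clusters X = famRestrict G.clusters X) := by
    intro σ hσ
    rw [mem_filter] at hσ ⊢
    obtain ⟨A, hA, hA2, hAQ⟩ := hσ.2
    have hAQ' : A ∩ X = B ∩ X := by
      rcases hAQ with h | h
      · exact h
      · exfalso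
        have : (X \ (B ∩ X)).card = 1 := by
          rw [card_sdiff_of_subset (inter_subset_right : B ∩ X ⊆ X)]
          omega
        rw [h] at hA2
        omega
    have := famRestrict_eq_tripRes (rtRefine T σ).laminar (rtRefine T σ).singleton_mem
      (rtRefine T σ).univ_mem h3 (hA : A ∈ (rtRefine T σ).clusters) hAQ' (hAQ' ▸ hA2)
    rw [this, hGrestr]
    exact ⟨mem_univ _, rfl⟩
  have hN := card_le_card hMsub
  have hNle : Fintype.card (Equiv.Perm (Fin n)) ≤
      3 * ((univ : Finset (Equiv.Perm (Fin n))).filter fun σ =>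
        famRestrict (rtRefine T σ).clusters X = famRestrict G.clusters X).card :=
    le_trans hmc (Nat.mul_le_mul_left 3 hN)
  have hcast : (Fintype.card (Equiv.Perm (Fin n)) : ℝ) ≤
      3 * ((((univ : Finset (Equiv.Perm (Fin n))).filter fun σ =>
        famRestrict (rtRefine T σ).clusters X = famRestrict G.clusters X).card : ℕ) : ℝ) := by
    exact_mod_cast hNle
  have hmul : (2/3 : ℝ) * (Fintype.card (Equiv.Perm (Fin n)) : ℝ) ≤
      p * (Fintype.card (Equiv.Perm (Fin n)) : ℝ) :=
    mul_le_mul_of_nonneg_right hp (Nat.cast_nonneg _)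
  linarith

noncomputable def trivTree (n : ℕ) (hn : 1 ≤ n) : RTree n where
  clusters := insert Finset.univ ((Finset.univ : Finset (Fin n)).image fun x => {x})
  univ_mem := mem_insert_self _ _
  singleton_mem := fun x => mem_insert.2 (Or.inr (Finset.mem_image.2 ⟨x, mem_univ x, rfl⟩))
  empty_not_mem := by
    simp only [mem_insert, Finset.mem_image]
    rintro (h | ⟨x, _, h⟩)
    · have : (⟨0, hn⟩ : Fin n) ∈ (∅ : Finset (Fin n)) := h ▸ mem_univ _
      exact absurd this (notMem_empty _)
    · exact Finset.singleton_ne_empty x h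
  laminar := by
    intro C hC D hD
    simp only [mem_insert, Finset.mem_image] at hC hD
    rcases hC with rfl | ⟨x, _, rfl⟩
    · exact Or.inr (Or.inl (Finset.subset_univ D))
    · rcases hD with rfl | ⟨y, _, rfl⟩
      · exact Or.inl (Finset.subset_univ _)
      · rcases eq_or_ne x y with rfl | hxy
        · exact Or.inl (le_refl _)
        · refine Or.inr (Or.inr ?_)
          rw [Finset.singleton_inter_of_notMem (by simpa using hxy)]

lemma rooted_main (p : ℝ) (hp : 2 / 3 ≤ p) (n k : ℕ) (hn : 1 ≤ n)
    (P : Fin k → RTree n) (hP : ∀ i, (P i).FullyResolved) :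
    ∃ T : RTree n, T.FullyResolved ∧ ∀ T' : RTree n,
      ∑ i, RTree.pdist p T (P i) ≤ ∑ i, RTree.pdist p T' (P i) := by
  classical
  set c : RTree n → ℝ := fun T => ∑ i, RTree.pdist p T (P i) with hc
  have hcX : ∀ T : RTree n, c T = ∑ X ∈ triplets n, ∑ i,
      costR p T.clusters (P i).clusters X := by
    intro T
    rw [hc]
    simp only []
    rw [Finset.sum_comm]
    exact Finset.sum_congr rfl fun i _ => famPdist_eq_sum (hP i)
  have key : ∀ T' : RTree n, ∃ T'' : RTree n, T''.FullyResolved ∧ c T'' ≤ c T' := by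
    intro T'
    have hsum : ∑ σ : Equiv.Perm (Fin n), c (rtRefine T' σ) ≤
        ∑ _σ : Equiv.Perm (Fin n), c T' := by
      rw [Finset.sum_congr rfl fun (σ : Equiv.Perm (Fin n)) _ => hcX (rtRefine T' σ)]
      have hconst : ∑ _σ : Equiv.Perm (Fin n), c T' =
          ∑ X ∈ triplets n, ∑ _σ : Equiv.Perm (Fin n), ∑ i,
            costR p T'.clusters (P i).clusters X := by
        rw [Finset.sum_congr rfl fun (σ : Equiv.Perm (Fin n)) _ => hcX T', Finset.sum_comm]
      rw [hconst, Finset.sum_comm]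
      refine Finset.sum_le_sum fun X hX => ?_
      by_cases hres : famResolved T'.clusters X
      · refine le_of_eq (Finset.sum_congr rfl fun σ _ => Finset.sum_congr rfl fun i _ => ?_)
        exact cost_refine_resolved T' σ hX hres p
      · have hcostT' : ∀ i : Fin k, costR p T'.clusters (P i).clusters X = p :=
          fun i => if_neg hres
        rw [Finset.sum_comm]
        calc ∑ i : Fin k, ∑ σ : Equiv.Perm (Fin n),
              costR p (rtRefine T' σ).clusters (P i).clusters X
            ≤ ∑ _i : Fin k, (Fintype.card (Equiv.Perm (Fin n)) : ℝ) * p :=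
              Finset.sum_le_sum fun i _ =>
                sum_cost_refine_unresolved T' (P i) hX hres (hP i X hX) hp
          _ = ∑ _σ : Equiv.Perm (Fin n), ∑ i : Fin k,
              costR p T'.clusters (P i).clusters X := by
              rw [Finset.sum_congr rfl fun (σ : Equiv.Perm (Fin n)) _ =>
                Finset.sum_congr rfl fun (i : Fin k) _ => hcostT' i]
              simp only [Finset.sum_const, Finset.card_univ, nsmul_eq_mul]
              ring
    obtain ⟨σ, _, hσ⟩ := Finset.exists_le_of_sum_le Finset.univ_nonempty hsum
    exact ⟨rtRefine T' σ, rtRefine_fullyResolved T' σ, hσ⟩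
  have hFR : ((univ : Finset (RTree n)).filter fun T => T.FullyResolved).Nonempty := by
    refine ⟨rtRefine (trivTree n hn) 1, ?_⟩
    rw [mem_filter]
    exact ⟨mem_univ _, rtRefine_fullyResolved _ _⟩
  obtain ⟨T, hTmem, hTmin⟩ := Finset.exists_min_image _ c hFR
  refine ⟨T, (mem_filter.1 hTmem).2, fun T' => ?_⟩
  obtain ⟨T'', hT''F, hT''le⟩ := key T'
  exact le_trans (hTmin T'' (mem_filter.2 ⟨mem_univ _, hT''F⟩)) hT''le

end Rooted


section Unrooted

noncomputable def quartRes (X P : Finset (Fin n)) : Finset (Finset (Fin n)) :=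
  (X.image fun x => ({x} : Finset (Fin n))) ∪ (X.image fun x => X.erase x) ∪ {P, X \ P}

lemma famRestrictU_eq_quartRes (T : UTree n) {X P B : Finset (Fin n)} (hX4 : X.card = 4)
    (hB : B ∈ T.splits) (hBX : B ∩ X = P) (hP2 : P.card = 2) :
    famRestrictU T.splits X = quartRes X P := by
  have hPX : P ⊆ X := hBX ▸ inter_subset_right
  have hm4 : 4 ≤ Fintype.card (Fin n) := hX4 ▸ Finset.card_le_univ X
  have hXP2 : (X \ P).card = 2 := by rw [card_sdiff_of_subset hPX]; omega
  ext A
  simp only [famRestrictU, quartRes, mem_filter, Finset.mem_image, mem_union, mem_insert,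
    mem_singleton, ne_eq]
  constructor
  · rintro ⟨⟨C, hC, rfl⟩, hne, hneX⟩
    have hsub : C ∩ X ⊆ X := inter_subset_right
    have hcard : (C ∩ X).card < 4 := hX4 ▸ card_lt_card (Finset.ssubset_iff_subset_ne.2 ⟨hsub, hneX⟩)
    have hpos : 0 < (C ∩ X).card := card_pos.2 (nonempty_iff_ne_empty.2 hne)
    have h123 : (C ∩ X).card = 1 ∨ (C ∩ X).card = 2 ∨ (C ∩ X).card = 3 := by omega
    rcases h123 with h1 | h2 | h3
    · obtain ⟨x, hx⟩ := Finset.card_eq_one.1 h1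
      exact Or.inl (Or.inl ⟨x, hsub (hx ▸ mem_singleton_self x), hx.symm⟩)
    · -- card-2 intersections agree with the split pair
      refine Or.inr ?_
      rcases T.compat C hC B hB with h | h | h | h
      · left
        have hss : C ∩ X ⊆ P := hBX ▸ inter_subset_inter h (le_refl X)
        exact Finset.eq_of_subset_of_card_le hss (by omega)
      · left
        have hss : P ⊆ C ∩ X := hBX ▸ inter_subset_inter h (le_refl X)
        exact (Finset.eq_of_subset_of_card_le hss (by omega)).symm
      · right
        have hdisj : Disjoint (C ∩ X) P := by
          rw [← hBX]
          refine Finset.disjoint_left.2 fun z hz hz' => ?_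
          have : z ∈ C ∩ B := mem_inter.2 ⟨(mem_inter.1 hz).1, (mem_inter.1 hz').1⟩
          rw [h] at this
          exact absurd this (notMem_empty _)
        have hss : C ∩ X ⊆ X \ P := Finset.subset_sdiff.2 ⟨hsub, hdisj⟩
        exact Finset.eq_of_subset_of_card_le hss (by omega)
      · right
        have hu : X \ P ⊆ C ∩ X := by
          intro z hz
          rw [mem_sdiff] at hz
          have hzu : z ∈ (C ∪ B) ∩ X := by
            rw [h]
            exact mem_inter.2 ⟨mem_univ _, hz.1⟩
          rw [Finset.union_inter_distrib_right] at hzu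
          rcases mem_union.1 hzu with h' | h'
          · exact h'
          · exact absurd (hBX ▸ h') hz.2
        exact (Finset.eq_of_subset_of_card_le hu (by omega)).symm
    · -- card-3 intersections are co-singletons
      refine Or.inl (Or.inr ?_)
      have hd1 : (X \ (C ∩ X)).card = 1 := by rw [card_sdiff_of_subset hsub]; omega
      obtain ⟨x, hx⟩ := Finset.card_eq_one.1 hd1
      have hxX : x ∈ X := by
        have : x ∈ X \ (C ∩ X) := hx ▸ mem_singleton_self x
        exact (mem_sdiff.1 this).1
      refine ⟨x, hxX, ?_⟩
      rw [Finset.erase_eq, ← hx, Finset.sdiff_sdiff_eq_self hsub]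
  · rintro ((⟨x, hx, rfl⟩ | ⟨x, hx, rfl⟩) | (rfl | rfl))
    · refine ⟨⟨{x}, ?_, Finset.singleton_inter_of_mem hx⟩, by simp, ?_⟩
      · rcases T.trivial_mem x with h | h
        · exfalso
          have h1 : Fintype.card (Fin n) = 1 := by
            rw [← Finset.card_univ, ← h, Finset.card_singleton]
          omega
        · exact h
      · intro he
        rw [← he] at hX4
        simp at hX4
    · refine ⟨⟨Finset.univ \ {x}, ?_, ?_⟩, ?_, ?_⟩
      · have hsx : ({x} : Finset (Fin n)) ∈ T.splits := by
          rcases T.trivial_mem x with h | h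
          · exfalso
            have h1 : Fintype.card (Fin n) = 1 := by
              rw [← Finset.card_univ, ← h, Finset.card_singleton]
            omega
          · exact h
        exact T.compl_mem _ hsx
      · ext z
        simp only [mem_inter, mem_sdiff, mem_univ, true_and, mem_singleton, Finset.mem_erase]
      · intro he
        have h1 : (X.erase x).card = 0 := by rw [he, Finset.card_empty]
        rw [Finset.card_erase_of_mem hx] at h1
        omega
      · intro he
        have hxe : x ∈ X.erase x := by rw [he]; exact hx
        exact (Finset.mem_erase.1 hxe).1 rfl
    · refine ⟨⟨B, hB, hBX⟩, ?_, ?_⟩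
      · intro he
        rw [he] at hP2
        simp at hP2
      · intro he
        rw [he] at hP2
        omega
    · refine ⟨⟨Finset.univ \ B, T.compl_mem B hB, ?_⟩, ?_, ?_⟩
      · ext z
        simp only [mem_inter, mem_sdiff, mem_univ, true_and, ← hBX]
        tauto
      · intro he
        rw [he] at hXP2
        simp at hXP2
      · intro he
        rw [he] at hXP2
        omega

lemma quartRes_compl {X P : Finset (Fin n)} (hPX : P ⊆ X) :
    quartRes X (X \ P) = quartRes X P := by
  rw [quartRes, quartRes, Finset.sdiff_sdiff_eq_self hPX, Finset.pair_comm]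

lemma quartRes_ne {X P Q : Finset (Fin n)} (hX4 : X.card = 4) (hP2 : P.card = 2)
    (h : quartRes X P = quartRes X Q) : P = Q ∨ P = X \ Q := by
  have hPm : P ∈ quartRes X Q := h ▸ (by simp [quartRes])
  simp only [quartRes, mem_union, Finset.mem_image, mem_insert, mem_singleton] at hPm
  rcases hPm with (⟨x, hx, he⟩ | ⟨x, hx, he⟩) | (he | he)
  · rw [← he] at hP2
    simp at hP2
  · exfalso
    have := congrArg Finset.card he
    rw [Finset.card_erase_of_mem hx] at this
    omega
  · exact Or.inl he
  · exact Or.inr he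

/-- The laminar family of the unrooted tree rooted at the taxon `t`. -/
noncomputable def uLam (T : UTree n) (t : Fin n) (h2 : 2 ≤ n) : Lam n where
  F := insert (Finset.univ \ {t}) (T.splits.filter fun A => t ∉ A)
  Ω := Finset.univ \ {t}
  top_mem := mem_insert_self _ _
  le_top := by
    intro A hA
    rcases mem_insert.1 hA with rfl | hA
    · exact Finset.Subset.refl _
    · rw [mem_filter] at hA
      intro z hz
      rw [mem_sdiff, mem_singleton]
      exact ⟨mem_univ _, fun he => hA.2 (he ▸ hz)⟩
  sing := by
    intro x hx
    rw [mem_sdiff, mem_singleton] at hx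
    rcases T.trivial_mem x with h | h
    · exfalso
      have ht : t ∈ ({x} : Finset (Fin n)) := h ▸ mem_univ t
      exact hx.2 (mem_singleton.1 ht).symm
    · refine mem_insert.2 (Or.inr (mem_filter.2 ⟨h, ?_⟩))
      rw [mem_singleton]
      exact fun he => hx.2 he.symm
  emp := by
    rw [mem_insert]
    rintro (h | h)
    · obtain ⟨u, hu⟩ := Fintype.exists_ne_of_one_lt_card (by simp; omega) t
      have : u ∈ (∅ : Finset (Fin n)) := by
        rw [h, mem_sdiff, mem_singleton]
        exact ⟨mem_univ _, hu⟩
      exact absurd this (notMem_empty _)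
    · exact T.empty_not_mem (mem_filter.1 h).1
  lam := by
    have hle : ∀ A ∈ T.splits.filter fun A => t ∉ A, A ⊆ Finset.univ \ {t} := by
      intro A hA
      rw [mem_filter] at hA
      intro z hz
      rw [mem_sdiff, mem_singleton]
      exact ⟨mem_univ _, fun he => hA.2 (he ▸ hz)⟩
    intro C hC D hD
    rcases mem_insert.1 hC with rfl | hC
    · rcases mem_insert.1 hD with rfl | hD
      · exact Or.inl (Finset.Subset.refl _)
      · exact Or.inr (Or.inl (hle D hD))
    · rcases mem_insert.1 hD with rfl | hD
      · exact Or.inl (hle C hC)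
      · rw [mem_filter] at hC hD
        rcases T.compat C hC.1 D hD.1 with h | h | h | h
        · exact Or.inl h
        · exact Or.inr (Or.inl h)
        · exact Or.inr (Or.inr h)
        · exfalso
          have : t ∈ C ∪ D := h ▸ mem_univ t
          rcases mem_union.1 this with h' | h'
          · exact hC.2 h'
          · exact hD.2 h'

/-- An unrooted tree from a laminar family whose top is the complement of `t`. -/
noncomputable def lamToU (L : Lam n) (t : Fin n) (hΩ : L.Ω = Finset.univ \ {t}) : UTree n where
  splits := L.F ∪ L.F.image (Finset.univ \ ·)
  empty_not_mem := by
    rw [mem_union]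
    rintro (h | h)
    · exact L.emp h
    · obtain ⟨A, hA, hAe⟩ := Finset.mem_image.1 h
      have htA : t ∉ A := by
        intro ht
        have := hΩ ▸ L.le_top A hA ht
        rw [mem_sdiff, mem_singleton] at this
        exact this.2 rfl
      have : t ∈ Finset.univ \ A := mem_sdiff.2 ⟨mem_univ _, htA⟩
      rw [hAe] at this
      exact absurd this (notMem_empty _)
  trivial_mem := by
    intro x
    by_cases hx : x = t
    · refine Or.inr (mem_union.2 (Or.inr (Finset.mem_image.2 ⟨L.Ω, L.top_mem, ?_⟩)))
      rw [hΩ, Finset.sdiff_sdiff_eq_self (Finset.subset_univ _), hx]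
    · refine Or.inr (mem_union.2 (Or.inl (L.sing x ?_)))
      rw [hΩ, mem_sdiff, mem_singleton]
      exact ⟨mem_univ _, hx⟩
  compl_mem := by
    intro A hA
    rcases mem_union.1 hA with h | h
    · exact mem_union.2 (Or.inr (Finset.mem_image.2 ⟨A, h, rfl⟩))
    · obtain ⟨B, hB, rfl⟩ := Finset.mem_image.1 h
      rw [Finset.sdiff_sdiff_eq_self (Finset.subset_univ _)]
      exact mem_union.2 (Or.inl hB)
  compat := by
    have lam4 : ∀ A ∈ L.F, ∀ B ∈ L.F,
        A ⊆ B ∨ B ⊆ A ∨ A ∩ B = ∅ ∨ A ∪ B = Finset.univ := by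
      intro A hA B hB
      rcases L.lam A hA B hB with h | h | h
      · exact Or.inl h
      · exact Or.inr (Or.inl h)
      · exact Or.inr (Or.inr (Or.inl h))
    have mixed : ∀ A ∈ L.F, ∀ B ∈ L.F,
        A ⊆ Finset.univ \ B ∨ Finset.univ \ B ⊆ A ∨ A ∩ (Finset.univ \ B) = ∅ ∨
          A ∪ (Finset.univ \ B) = Finset.univ := by
      intro A hA B hB
      rcases L.lam A hA B hB with h | h | h
      · refine Or.inr (Or.inr (Or.inl ?_))
        rw [eq_empty_iff_forall_notMem]
        intro z hz
        rw [mem_inter, mem_sdiff] at hz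
        exact hz.2.2 (h hz.1)
      · refine Or.inr (Or.inr (Or.inr ?_))
        apply Finset.eq_univ_of_forall
        intro z
        rw [mem_union, mem_sdiff]
        by_cases hzB : z ∈ B
        · exact Or.inl (h hzB)
        · exact Or.inr ⟨mem_univ _, hzB⟩
      · refine Or.inl ?_
        intro z hz
        rw [mem_sdiff]
        refine ⟨mem_univ _, fun hzB => ?_⟩
        have : z ∈ A ∩ B := mem_inter.2 ⟨hz, hzB⟩
        rw [h] at this
        exact absurd this (notMem_empty _)
    intro A hA B hB
    rcases mem_union.1 hA with hA' | hA' <;> rcases mem_union.1 hB with hB' | hB'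
    · exact lam4 A hA' B hB'
    · obtain ⟨B', hB'', rfl⟩ := Finset.mem_image.1 hB'
      exact mixed A hA' B' hB''
    · obtain ⟨A', hA'', rfl⟩ := Finset.mem_image.1 hA'
      rcases mixed B hB' A' hA'' with h | h | h | h
      · exact Or.inr (Or.inl h)
      · exact Or.inl h
      · exact Or.inr (Or.inr (Or.inl (by rwa [inter_comm])))
      · exact Or.inr (Or.inr (Or.inr (by rwa [union_comm])))
    · obtain ⟨A', hA'', rfl⟩ := Finset.mem_image.1 hA'
      obtain ⟨B', hB'', rfl⟩ := Finset.mem_image.1 hB'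
      rcases L.lam A' hA'' B' hB'' with h | h | h
      · exact Or.inr (Or.inl (Finset.sdiff_subset_sdiff (le_refl _) h))
      · exact Or.inl (Finset.sdiff_subset_sdiff (le_refl _) h)
      · refine Or.inr (Or.inr (Or.inr ?_))
        apply Finset.eq_univ_of_forall
        intro z
        rw [mem_union, mem_sdiff, mem_sdiff]
        by_cases hzA : z ∈ A'
        · refine Or.inr ⟨mem_univ _, fun hzB => ?_⟩
          have : z ∈ A' ∩ B' := mem_inter.2 ⟨hzA, hzB⟩
          rw [h] at this
          exact absurd this (notMem_empty _)
        · exact Or.inl ⟨mem_univ _, hzA⟩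

noncomputable def uRefineL (L : Lam n) (t : Fin n) (hΩ : L.Ω = Finset.univ \ {t})
    (σ : Equiv.Perm (Fin n)) : UTree n :=
  lamToU (L.refine σ) t hΩ

lemma uRefineL_splits (L : Lam n) (t : Fin n) (hΩ : L.Ω = Finset.univ \ {t})
    (σ : Equiv.Perm (Fin n)) :
    (uRefineL L t hΩ σ).splits = ref L.F σ ∪ (ref L.F σ).image (Finset.univ \ ·) := rfl

lemma ref_not_mem_t (L : Lam n) (t : Fin n) (hΩ : L.Ω = Finset.univ \ {t})
    (σ : Equiv.Perm (Fin n)) {A : Finset (Fin n)} (hA : A ∈ ref L.F σ) : t ∉ A := by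
  intro ht
  have := (L.refine σ).le_top A hA ht
  rw [show (L.refine σ).Ω = L.Ω from rfl, hΩ, mem_sdiff, mem_singleton] at this
  exact this.2 rfl

lemma inter_eq_of_avoid {A X X₀ : Finset (Fin n)} {t : Fin n} (htA : t ∉ A)
    (hX₀ : X₀ = X.erase t ∨ (X₀ = X ∧ t ∉ X)) : A ∩ X = A ∩ X₀ := by
  rcases hX₀ with h | ⟨h, ht⟩
  · subst h
    ext z
    simp only [mem_inter, Finset.mem_erase]
    constructor
    · intro hz
      exact ⟨hz.1, fun he => htA (he ▸ hz.1), hz.2⟩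
    · intro hz
      exact ⟨hz.1, hz.2.2⟩
  · subst h
    rfl

lemma uRefineL_fullyResolved (L : Lam n) (t : Fin n) (hΩ : L.Ω = Finset.univ \ {t})
    (σ : Equiv.Perm (Fin n)) : (uRefineL L t hΩ σ).FullyResolved := by
  intro X hX
  rw [quartets, Finset.mem_powersetCard] at hX
  obtain ⟨-, hX4⟩ := hX
  by_cases ht : t ∈ X
  · have hYΩ : X.erase t ⊆ L.Ω := by
      rw [hΩ]
      intro z hz
      rw [Finset.mem_erase] at hz
      rw [mem_sdiff, mem_singleton]
      exact ⟨mem_univ _, hz.1⟩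
    have hY2 : 2 ≤ (X.erase t).card := by
      rw [Finset.card_erase_of_mem ht]
      omega
    obtain ⟨A, hA, hA2⟩ := ref_resolve L (X.erase t) hYΩ hY2 σ
    refine ⟨A, mem_union.2 (Or.inl hA), ?_⟩
    rw [inter_eq_of_avoid (ref_not_mem_t L t hΩ σ hA) (Or.inl rfl)]
    exact hA2
  · have hXΩ : X ⊆ L.Ω := by
      rw [hΩ]
      intro z hz
      rw [mem_sdiff, mem_singleton]
      exact ⟨mem_univ _, fun he => ht (he ▸ hz)⟩
    obtain ⟨A, hA, hA2⟩ := ref_resolve L X hXΩ (by omega) σ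
    exact ⟨A, mem_union.2 (Or.inl hA), hA2⟩

lemma splits_subset_uRefine (T' : UTree n) (t : Fin n) (h2 : 2 ≤ n)
    (σ : Equiv.Perm (Fin n)) :
    T'.splits ⊆ (uRefineL (uLam T' t h2) t rfl σ).splits := by
  intro A hA
  by_cases ht : t ∈ A
  · have h1 : Finset.univ \ A ∈ (uLam T' t h2).F := by
      refine mem_insert.2 (Or.inr (mem_filter.2 ⟨T'.compl_mem A hA, ?_⟩))
      rw [mem_sdiff]
      exact fun hc => hc.2 ht
    refine mem_union.2 (Or.inr (Finset.mem_image.2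
      ⟨_, F_subset_ref (L := uLam T' t h2) h1, ?_⟩))
    rw [Finset.sdiff_sdiff_eq_self (Finset.subset_univ _)]
  · exact mem_union.2 (Or.inl (F_subset_ref (L := uLam T' t h2)
      (mem_insert.2 (Or.inr (mem_filter.2 ⟨hA, ht⟩)))))

noncomputable def costU (p : ℝ) (F G : Finset (Finset (Fin n))) (X : Finset (Fin n)) : ℝ :=
  if famResolvedU F X then (if famRestrictU F X = famRestrictU G X then 0 else 1) else p

lemma famPdistU_eq_sum {p : ℝ} {F G : Finset (Finset (Fin n))}
    (hG : ∀ X ∈ quartets n, famResolvedU G X) :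
    famPdistU p F G = ∑ X ∈ quartets n, costU p F G X := by
  have hpt : ∀ X ∈ quartets n, costU p F G X =
      (if famResolvedU F X ∧ famResolvedU G X ∧ famRestrictU F X ≠ famRestrictU G X
        then (1:ℝ) else 0)
      + p * ((if famResolvedU F X ∧ ¬ famResolvedU G X then (1:ℝ) else 0)
        + (if famResolvedU G X ∧ ¬ famResolvedU F X then (1:ℝ) else 0)) := by
    intro X hX
    have hGX := hG X hX
    by_cases h1 : famResolvedU F X
    · by_cases h2 : famRestrictU F X = famRestrictU G X
      · simp [costU, h1, h2, hGX]
      · simp [costU, h1, h2, hGX]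
    · simp [costU, h1, hGX]
  rw [Finset.sum_congr rfl hpt, Finset.sum_add_distrib, ← Finset.mul_sum,
    Finset.sum_add_distrib]
  simp only [Finset.sum_boole]
  rfl

lemma costU_refine_resolved (T' G : UTree n) (t : Fin n) (h2 : 2 ≤ n)
    (σ : Equiv.Perm (Fin n)) {X : Finset (Fin n)} (hX : X ∈ quartets n)
    (hres : famResolvedU T'.splits X) (p : ℝ) :
    costU p (uRefineL (uLam T' t h2) t rfl σ).splits G.splits X =
      costU p T'.splits G.splits X := by
  have hX4 : X.card = 4 := (Finset.mem_powersetCard.1 hX).2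
  obtain ⟨B, hB, hB2⟩ := hres
  have hBmem : B ∈ (uRefineL (uLam T' t h2) t rfl σ).splits :=
    splits_subset_uRefine T' t h2 σ hB
  have h1 := famRestrictU_eq_quartRes T' hX4 hB rfl hB2
  have h2' := famRestrictU_eq_quartRes (uRefineL (uLam T' t h2) t rfl σ) hX4 hBmem rfl hB2
  have hr1 : famResolvedU (uRefineL (uLam T' t h2) t rfl σ).splits X := ⟨B, hBmem, hB2⟩
  have hr2 : famResolvedU T'.splits X := ⟨B, hB, hB2⟩
  rw [costU, costU, if_pos hr1, if_pos hr2, h1, h2']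

lemma sum_costU_refine_unresolved (T' G : UTree n) (t : Fin n) (h2 : 2 ≤ n)
    {X : Finset (Fin n)} (hX : X ∈ quartets n) (hunres : ¬ famResolvedU T'.splits X)
    (hGres : famResolvedU G.splits X) {p : ℝ} (hp : 2/3 ≤ p) :
    ∑ σ : Equiv.Perm (Fin n),
      costU p (uRefineL (uLam T' t h2) t rfl σ).splits G.splits X ≤
      (Fintype.card (Equiv.Perm (Fin n)) : ℝ) * p := by
  have hX4 : X.card = 4 := (Finset.mem_powersetCard.1 hX).2
  obtain ⟨B, hB, hB2⟩ := hGres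
  have hPX : B ∩ X ⊆ X := inter_subset_right
  -- the reduced quartet
  obtain ⟨X₀, hX₀def, hX₀X, hX₀c⟩ :
      ∃ X₀ : Finset (Fin n), (X₀ = X.erase t ∨ (X₀ = X ∧ t ∉ X)) ∧ X₀ ⊆ X ∧
        (X₀.card = 3 ∨ X₀.card = 4) := by
    by_cases ht : t ∈ X
    · exact ⟨X.erase t, Or.inl rfl, Finset.erase_subset _ _,
        Or.inl (by rw [Finset.card_erase_of_mem ht]; omega)⟩
    · exact ⟨X, Or.inr ⟨rfl, ht⟩, Finset.Subset.refl _, Or.inr hX4⟩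
  have htX₀ : t ∉ X₀ := by
    rcases hX₀def with h | ⟨h, ht⟩
    · rw [h]
      simp
    · rw [h]
      exact ht
  have hX₀Ω : X₀ ⊆ (uLam T' t h2).Ω := by
    intro z hz
    rw [show (uLam T' t h2).Ω = Finset.univ \ {t} from rfl, mem_sdiff, mem_singleton]
    exact ⟨mem_univ _, fun he => htX₀ (he ▸ hz)⟩
  have hX₀2 : 2 ≤ X₀.card := by omega
  have hunres' : ∀ C ∈ (uLam T' t h2).F, (C ∩ X₀).card ≠ 2 := by
    intro C hC hc2
    rcases mem_insert.1 hC with rfl | hC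
    · have : (Finset.univ \ {t}) ∩ X₀ = X₀ := by
        refine Finset.inter_eq_right.2 ?_
        intro z hz
        rw [mem_sdiff, mem_singleton]
        exact ⟨mem_univ _, fun he => htX₀ (he ▸ hz)⟩
      rw [this] at hc2
      omega
    · rw [mem_filter] at hC
      rw [← inter_eq_of_avoid hC.2 hX₀def] at hc2
      exact hunres ⟨C, hC.1, hc2⟩
  -- the target pair inside X₀
  obtain ⟨Q₀, hQ₀X₀, hQ₀2, hQ₀P⟩ :
      ∃ Q₀ : Finset (Fin n), Q₀ ⊆ X₀ ∧ Q₀.card = 2 ∧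
        (Q₀ = B ∩ X ∨ Q₀ = X \ (B ∩ X)) := by
    by_cases htP : t ∈ B ∩ X
    · refine ⟨X \ (B ∩ X), ?_, ?_, Or.inr rfl⟩
      · intro z hz
        rw [mem_sdiff] at hz
        rcases hX₀def with h | ⟨h, ht⟩
        · rw [h, Finset.mem_erase]
          exact ⟨fun he => hz.2 (he ▸ htP), hz.1⟩
        · exact absurd (hPX htP) ht
      · rw [card_sdiff_of_subset hPX]
        omega
    · refine ⟨B ∩ X, ?_, hB2, Or.inl rfl⟩
      intro z hz
      rcases hX₀def with h | ⟨h, ht⟩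
      · rw [h, Finset.mem_erase]
        exact ⟨fun he => htP (he ▸ hz), hPX hz⟩
      · rw [h]
        exact hPX hz
  have hmc := master_count (uLam T' t h2) X₀ hX₀Ω hX₀2 hX₀c hunres' Q₀ hQ₀X₀ hQ₀2
  have hGrestr := famRestrictU_eq_quartRes G hX4 hB rfl hB2
  have hMsub : ((univ : Finset (Equiv.Perm (Fin n))).filter fun σ =>
        ∃ A ∈ ref (uLam T' t h2).F σ, (A ∩ X₀).card = 2 ∧
          (A ∩ X₀ = Q₀ ∨ A ∩ X₀ = X₀ \ Q₀)) ⊆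
      ((univ : Finset (Equiv.Perm (Fin n))).filter fun σ =>
        famRestrictU (uRefineL (uLam T' t h2) t rfl σ).splits X =
          famRestrictU G.splits X) := by
    intro σ hσ
    rw [mem_filter] at hσ ⊢
    obtain ⟨A, hA, hA2, hAQ⟩ := hσ.2
    have hAX : A ∩ X = A ∩ X₀ := inter_eq_of_avoid (ref_not_mem_t _ t rfl σ hA) hX₀def
    have hApair : A ∩ X = B ∩ X ∨ A ∩ X = X \ (B ∩ X) := by
      rcases hX₀c with h3 | h4
      · -- |X₀| = 3 : only the Q₀ branch can have two elements
        have hAQ' : A ∩ X₀ = Q₀ := by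
          rcases hAQ with h | h
          · exact h
          · exfalso
            have hc : (X₀ \ Q₀).card = 1 := by
              rw [card_sdiff_of_subset hQ₀X₀]
              omega
            rw [h] at hA2
            omega
        rw [hAX, hAQ']
        exact hQ₀P
      · -- |X₀| = 4 : X₀ = X
        have hX₀eq : X₀ = X := Finset.eq_of_subset_of_card_le hX₀X (by omega)
        have hQ₀P' : X₀ \ Q₀ = X \ (B ∩ X) ∨ X₀ \ Q₀ = B ∩ X := by
          rcases hQ₀P with h | h
          · exact Or.inl (by rw [h, hX₀eq])
          · refine Or.inr ?_
            rw [h, hX₀eq, Finset.sdiff_sdiff_eq_self hPX]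
        rcases hAQ with h | h
        · rw [hAX, h]
          rcases hQ₀P with h' | h'
          · exact Or.inl h'
          · exact Or.inr h'
        · rw [hAX, h]
          rcases hQ₀P' with h' | h'
          · exact Or.inr h'
          · exact Or.inl h'
    have hAX2 : (A ∩ X).card = 2 := by rw [hAX]; exact hA2
    have hrefined := famRestrictU_eq_quartRes (uRefineL (uLam T' t h2) t rfl σ) hX4
      (mem_union.2 (Or.inl hA)) rfl hAX2
    refine ⟨mem_univ _, ?_⟩
    rw [hrefined, hGrestr]
    rcases hApair with h | h
    · rw [h]
    · rw [h, quartRes_compl hPX]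
  have hN := card_le_card hMsub
  have hresolved : ∀ σ : Equiv.Perm (Fin n),
      famResolvedU (uRefineL (uLam T' t h2) t rfl σ).splits X :=
    fun σ => uRefineL_fullyResolved _ t rfl σ X hX
  have hcost : ∀ σ : Equiv.Perm (Fin n),
      costU p (uRefineL (uLam T' t h2) t rfl σ).splits G.splits X =
      if ¬ (famRestrictU (uRefineL (uLam T' t h2) t rfl σ).splits X =
        famRestrictU G.splits X) then (1:ℝ) else 0 := by
    intro σ
    rw [costU, if_pos (hresolved σ)]
    by_cases h : famRestrictU (uRefineL (uLam T' t h2) t rfl σ).splits X =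
        famRestrictU G.splits X
    · simp [h]
    · simp [h]
  rw [Finset.sum_congr rfl (fun σ _ => hcost σ)]
  have hsplit : ∀ σ : Equiv.Perm (Fin n),
      (if ¬ (famRestrictU (uRefineL (uLam T' t h2) t rfl σ).splits X =
        famRestrictU G.splits X) then (1:ℝ) else 0) =
      1 - (if famRestrictU (uRefineL (uLam T' t h2) t rfl σ).splits X =
        famRestrictU G.splits X then (1:ℝ) else 0) := by
    intro σ
    by_cases h : famRestrictU (uRefineL (uLam T' t h2) t rfl σ).splits X =
        famRestrictU G.splits X
    · simp [h]
    · simp [h]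
  rw [Finset.sum_congr rfl (fun σ _ => hsplit σ), Finset.sum_sub_distrib, Finset.sum_const,
    Finset.card_univ, nsmul_eq_mul, mul_one, Finset.sum_boole]
  have hNle : Fintype.card (Equiv.Perm (Fin n)) ≤
      3 * ((univ : Finset (Equiv.Perm (Fin n))).filter fun σ =>
        famRestrictU (uRefineL (uLam T' t h2) t rfl σ).splits X =
          famRestrictU G.splits X).card :=
    le_trans hmc (Nat.mul_le_mul_left 3 hN)
  have hcast : (Fintype.card (Equiv.Perm (Fin n)) : ℝ) ≤
      3 * ((((univ : Finset (Equiv.Perm (Fin n))).filter fun σ =>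
        famRestrictU (uRefineL (uLam T' t h2) t rfl σ).splits X =
          famRestrictU G.splits X).card : ℕ) : ℝ) := by
    exact_mod_cast hNle
  have hmul : (2/3 : ℝ) * (Fintype.card (Equiv.Perm (Fin n)) : ℝ) ≤
      p * (Fintype.card (Equiv.Perm (Fin n)) : ℝ) :=
    mul_le_mul_of_nonneg_right hp (Nat.cast_nonneg _)
  linarith

end Unrooted

noncomputable def trivLamU (t : Fin n) (h2 : 2 ≤ n) : Lam n where
  F := insert (Finset.univ \ {t}) ((Finset.univ \ {t}).image fun x => ({x} : Finset (Fin n)))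
  Ω := Finset.univ \ {t}
  top_mem := mem_insert_self _ _
  le_top := by
    intro A hA
    rcases mem_insert.1 hA with rfl | hA
    · exact Finset.Subset.refl _
    · obtain ⟨x, hx, rfl⟩ := Finset.mem_image.1 hA
      exact Finset.singleton_subset_iff.2 hx
  sing := fun x hx => mem_insert.2 (Or.inr (Finset.mem_image.2 ⟨x, hx, rfl⟩))
  emp := by
    rw [mem_insert]
    rintro (h | h)
    · obtain ⟨u, hu⟩ := Fintype.exists_ne_of_one_lt_card (by simp; omega) t
      have : u ∈ (∅ : Finset (Fin n)) := by
        rw [h, mem_sdiff, mem_singleton]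
        exact ⟨mem_univ _, hu⟩
      exact absurd this (notMem_empty _)
    · obtain ⟨x, _, hx⟩ := Finset.mem_image.1 h
      exact Finset.singleton_ne_empty x hx
  lam := by
    intro C hC D hD
    rcases mem_insert.1 hC with rfl | hC
    · rcases mem_insert.1 hD with rfl | hD
      · exact Or.inl (Finset.Subset.refl _)
      · obtain ⟨x, hx, rfl⟩ := Finset.mem_image.1 hD
        exact Or.inr (Or.inl (Finset.singleton_subset_iff.2 hx))
    · obtain ⟨x, hx, rfl⟩ := Finset.mem_image.1 hC
      rcases mem_insert.1 hD with rfl | hD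
      · exact Or.inl (Finset.singleton_subset_iff.2 hx)
      · obtain ⟨y, hy, rfl⟩ := Finset.mem_image.1 hD
        rcases eq_or_ne x y with rfl | hxy
        · exact Or.inl (Finset.Subset.refl _)
        · refine Or.inr (Or.inr ?_)
          rw [Finset.singleton_inter_of_notMem (by simpa using hxy)]

lemma unrooted_main (p : ℝ) (hp : 2 / 3 ≤ p) (n l : ℕ) (h2 : 2 ≤ n)
    (Q : Fin l → UTree n) (hQ : ∀ i, (Q i).FullyResolved) :
    ∃ T : UTree n, T.FullyResolved ∧ ∀ T' : UTree n,
      ∑ i, UTree.pdist p T (Q i) ≤ ∑ i, UTree.pdist p T' (Q i) := by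
  classical
  have ht0 : 0 < n := by omega
  set t : Fin n := ⟨0, ht0⟩ with hts
  set c : UTree n → ℝ := fun T => ∑ i, UTree.pdist p T (Q i) with hc
  have hcX : ∀ T : UTree n, c T = ∑ X ∈ quartets n, ∑ i,
      costU p T.splits (Q i).splits X := by
    intro T
    rw [hc]
    simp only []
    rw [Finset.sum_comm]
    exact Finset.sum_congr rfl fun i _ => famPdistU_eq_sum (hQ i)
  have key : ∀ T' : UTree n, ∃ T'' : UTree n, T''.FullyResolved ∧ c T'' ≤ c T' := by
    intro T'
    have hsum : ∑ σ : Equiv.Perm (Fin n), c (uRefineL (uLam T' t h2) t rfl σ) ≤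
        ∑ _σ : Equiv.Perm (Fin n), c T' := by
      rw [Finset.sum_congr rfl fun (σ : Equiv.Perm (Fin n)) _ =>
        hcX (uRefineL (uLam T' t h2) t rfl σ)]
      have hconst : ∑ _σ : Equiv.Perm (Fin n), c T' =
          ∑ X ∈ quartets n, ∑ _σ : Equiv.Perm (Fin n), ∑ i,
            costU p T'.splits (Q i).splits X := by
        rw [Finset.sum_congr rfl fun (σ : Equiv.Perm (Fin n)) _ => hcX T', Finset.sum_comm]
      rw [hconst, Finset.sum_comm]
      refine Finset.sum_le_sum fun X hX => ?_
      by_cases hres : famResolvedU T'.splits X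
      · refine le_of_eq (Finset.sum_congr rfl fun σ _ => Finset.sum_congr rfl fun i _ => ?_)
        exact costU_refine_resolved T' (Q i) t h2 σ hX hres p
      · have hcostT' : ∀ i : Fin l, costU p T'.splits (Q i).splits X = p :=
          fun i => if_neg hres
        rw [Finset.sum_comm]
        calc ∑ i : Fin l, ∑ σ : Equiv.Perm (Fin n),
              costU p (uRefineL (uLam T' t h2) t rfl σ).splits (Q i).splits X
            ≤ ∑ _i : Fin l, (Fintype.card (Equiv.Perm (Fin n)) : ℝ) * p :=
              Finset.sum_le_sum fun i _ =>
                sum_costU_refine_unresolved T' (Q i) t h2 hX hres (hQ i X hX) hp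
          _ = ∑ _σ : Equiv.Perm (Fin n), ∑ i : Fin l,
              costU p T'.splits (Q i).splits X := by
              rw [Finset.sum_congr rfl fun (σ : Equiv.Perm (Fin n)) _ =>
                Finset.sum_congr rfl fun (i : Fin l) _ => hcostT' i]
              simp only [Finset.sum_const, Finset.card_univ, nsmul_eq_mul]
              ring
    obtain ⟨σ, _, hσ⟩ := Finset.exists_le_of_sum_le Finset.univ_nonempty hsum
    exact ⟨uRefineL (uLam T' t h2) t rfl σ, uRefineL_fullyResolved _ t rfl σ, hσ⟩
  have hFR : ((univ : Finset (UTree n)).filter fun T => T.FullyResolved).Nonempty := by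
    refine ⟨uRefineL (trivLamU t h2) t rfl 1, ?_⟩
    rw [mem_filter]
    exact ⟨mem_univ _, uRefineL_fullyResolved _ t rfl 1⟩
  obtain ⟨T, hTmem, hTmin⟩ := Finset.exists_min_image _ c hFR
  refine ⟨T, (mem_filter.1 hTmem).2, fun T' => ?_⟩
  obtain ⟨T'', hT''F, hT''le⟩ := key T'
  exact le_trans (hTmin T'' (mem_filter.2 ⟨mem_univ _, hT''F⟩)) hT''le

lemma quartets_small (h : n < 4) : quartets n = ∅ := by
  rw [quartets]
  ext A
  simp only [Finset.mem_powersetCard, Finset.notMem_empty, iff_false, not_and]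
  intro hA hc
  have hle := card_le_card hA
  rw [Finset.card_univ, Fintype.card_fin] at hle
  omega

lemma famPdistU_zero (h : n < 4) (p : ℝ) (F G : Finset (Finset (Fin n))) :
    famPdistU p F G = 0 := by
  rw [famPdistU, famSetDU, famSetR1U, famSetR2U, quartets_small h]
  simp

noncomputable def emptyU (h1 : n ≤ 1) : UTree n where
  splits := ∅
  empty_not_mem := Finset.notMem_empty _
  trivial_mem := fun x => Or.inl (by
    refine Finset.eq_univ_iff_forall.2 fun y => ?_
    rw [mem_singleton]
    have := y.isLt
    have := x.isLt
    exact Fin.ext (by omega))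
  compl_mem := fun A hA => absurd hA (Finset.notMem_empty _)
  compat := fun A hA => absurd hA (Finset.notMem_empty _)

end PDM

/-- **Theorem.**  Let `P` (resp. `Q`) be a profile of fully resolved rooted
(resp. unrooted) phylogenies over a fixed taxon set.  If `p ≥ 2/3`, then there
exists a median tree relative to `d⁽ᵖ⁾` — a tree minimizing the total parametric
distance to the profile — which is fully resolved. -/
theorem exists_fully_resolved_median (p : ℝ) (hp : 2 / 3 ≤ p) (hp1 : p ≤ 1)
    (n k : ℕ) (hn : 1 ≤ n) (P : Fin k → RTree n) (hP : ∀ i, (P i).FullyResolved)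
    (m l : ℕ) (Q : Fin l → UTree m) (hQ : ∀ i, (Q i).FullyResolved) :
    (∃ T : RTree n, T.FullyResolved ∧
        ∀ T' : RTree n,
          ∑ i, RTree.pdist p T (P i) ≤ ∑ i, RTree.pdist p T' (P i)) ∧
    ∃ T : UTree m, T.FullyResolved ∧
      ∀ T' : UTree m,
        ∑ i, UTree.pdist p T (Q i) ≤ ∑ i, UTree.pdist p T' (Q i) := by
  refine ⟨PDM.rooted_main p hp n k hn P hP, ?_⟩
  by_cases h2 : 2 ≤ m
  · exact PDM.unrooted_main p hp m l h2 Q hQ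
  · push_neg at h2
    refine ⟨PDM.emptyU (by omega), ?_, ?_⟩
    · intro X hX
      rw [PDM.quartets_small (by omega)] at hX
      exact absurd hX (Finset.notMem_empty _)
    · intro T'
      have hz : ∀ T Tg : UTree m, UTree.pdist p T Tg = 0 :=
        fun T Tg => PDM.famPdistU_zero (by omega) p T.splits Tg.splits
      simp only [hz, Finset.sum_const_zero, le_refl]
end

section
/- In the rooted case, there exists an index q ∈ [d] such that f_q ≥ a_q/2; in the unrooted case, there exist two distinct indices q, r ∈ [d] such that f_{qr} ≥ a_{qr}/2. -/
open Finset

attribute [local instance] Classical.propDecidable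

namespace RTree

variable {n : ℕ}

/-- The children of the node of `T` corresponding to the cluster `C`: the maximal
clusters of `T` properly contained in `C`. -/
noncomputable def childSet (T : RTree n) (C : Finset (Fin n)) : Finset (Finset (Fin n)) :=
  T.clusters.filter fun A => A ⊂ C ∧ ¬ ∃ B ∈ T.clusters, A ⊂ B ∧ B ⊂ C

/-- The cluster family of `Pull-Out(T, u)`, where `u` is the child of the node `v`
corresponding to the cluster `A ⊂ C`:  the node `v` is split in two, creating the
new cluster `C \ A` gathering the remaining children of `v`. -/
noncomputable def pullOutFam (T : RTree n) (C A : Finset (Fin n)) : Finset (Finset (Fin n)) :=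
  insert (C \ A) T.clusters

end RTree

/-- The triplets that are not resolved in the tree with cluster family `F` but are
resolved in the tree with cluster family `F'` (the set `L_q` for `F' = Pull-Out`). -/
noncomputable def famL {n : ℕ} (F F' : Finset (Finset (Fin n))) : Finset (Finset (Fin n)) :=
  (triplets n).filter fun X => ¬ famResolved F X ∧ famResolved F' X

/-- The number `f_q` of votes cast by the profile `P` *for* the way the triplets of
`famL F F'` are resolved in `F'`. -/
noncomputable def famAgree {n k : ℕ} (P : Fin k → RTree n)
    (F F' : Finset (Finset (Fin n))) : ℕ :=
  ∑ X ∈ famL F F',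
    (Finset.univ.filter fun i : Fin k =>
      famRestrict (P i).clusters X = famRestrict F' X).card

/-- The number `a_q` of votes cast by the profile `P` *against* the way the triplets
of `famL F F'` are resolved in `F'`. -/
noncomputable def famDisagree {n k : ℕ} (P : Fin k → RTree n)
    (F F' : Finset (Finset (Fin n))) : ℕ :=
  ∑ X ∈ famL F F',
    (Finset.univ.filter fun i : Fin k =>
      famRestrict (P i).clusters X ≠ famRestrict F' X).card

namespace UTree

variable {n : ℕ}

/-- `part` is the partition of the taxa into the leaf sets of the subtrees hanging
off an internal node `v` of `T`: its blocks are split sides, they partition the taxon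
set, there are at least three of them (`v` is internal), and every split of `T` has,
on one of its two sides, leaves from only one block (its edge lies in one of the
subtrees around `v`). -/
def IsNodePartition (T : UTree n) (part : Finset (Finset (Fin n))) : Prop :=
  3 ≤ part.card ∧ (∀ B ∈ part, B ∈ T.splits) ∧
    (∀ B₁ ∈ part, ∀ B₂ ∈ part, B₁ ≠ B₂ → B₁ ∩ B₂ = ∅) ∧
    (∀ x : Fin n, ∃ B ∈ part, x ∈ B) ∧
    ∀ A ∈ T.splits, (∃ B ∈ part, A ⊆ B) ∨ (∃ B ∈ part, Finset.univ \ A ⊆ B)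

/-- The split system of `Pull-2-Out(T, u₁, u₂)`, where `u₁`, `u₂` are the neighbors
of the node `v` whose subtrees have leaf sets `B₁` and `B₂`:  the node `v` is split
in two, creating the new split `B₁ ∪ B₂` versus the rest. -/
noncomputable def pull2Fam (T : UTree n) (B₁ B₂ : Finset (Fin n)) :
    Finset (Finset (Fin n)) :=
  insert (B₁ ∪ B₂) (insert (Finset.univ \ (B₁ ∪ B₂)) T.splits)

end UTree

/-- The quartets that are not resolved in the tree with split system `F` but are
resolved in the tree with split system `F'` (the set `L_{qr}` for `F' = Pull-2-Out`). -/
noncomputable def famLU {n : ℕ} (F F' : Finset (Finset (Fin n))) : Finset (Finset (Fin n)) :=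
  (quartets n).filter fun X => ¬ famResolvedU F X ∧ famResolvedU F' X

/-- The number `f_{qr}` of votes cast by the profile `P` *for* the way the quartets
of `famLU F F'` are resolved in `F'`. -/
noncomputable def famAgreeU {n k : ℕ} (P : Fin k → UTree n)
    (F F' : Finset (Finset (Fin n))) : ℕ :=
  ∑ X ∈ famLU F F',
    (Finset.univ.filter fun i : Fin k =>
      famRestrictU (P i).splits X = famRestrictU F' X).card

/-- The number `a_{qr}` of votes cast by the profile `P` *against* the way the
quartets of `famLU F F'` are resolved in `F'`. -/
noncomputable def famDisagreeU {n k : ℕ} (P : Fin k → UTree n)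
    (F F' : Finset (Finset (Fin n))) : ℕ :=
  ∑ X ∈ famLU F F',
    (Finset.univ.filter fun i : Fin k =>
      famRestrictU (P i).splits X ≠ famRestrictU F' X).card

section PulloutHelpers

variable {n : ℕ}

lemma mem_famRestrict' {F : Finset (Finset (Fin n))} {X D : Finset (Fin n)} :
    D ∈ famRestrict F X ↔ (∃ S ∈ F, S ∩ X = D) ∧ D ≠ ∅ := by
  simp [famRestrict]

lemma mem_famRestrictU' {F : Finset (Finset (Fin n))} {X D : Finset (Fin n)} :
    D ∈ famRestrictU F X ↔ (∃ S ∈ F, S ∩ X = D) ∧ D ≠ ∅ ∧ D ≠ X := by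
  simp [famRestrictU]

lemma pair_ne {a b c d : Fin n} (h1 : a ≠ c) (h2 : a ≠ d) :
    ({a, b} : Finset (Fin n)) ≠ {c, d} := by
  intro h
  have : a ∈ ({c, d} : Finset (Fin n)) := h ▸ mem_insert_self a {b}
  simp at this; tauto

lemma pair_ne' {a b c d : Fin n} (h1 : b ≠ c) (h2 : b ≠ d) :
    ({a, b} : Finset (Fin n)) ≠ {c, d} := by
  rw [Finset.pair_comm]; exact pair_ne h1 h2

lemma pair_subset3 {x y z : Fin n} {p : Finset (Fin n)} (hp : p ⊆ {x, y, z})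
    (h2 : p.card = 2) : p = {x, y} ∨ p = {x, z} ∨ p = {y, z} := by
  obtain ⟨a, b, hab, rfl⟩ := Finset.card_eq_two.1 h2
  have ha : a ∈ ({x, y, z} : Finset (Fin n)) := hp (by simp)
  have hb : b ∈ ({x, y, z} : Finset (Fin n)) := hp (by simp)
  simp only [mem_insert, mem_singleton] at ha hb
  rcases ha with rfl | rfl | rfl <;> rcases hb with rfl | rfl | rfl <;>
    first
      | exact absurd rfl hab
      | tauto
      | (rw [Finset.pair_comm]; tauto)

lemma pair_subset4 {x y z w : Fin n} {p : Finset (Fin n)} (hp : p ⊆ {x, y, z, w})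
    (h2 : p.card = 2) :
    p = {x, y} ∨ p = {x, z} ∨ p = {x, w} ∨ p = {y, z} ∨ p = {y, w} ∨ p = {z, w} := by
  obtain ⟨a, b, hab, rfl⟩ := Finset.card_eq_two.1 h2
  have ha : a ∈ ({x, y, z, w} : Finset (Fin n)) := hp (by simp)
  have hb : b ∈ ({x, y, z, w} : Finset (Fin n)) := hp (by simp)
  simp only [mem_insert, mem_singleton] at ha hb
  rcases ha with rfl | rfl | rfl | rfl <;> rcases hb with rfl | rfl | rfl | rfl <;>
    first
      | exact absurd rfl hab
      | tauto
      | (rw [Finset.pair_comm]; tauto)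

lemma insert_left_cancel {α : Type*} [DecidableEq α] {B : Finset α} {p q : α}
    (hp : p ∉ B) : insert p B = insert q B ↔ p = q := by
  constructor
  · intro h
    rcases mem_insert.1 (h ▸ mem_insert_self p B) with h' | h'
    · exact h'
    · exact absurd h' hp
  · rintro rfl; rfl

lemma not_mem_of_inter_empty {a : Fin n} {A B : Finset (Fin n)} (ha : a ∈ A)
    (h : A ∩ B = ∅) : a ∉ B := fun hb => by
  have : a ∈ A ∩ B := mem_inter.2 ⟨ha, hb⟩
  simp [h] at this

lemma childSet_mem {T : RTree n} {C A : Finset (Fin n)} (h : A ∈ T.childSet C) :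
    A ∈ T.clusters ∧ A ⊂ C ∧ ¬∃ B ∈ T.clusters, A ⊂ B ∧ B ⊂ C := by
  simpa [RTree.childSet, mem_filter] using h

lemma child_disjoint {T : RTree n} {C A B : Finset (Fin n)} (hA : A ∈ T.childSet C)
    (hB : B ∈ T.childSet C) (hAB : A ≠ B) : A ∩ B = ∅ := by
  obtain ⟨hA1, hA2, hA3⟩ := childSet_mem hA
  obtain ⟨hB1, hB2, hB3⟩ := childSet_mem hB
  rcases T.laminar A hA1 B hB1 with h | h | h
  · exact absurd ⟨B, hB1, Finset.ssubset_iff_subset_ne.2 ⟨h, hAB⟩, hB2⟩ hA3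
  · exact absurd ⟨A, hA1, Finset.ssubset_iff_subset_ne.2 ⟨h, hAB.symm⟩, hA2⟩ hB3
  · exact h

lemma exists_child {T : RTree n} {C : Finset (Fin n)}
    (h3 : 1 ≤ (T.childSet C).card) {x : Fin n} (hx : x ∈ C) :
    ∃ A ∈ T.childSet C, x ∈ A := by
  have hsx : ({x} : Finset (Fin n)) ⊂ C := by
    refine Finset.ssubset_iff_subset_ne.2 ⟨Finset.singleton_subset_iff.2 hx, ?_⟩
    intro h
    obtain ⟨A, hA⟩ := Finset.card_pos.1 (lt_of_lt_of_le zero_lt_one h3)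
    obtain ⟨hA1, hA2, -⟩ := childSet_mem hA
    rw [← h] at hA2
    exact T.empty_not_mem (by rwa [Finset.ssubset_singleton_iff.1 hA2] at hA1)
  have hne : (T.clusters.filter fun B => x ∈ B ∧ B ⊂ C).Nonempty :=
    ⟨{x}, by simp [T.singleton_mem x, hsx]⟩
  obtain ⟨M, hM, hmax⟩ : ∃ m ∈ _, ∀ x ∈ _, ¬ m < x := by
    obtain ⟨m, hm⟩ := Finset.exists_maximal hne
    exact ⟨m, hm.prop, fun x hx hlt => hlt.not_ge (hm.2 hx hlt.le)⟩
  rw [mem_filter] at hM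
  refine ⟨M, ?_, hM.2.1⟩
  rw [RTree.childSet, mem_filter]
  refine ⟨hM.1, hM.2.2, ?_⟩
  rintro ⟨B, hB1, hB2, hB3⟩
  exact hmax B (by simp only [mem_filter]; exact ⟨hB1, hB2.subset hM.2.1, hB3⟩) hB2

lemma famResolved_insert_iff {F : Finset (Finset (Fin n))} {S X : Finset (Fin n)}
    (h : ¬famResolved F X) : famResolved (insert S F) X ↔ (S ∩ X).card = 2 := by
  constructor
  · rintro ⟨D, hD, hD2⟩
    rcases mem_insert.1 hD with rfl | hD'
    · exact hD2
    · exact absurd ⟨D, hD', hD2⟩ h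
  · intro h2; exact ⟨S, mem_insert_self S F, h2⟩

lemma famRestrict_insert {F : Finset (Finset (Fin n))} {S X : Finset (Fin n)}
    (h : S ∩ X ≠ ∅) :
    famRestrict (insert S F) X = insert (S ∩ X) (famRestrict F X) := by
  ext D
  simp only [mem_famRestrict', mem_insert]
  constructor
  · rintro ⟨⟨S', hS', rfl⟩, hne⟩
    rcases hS' with rfl | hS''
    · exact Or.inl rfl
    · exact Or.inr ⟨⟨S', hS'', rfl⟩, hne⟩
  · rintro (rfl | ⟨⟨S', hS', rfl⟩, hne⟩)
    · exact ⟨⟨S, Or.inl rfl, rfl⟩, h⟩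
    · exact ⟨⟨S', Or.inr hS', rfl⟩, hne⟩

lemma base3_card {x y z : Fin n} {X D : Finset (Fin n)} (hX : X = {x, y, z})
    (hc : X.card = 3) (hD : D ∈ ({{x}, {y}, {z}, X} : Finset (Finset (Fin n)))) :
    D.card ≠ 2 := by
  simp only [mem_insert, mem_singleton] at hD
  rcases hD with rfl | rfl | rfl | rfl <;> simp [hc]

lemma restrict_unresolved3 {F : Finset (Finset (Fin n))} {X : Finset (Fin n)}
    (huniv : Finset.univ ∈ F) (hsing : ∀ a : Fin n, {a} ∈ F)
    {x y z : Fin n} (hX : X = {x, y, z}) (hcard : X.card = 3)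
    (hunres : ¬famResolved F X) :
    famRestrict F X = {{x}, {y}, {z}, X} := by
  have hxX : x ∈ X := by simp [hX]
  have hyX : y ∈ X := by simp [hX]
  have hzX : z ∈ X := by simp [hX]
  ext D
  simp only [mem_famRestrict', mem_insert, mem_singleton]
  constructor
  · rintro ⟨⟨S, hS, rfl⟩, hne⟩
    have hsub : S ∩ X ⊆ X := inter_subset_right
    have hc3 : (S ∩ X).card ≤ 3 := hcard ▸ card_le_card hsub
    have hc1 : 1 ≤ (S ∩ X).card := card_pos.2 (nonempty_iff_ne_empty.2 hne)
    have hc2 : (S ∩ X).card ≠ 2 := fun h => hunres ⟨S, hS, h⟩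
    have : (S ∩ X).card = 1 ∨ (S ∩ X).card = 3 := by omega
    rcases this with h1 | h1
    · obtain ⟨a, ha⟩ := Finset.card_eq_one.1 h1
      have : a ∈ X := hsub (ha ▸ mem_singleton_self a)
      rw [hX] at this
      simp only [mem_insert, mem_singleton] at this
      rcases this with rfl | rfl | rfl
      · exact Or.inl ha
      · exact Or.inr (Or.inl ha)
      · exact Or.inr (Or.inr (Or.inl ha))
    · exact Or.inr (Or.inr (Or.inr
        (Finset.eq_of_subset_of_card_le hsub (by omega))))
  · rintro (rfl | rfl | rfl | hDX)
    · exact ⟨⟨{x}, hsing x, Finset.inter_eq_left.2 (Finset.singleton_subset_iff.2 hxX)⟩,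
        by simp⟩
    · exact ⟨⟨{y}, hsing y, Finset.inter_eq_left.2 (Finset.singleton_subset_iff.2 hyX)⟩,
        by simp⟩
    · exact ⟨⟨{z}, hsing z, Finset.inter_eq_left.2 (Finset.singleton_subset_iff.2 hzX)⟩,
        by simp⟩
    · refine ⟨⟨Finset.univ, huniv, by rw [Finset.univ_inter, hDX]⟩, ?_⟩
      rw [hDX]; intro h; rw [h] at hcard; simp at hcard

lemma restrict_resolved3 (Ti : RTree n) {X : Finset (Fin n)} {x y z : Fin n}
    (hX : X = {x, y, z}) (hcard : X.card = 3) (hres : famResolved Ti.clusters X) :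
    ∃ p ⊆ X, p.card = 2 ∧
      famRestrict Ti.clusters X = insert p {{x}, {y}, {z}, X} := by
  obtain ⟨S0, hS0, hS02⟩ := hres
  have hxX : x ∈ X := by simp [hX]
  have hyX : y ∈ X := by simp [hX]
  have hzX : z ∈ X := by simp [hX]
  refine ⟨S0 ∩ X, inter_subset_right, hS02, ?_⟩
  ext D
  simp only [mem_famRestrict', mem_insert, mem_singleton]
  constructor
  · rintro ⟨⟨S, hS, rfl⟩, hne⟩
    by_cases h2 : (S ∩ X).card = 2
    · left
      rcases Ti.laminar S hS S0 hS0 with h | h | h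
      · exact Finset.eq_of_subset_of_card_le
          (Finset.inter_subset_inter h (Finset.Subset.refl X)) (by omega)
      · exact (Finset.eq_of_subset_of_card_le
          (Finset.inter_subset_inter h (Finset.Subset.refl X)) (by omega)).symm
      · exfalso
        have hU : ((S ∩ X) ∪ (S0 ∩ X)).card ≤ 3 :=
          hcard ▸ card_le_card (union_subset inter_subset_right inter_subset_right)
        have hh := Finset.card_union_add_card_inter (S ∩ X) (S0 ∩ X)
        have hne' : ((S ∩ X) ∩ (S0 ∩ X)).Nonempty := card_pos.1 (by omega)
        obtain ⟨a, ha⟩ := hne'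
        simp only [mem_inter] at ha
        have : a ∈ S ∩ S0 := mem_inter.2 ⟨ha.1.1, ha.2.1⟩
        rw [h] at this; simp at this
    · right
      have hsub : S ∩ X ⊆ X := inter_subset_right
      have hc3 : (S ∩ X).card ≤ 3 := hcard ▸ card_le_card hsub
      have hc1 : 1 ≤ (S ∩ X).card := card_pos.2 (nonempty_iff_ne_empty.2 hne)
      have : (S ∩ X).card = 1 ∨ (S ∩ X).card = 3 := by omega
      rcases this with h1 | h1
      · obtain ⟨a, ha⟩ := Finset.card_eq_one.1 h1
        have : a ∈ X := hsub (ha ▸ mem_singleton_self a)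
        rw [hX] at this
        simp only [mem_insert, mem_singleton] at this
        rcases this with rfl | rfl | rfl
        · exact Or.inl ha
        · exact Or.inr (Or.inl ha)
        · exact Or.inr (Or.inr (Or.inl ha))
      · exact Or.inr (Or.inr (Or.inr
          (Finset.eq_of_subset_of_card_le hsub (by omega))))
  · rintro (rfl | rfl | rfl | rfl | hDX)
    · exact ⟨⟨S0, hS0, rfl⟩, fun h => by rw [h] at hS02; simp at hS02⟩
    · exact ⟨⟨{x}, Ti.singleton_mem x,
        Finset.inter_eq_left.2 (Finset.singleton_subset_iff.2 hxX)⟩, by simp⟩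
    · exact ⟨⟨{y}, Ti.singleton_mem y,
        Finset.inter_eq_left.2 (Finset.singleton_subset_iff.2 hyX)⟩, by simp⟩
    · exact ⟨⟨{z}, Ti.singleton_mem z,
        Finset.inter_eq_left.2 (Finset.singleton_subset_iff.2 hzX)⟩, by simp⟩
    · refine ⟨⟨Finset.univ, Ti.univ_mem, by rw [Finset.univ_inter, hDX]⟩, ?_⟩
      rw [hDX]; intro h; rw [h] at hcard; simp at hcard

end PulloutHelpers

section RootedStructure

variable {n : ℕ}

lemma rooted_structure {T : RTree n} {C : Finset (Fin n)} (hC : C ∈ T.clusters)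
    (h3 : 3 ≤ (T.childSet C).card) {X : Finset (Fin n)} (hX3 : X.card = 3)
    (hunres : ¬famResolved T.clusters X) {A0 : Finset (Fin n)}
    (hA0 : A0 ∈ T.childSet C) (hres : famResolved (T.pullOutFam C A0) X) :
    ∃ x y z : Fin n, ∃ Ay Az : Finset (Fin n),
      X = {x, y, z} ∧ x ≠ y ∧ x ≠ z ∧ y ≠ z ∧
      Ay ∈ T.childSet C ∧ Az ∈ T.childSet C ∧
      A0 ≠ Ay ∧ A0 ≠ Az ∧ Ay ≠ Az ∧
      x ∈ A0 ∧ y ∈ Ay ∧ z ∈ Az := by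
  simp only [RTree.pullOutFam] at hres
  have h2 : ((C \ A0) ∩ X).card = 2 := (famResolved_insert_iff hunres).1 hres
  obtain ⟨y, z, hyz, hpair⟩ := Finset.card_eq_two.1 h2
  have hyCX : y ∈ (C \ A0) ∩ X := by rw [hpair]; simp
  have hzCX : z ∈ (C \ A0) ∩ X := by rw [hpair]; simp
  simp only [mem_inter, mem_sdiff] at hyCX hzCX
  have hsub : ({y, z} : Finset (Fin n)) ⊆ X := hpair ▸ inter_subset_right
  have hcard1 : (X \ {y, z}).card = 1 := by
    rw [card_sdiff_of_subset hsub, hX3, Finset.card_pair hyz]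
  obtain ⟨x, hx⟩ := Finset.card_eq_one.1 hcard1
  have hx' : x ∈ X \ ({y, z} : Finset (Fin n)) := by rw [hx]; simp
  rw [mem_sdiff, mem_insert, mem_singleton] at hx'
  push_neg at hx'
  obtain ⟨hxX, hxy, hxz⟩ := hx'
  have hXeq : X = {x, y, z} := by
    rw [← Finset.sdiff_union_of_subset hsub, hx]
    exact (Finset.insert_eq x {y, z}).symm
  have hxC : x ∈ C := by
    by_contra hxC
    apply hunres
    refine ⟨C, hC, ?_⟩
    have hCX : C ∩ X = {y, z} := by
      apply Finset.Subset.antisymm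
      · intro a ha
        rw [mem_inter, hXeq, mem_insert, mem_insert, mem_singleton] at ha
        obtain ⟨haC, rfl | rfl | rfl⟩ := ha
        · exact absurd haC hxC
        · simp
        · simp
      · intro a ha
        rw [mem_insert, mem_singleton] at ha
        rcases ha with rfl | rfl
        · exact mem_inter.2 ⟨hyCX.1.1, hyCX.2⟩
        · exact mem_inter.2 ⟨hzCX.1.1, hzCX.2⟩
    rw [hCX]; exact Finset.card_pair hyz
  have hxA0 : x ∈ A0 := by
    by_contra hxA0
    have : x ∈ (C \ A0) ∩ X := mem_inter.2 ⟨mem_sdiff.2 ⟨hxC, hxA0⟩, hxX⟩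
    rw [hpair, mem_insert, mem_singleton] at this
    tauto
  obtain ⟨Ay, hAy, hyAy⟩ := exists_child (T := T) (C := C) (by omega) hyCX.1.1
  obtain ⟨Az, hAz, hzAz⟩ := exists_child (T := T) (C := C) (by omega) hzCX.1.1
  have h0y : A0 ≠ Ay := fun h => hyCX.1.2 (h ▸ hyAy)
  have h0z : A0 ≠ Az := fun h => hzCX.1.2 (h ▸ hzAz)
  have hyzA : Ay ≠ Az := by
    rintro rfl
    apply hunres
    refine ⟨Ay, (childSet_mem hAy).1, ?_⟩
    have hxnAy : x ∉ Ay := not_mem_of_inter_empty hxA0 (child_disjoint hA0 hAy h0y)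
    have : Ay ∩ X = {y, z} := by
      apply Finset.Subset.antisymm
      · intro a ha
        rw [mem_inter, hXeq, mem_insert, mem_insert, mem_singleton] at ha
        obtain ⟨haA, rfl | rfl | rfl⟩ := ha
        · exact absurd haA hxnAy
        · simp
        · simp
      · intro a ha
        rw [mem_insert, mem_singleton] at ha
        rcases ha with rfl | rfl
        · exact mem_inter.2 ⟨hyAy, hyCX.2⟩
        · exact mem_inter.2 ⟨hzAz, hzCX.2⟩
    rw [this]; exact Finset.card_pair hyz
  exact ⟨x, y, z, Ay, Az, hXeq, hxy, hxz, hyz, hAy, hAz, h0y, h0z, hyzA, hxA0, hyAy, hzAz⟩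

end RootedStructure

section UnrootedHelpers

variable {n : ℕ}

lemma fpair_eq {a b c d : Fin n} :
    ({a, b} : Finset (Fin n)) = {c, d} ↔ a = c ∧ b = d ∨ a = d ∧ b = c := by
  rw [← Finset.coe_inj]
  push_cast
  exact Set.pair_eq_pair_iff

lemma compl_inter_eq {S X : Finset (Fin n)} :
    (Finset.univ \ S) ∩ X = X \ (S ∩ X) := by
  ext a; simp only [mem_inter, mem_sdiff, mem_univ, true_and]; tauto

lemma famResolvedU_pull_iff {F : Finset (Finset (Fin n))} {S S' X : Finset (Fin n)}
    (h : ¬famResolvedU F X) :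
    famResolvedU (insert S (insert S' F)) X ↔ (S ∩ X).card = 2 ∨ (S' ∩ X).card = 2 := by
  constructor
  · rintro ⟨D, hD, hD2⟩
    rcases mem_insert.1 hD with rfl | hD'
    · exact Or.inl hD2
    rcases mem_insert.1 hD' with rfl | hD''
    · exact Or.inr hD2
    · exact absurd ⟨D, hD'', hD2⟩ h
  · rintro (h2 | h2)
    · exact ⟨S, mem_insert_self _ _, h2⟩
    · exact ⟨S', mem_insert_of_mem (mem_insert_self _ _), h2⟩

lemma famRestrictU_insert {F : Finset (Finset (Fin n))} {S X : Finset (Fin n)}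
    (h1 : S ∩ X ≠ ∅) (h2 : S ∩ X ≠ X) :
    famRestrictU (insert S F) X = insert (S ∩ X) (famRestrictU F X) := by
  ext D
  simp only [mem_famRestrictU', mem_insert]
  constructor
  · rintro ⟨⟨S', hS', rfl⟩, hne, hnX⟩
    rcases hS' with rfl | hS''
    · exact Or.inl rfl
    · exact Or.inr ⟨⟨S', hS'', rfl⟩, hne, hnX⟩
  · rintro (rfl | ⟨⟨S', hS', rfl⟩, hne, hnX⟩)
    · exact ⟨⟨S, Or.inl rfl, rfl⟩, h1, h2⟩
    · exact ⟨⟨S', Or.inr hS', rfl⟩, hne, hnX⟩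

lemma base4_card {x y z w : Fin n} {X D : Finset (Fin n)} (hX : X = {x, y, z, w})
    (hc : X.card = 4)
    (hD : D ∈ ({{x}, {y}, {z}, {w}, X \ {x}, X \ {y}, X \ {z}, X \ {w}} :
      Finset (Finset (Fin n)))) : D.card ≠ 2 := by
  have hsd : ∀ a : Fin n, a ∈ X → (X \ {a}).card = 3 := by
    intro a ha
    rw [card_sdiff_of_subset (Finset.singleton_subset_iff.2 ha), hc, Finset.card_singleton]
  have hx : x ∈ X := by simp [hX]
  have hy : y ∈ X := by simp [hX]
  have hz : z ∈ X := by simp [hX]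
  have hw : w ∈ X := by simp [hX]
  simp only [mem_insert, mem_singleton] at hD
  rcases hD with rfl | rfl | rfl | rfl | rfl | rfl | rfl | rfl <;>
    simp [hsd _ hx, hsd _ hy, hsd _ hz, hsd _ hw]

lemma restrictU_base_mem (Ti : UTree n) {X : Finset (Fin n)} (hc : X.card = 4)
    {a : Fin n} (ha : a ∈ X) :
    {a} ∈ famRestrictU Ti.splits X ∧ X \ {a} ∈ famRestrictU Ti.splits X := by
  have hn4 : 4 ≤ n := by
    have := Finset.card_le_univ X
    simpa [hc] using this
  have hsa : ({a} : Finset (Fin n)) ∈ Ti.splits := by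
    rcases Ti.trivial_mem a with h | h
    · exfalso
      have : (({a} : Finset (Fin n))).card = (Finset.univ : Finset (Fin n)).card := by
        rw [h]
      simp only [Finset.card_singleton, Finset.card_fin] at this
      omega
    · exact h
  have hca : ({a} : Finset (Fin n)) ∩ X = {a} :=
    Finset.inter_eq_left.2 (Finset.singleton_subset_iff.2 ha)
  have hcca : (Finset.univ \ {a}) ∩ X = X \ {a} := by
    rw [compl_inter_eq, hca]
  constructor
  · refine mem_famRestrictU'.2 ⟨⟨{a}, hsa, hca⟩, by simp, ?_⟩
    intro h; rw [← h] at hc; simp at hc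
  · refine mem_famRestrictU'.2 ⟨⟨Finset.univ \ {a}, Ti.compl_mem _ hsa, hcca⟩, ?_, ?_⟩
    · intro h
      have : (X \ ({a} : Finset (Fin n))).card = 0 := by rw [h]; simp
      rw [card_sdiff_of_subset (Finset.singleton_subset_iff.2 ha), hc] at this
      simp at this
    · intro h
      have : a ∈ X \ ({a} : Finset (Fin n)) := h.symm ▸ ha
      simp at this

lemma restrictU_mem_cases (Ti : UTree n) {X : Finset (Fin n)} {x y z w : Fin n}
    (hX : X = {x, y, z, w}) (hc : X.card = 4) {D : Finset (Fin n)}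
    (hD : D ∈ famRestrictU Ti.splits X) :
    D.card = 2 ∨ D ∈ ({{x}, {y}, {z}, {w}, X \ {x}, X \ {y}, X \ {z}, X \ {w}} :
      Finset (Finset (Fin n))) := by
  obtain ⟨⟨S, hS, rfl⟩, hne, hnX⟩ := mem_famRestrictU'.1 hD
  have hsub : S ∩ X ⊆ X := inter_subset_right
  have hc4 : (S ∩ X).card ≤ 4 := hc ▸ card_le_card hsub
  have hc1 : 1 ≤ (S ∩ X).card := card_pos.2 (nonempty_iff_ne_empty.2 hne)
  have hcn4 : (S ∩ X).card ≠ 4 := by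
    intro h
    exact hnX (Finset.eq_of_subset_of_card_le hsub (by omega))
  by_cases h2 : (S ∩ X).card = 2
  · exact Or.inl h2
  right
  have : (S ∩ X).card = 1 ∨ (S ∩ X).card = 3 := by omega
  simp only [mem_insert, mem_singleton]
  rcases this with h1 | h1
  · obtain ⟨a, ha⟩ := Finset.card_eq_one.1 h1
    have : a ∈ X := hsub (ha ▸ mem_singleton_self a)
    rw [hX] at this
    simp only [mem_insert, mem_singleton] at this
    rcases this with rfl | rfl | rfl | rfl
    · exact Or.inl ha
    · exact Or.inr (Or.inl ha)
    · exact Or.inr (Or.inr (Or.inl ha))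
    · exact Or.inr (Or.inr (Or.inr (Or.inl ha)))
  · have hd1 : (X \ (S ∩ X)).card = 1 := by
      rw [card_sdiff_of_subset hsub, hc, h1]
    obtain ⟨a, ha⟩ := Finset.card_eq_one.1 hd1
    have haX : a ∈ X := by
      have : a ∈ X \ (S ∩ X) := by rw [ha]; simp
      exact (mem_sdiff.1 this).1
    have hDa : S ∩ X = X \ {a} := by
      rw [← ha, Finset.sdiff_sdiff_eq_self hsub]
    rw [hX] at haX
    simp only [mem_insert, mem_singleton] at haX
    rcases haX with rfl | rfl | rfl | rfl
    · exact Or.inr (Or.inr (Or.inr (Or.inr (Or.inl hDa))))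
    · exact Or.inr (Or.inr (Or.inr (Or.inr (Or.inr (Or.inl hDa)))))
    · exact Or.inr (Or.inr (Or.inr (Or.inr (Or.inr (Or.inr (Or.inl hDa))))))
    · exact Or.inr (Or.inr (Or.inr (Or.inr (Or.inr (Or.inr (Or.inr hDa))))))

lemma restrictU_unresolved (Ti : UTree n) {X : Finset (Fin n)} {x y z w : Fin n}
    (hX : X = {x, y, z, w}) (hc : X.card = 4)
    (hunres : ¬famResolvedU Ti.splits X) :
    famRestrictU Ti.splits X
      = {{x}, {y}, {z}, {w}, X \ {x}, X \ {y}, X \ {z}, X \ {w}} := by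
  have hx : x ∈ X := by simp [hX]
  have hy : y ∈ X := by simp [hX]
  have hz : z ∈ X := by simp [hX]
  have hw : w ∈ X := by simp [hX]
  apply Finset.Subset.antisymm
  · intro D hD
    rcases restrictU_mem_cases Ti hX hc hD with h2 | h
    · exfalso
      obtain ⟨⟨S, hS, rfl⟩, -, -⟩ := mem_famRestrictU'.1 hD
      exact hunres ⟨S, hS, h2⟩
    · exact h
  · intro D hD
    simp only [mem_insert, mem_singleton] at hD
    rcases hD with rfl | rfl | rfl | rfl | rfl | rfl | rfl | rfl
    · exact (restrictU_base_mem Ti hc hx).1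
    · exact (restrictU_base_mem Ti hc hy).1
    · exact (restrictU_base_mem Ti hc hz).1
    · exact (restrictU_base_mem Ti hc hw).1
    · exact (restrictU_base_mem Ti hc hx).2
    · exact (restrictU_base_mem Ti hc hy).2
    · exact (restrictU_base_mem Ti hc hz).2
    · exact (restrictU_base_mem Ti hc hw).2

lemma restrictU_resolved (Ti : UTree n) {X : Finset (Fin n)} {x y z w : Fin n}
    (hX : X = {x, y, z, w}) (hc : X.card = 4)
    (hres : famResolvedU Ti.splits X) :
    ∃ p ⊆ X, p.card = 2 ∧ famRestrictU Ti.splits X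
      = insert p (insert (X \ p)
        {{x}, {y}, {z}, {w}, X \ {x}, X \ {y}, X \ {z}, X \ {w}}) := by
  obtain ⟨S0, hS0, hS02⟩ := hres
  have hx : x ∈ X := by simp [hX]
  have hy : y ∈ X := by simp [hX]
  have hz : z ∈ X := by simp [hX]
  have hw : w ∈ X := by simp [hX]
  refine ⟨S0 ∩ X, inter_subset_right, hS02, ?_⟩
  apply Finset.Subset.antisymm
  · intro D hD
    rcases restrictU_mem_cases Ti hX hc hD with h2 | h
    · -- D is a 2-element member: equal to p or X \ p
      obtain ⟨⟨S, hS, rfl⟩, -, -⟩ := mem_famRestrictU'.1 hD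
      have hDp : S ∩ X = S0 ∩ X ∨ S ∩ X = X \ (S0 ∩ X) := by
        rcases Ti.compat S hS S0 hS0 with h | h | h | h
        · exact Or.inl (Finset.eq_of_subset_of_card_le
            (Finset.inter_subset_inter h (Finset.Subset.refl X)) (by omega))
        · exact Or.inl (Finset.eq_of_subset_of_card_le
            (Finset.inter_subset_inter h (Finset.Subset.refl X)) (by omega)).symm
        · right
          have hdisj : (S ∩ X) ∩ (S0 ∩ X) = ∅ := by
            ext a
            simp only [mem_inter, Finset.notMem_empty, iff_false]
            rintro ⟨⟨haS, -⟩, ⟨haS0, -⟩⟩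
            have : a ∈ S ∩ S0 := mem_inter.2 ⟨haS, haS0⟩
            rw [h] at this; simp at this
          have hsubp : S ∩ X ⊆ X \ (S0 ∩ X) := by
            intro a ha
            rw [mem_sdiff]
            refine ⟨(mem_inter.1 ha).2, fun hcon => ?_⟩
            have : a ∈ (S ∩ X) ∩ (S0 ∩ X) := mem_inter.2 ⟨ha, hcon⟩
            rw [hdisj] at this; simp at this
          refine Finset.eq_of_subset_of_card_le hsubp ?_
          rw [card_sdiff_of_subset inter_subset_right, hc, hS02, h2]
        · right
          have hcup : (S ∩ X) ∪ (S0 ∩ X) = X := by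
            apply Finset.Subset.antisymm
              (union_subset inter_subset_right inter_subset_right)
            intro a ha
            have : a ∈ S ∪ S0 := by rw [h]; simp
            rcases mem_union.1 this with h' | h'
            · exact mem_union_left _ (mem_inter.2 ⟨h', ha⟩)
            · exact mem_union_right _ (mem_inter.2 ⟨h', ha⟩)
          have hdisj : ((S ∩ X) ∩ (S0 ∩ X)).card = 0 := by
            have := Finset.card_union_add_card_inter (S ∩ X) (S0 ∩ X)
            rw [hcup, hc, hS02, h2] at this
            omega
          have hsubp : S ∩ X ⊆ X \ (S0 ∩ X) := by
            intro a ha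
            rw [mem_sdiff]
            refine ⟨(mem_inter.1 ha).2, fun hcon => ?_⟩
            have : a ∈ (S ∩ X) ∩ (S0 ∩ X) := mem_inter.2 ⟨ha, hcon⟩
            rw [Finset.card_eq_zero.1 hdisj] at this; simp at this
          refine Finset.eq_of_subset_of_card_le hsubp ?_
          rw [card_sdiff_of_subset inter_subset_right, hc, hS02, h2]
      rcases hDp with h' | h'
      · rw [h']; exact mem_insert_self _ _
      · rw [h']; exact mem_insert_of_mem (mem_insert_self _ _)
    · exact mem_insert_of_mem (mem_insert_of_mem h)
  · intro D hD
    rcases mem_insert.1 hD with rfl | hD'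
    · refine mem_famRestrictU'.2 ⟨⟨S0, hS0, rfl⟩, ?_, ?_⟩
      · intro h; rw [h] at hS02; simp at hS02
      · intro h
        rw [h, hc] at hS02; omega
    rcases mem_insert.1 hD' with rfl | hD''
    · refine mem_famRestrictU'.2 ⟨⟨Finset.univ \ S0, Ti.compl_mem _ hS0, ?_⟩, ?_, ?_⟩
      · rw [compl_inter_eq]
      · intro h
        have : (X \ (S0 ∩ X)).card = 0 := by rw [h]; simp
        rw [card_sdiff_of_subset inter_subset_right, hc, hS02] at this
        omega
      · intro h
        have : (X \ (S0 ∩ X)).card = X.card := by rw [h]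
        rw [card_sdiff_of_subset inter_subset_right, hc, hS02] at this
        omega
    · simp only [mem_insert, mem_singleton] at hD''
      rcases hD'' with rfl | rfl | rfl | rfl | rfl | rfl | rfl | rfl
      · exact (restrictU_base_mem Ti hc hx).1
      · exact (restrictU_base_mem Ti hc hy).1
      · exact (restrictU_base_mem Ti hc hz).1
      · exact (restrictU_base_mem Ti hc hw).1
      · exact (restrictU_base_mem Ti hc hx).2
      · exact (restrictU_base_mem Ti hc hy).2
      · exact (restrictU_base_mem Ti hc hz).2
      · exact (restrictU_base_mem Ti hc hw).2

lemma insert2_pair_eq {X p q : Finset (Fin n)} {base : Finset (Finset (Fin n))}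
    (hbase : ∀ D ∈ base, D.card ≠ 2) (hqX : q ⊆ X) (hp2 : p.card = 2)
    (hq2 : q.card = 2) (hX4 : X.card = 4) :
    insert p (insert (X \ p) base) = insert q (insert (X \ q) base)
      ↔ p = q ∨ p = X \ q := by
  constructor
  · intro h
    have hp : p ∈ insert q (insert (X \ q) base) := h ▸ mem_insert_self _ _
    rcases mem_insert.1 hp with h' | h'
    · exact Or.inl h'
    rcases mem_insert.1 h' with h' | h'
    · exact Or.inr h'
    · exact absurd hp2 (hbase p h')
  · rintro (rfl | rfl)
    · rfl
    · rw [Finset.sdiff_sdiff_eq_self hqX, Finset.insert_comm]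

lemma insert2_ne_base {X p : Finset (Fin n)} {base : Finset (Finset (Fin n))}
    (hbase : ∀ D ∈ base, D.card ≠ 2) (hp2 : p.card = 2) :
    insert p (insert (X \ p) base) ≠ base := by
  intro h
  have : p ∈ base := h ▸ mem_insert_self _ _
  exact absurd hp2 (hbase p this)

end UnrootedHelpers

section UnrootedStructure

variable {n : ℕ}

lemma restrictU_pull2 (T : UTree n) {X : Finset (Fin n)} {x y z w α β : Fin n}
    (hXeq : X = {x, y, z, w}) (hX4 : X.card = 4)
    (hunres : ¬famResolvedU T.splits X) {B B' : Finset (Fin n)}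
    (hU : (B ∪ B') ∩ X = {α, β}) (hab : α ≠ β) (haX : α ∈ X) (hbX : β ∈ X) :
    famRestrictU (T.pull2Fam B B') X
      = insert {α, β} (insert (X \ {α, β})
          {{x}, {y}, {z}, {w}, X \ {x}, X \ {y}, X \ {z}, X \ {w}}) := by
  have hsub : ({α, β} : Finset (Fin n)) ⊆ X := by
    simp [Finset.insert_subset_iff, haX, hbX]
  have h2 : ({α, β} : Finset (Fin n)).card = 2 := Finset.card_pair hab
  have hc1 : (B ∪ B') ∩ X ≠ ∅ := by rw [hU]; simp
  have hc2 : (B ∪ B') ∩ X ≠ X := by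
    rw [hU]; intro h
    have := hX4; rw [← h, h2] at this; omega
  have hc3 : (Finset.univ \ (B ∪ B')) ∩ X ≠ ∅ := by
    rw [compl_inter_eq, hU]
    intro h
    have : (X \ ({α, β} : Finset (Fin n))).card = 0 := by rw [h]; simp
    rw [card_sdiff_of_subset hsub, hX4, h2] at this
    omega
  have hc4 : (Finset.univ \ (B ∪ B')) ∩ X ≠ X := by
    rw [compl_inter_eq, hU]
    intro h
    have : (X \ ({α, β} : Finset (Fin n))).card = X.card := by rw [h]
    rw [card_sdiff_of_subset hsub, hX4, h2] at this
    omega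
  simp only [UTree.pull2Fam]
  rw [famRestrictU_insert hc1 hc2, famRestrictU_insert hc3 hc4, compl_inter_eq, hU,
    restrictU_unresolved T hXeq hX4 hunres]

lemma restrictU_pull2_diag (T : UTree n) {X : Finset (Fin n)} {x y z w α : Fin n}
    (hXeq : X = {x, y, z, w}) (hX4 : X.card = 4)
    (hunres : ¬famResolvedU T.splits X) {B : Finset (Fin n)} (hI : B ∩ X = {α})
    (haX : α ∈ X)
    (hm2 : X \ {α} ∈ ({{x}, {y}, {z}, {w}, X \ {x}, X \ {y}, X \ {z}, X \ {w}} :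
      Finset (Finset (Fin n))))
    (hm1 : {α} ∈ ({{x}, {y}, {z}, {w}, X \ {x}, X \ {y}, X \ {z}, X \ {w}} :
      Finset (Finset (Fin n)))) :
    famRestrictU (T.pull2Fam B B) X
      = {{x}, {y}, {z}, {w}, X \ {x}, X \ {y}, X \ {z}, X \ {w}} := by
  have hc1 : B ∩ X ≠ ∅ := by rw [hI]; simp
  have hc2 : B ∩ X ≠ X := by
    rw [hI]; intro h
    have := hX4; rw [← h, Finset.card_singleton] at this; omega
  have hc3 : (Finset.univ \ B) ∩ X ≠ ∅ := by
    rw [compl_inter_eq, hI]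
    intro h
    have : (X \ ({α} : Finset (Fin n))).card = 0 := by rw [h]; simp
    rw [card_sdiff_of_subset (Finset.singleton_subset_iff.2 haX), hX4] at this
    simp at this
  have hc4 : (Finset.univ \ B) ∩ X ≠ X := by
    rw [compl_inter_eq, hI]
    intro h
    have : α ∈ X \ ({α} : Finset (Fin n)) := h.symm ▸ haX
    simp at this
  simp only [UTree.pull2Fam, Finset.union_self]
  rw [famRestrictU_insert hc1 hc2, famRestrictU_insert hc3 hc4, compl_inter_eq, hI,
    restrictU_unresolved T hXeq hX4 hunres, Finset.insert_eq_self.2 hm2,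
    Finset.insert_eq_self.2 hm1]

lemma unrooted_structure {T : UTree n} {part : Finset (Finset (Fin n))}
    (hpart : T.IsNodePartition part) {X : Finset (Fin n)} (hX4 : X.card = 4)
    (hunres : ¬famResolvedU T.splits X) {B1 B2 : Finset (Fin n)}
    (hB1 : B1 ∈ part) (hB2 : B2 ∈ part) (h12 : B1 ≠ B2)
    (hres : famResolvedU (T.pull2Fam B1 B2) X) :
    ∃ x y z w : Fin n, ∃ B3 B4 : Finset (Fin n),
      X = {x, y, z, w} ∧ x ≠ y ∧ x ≠ z ∧ x ≠ w ∧ y ≠ z ∧ y ≠ w ∧ z ≠ w ∧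
      B3 ∈ part ∧ B4 ∈ part ∧
      B1 ≠ B3 ∧ B1 ≠ B4 ∧ B2 ≠ B3 ∧ B2 ≠ B4 ∧ B3 ≠ B4 ∧
      B1 ∩ X = {x} ∧ B2 ∩ X = {y} ∧ B3 ∩ X = {z} ∧ B4 ∩ X = {w} := by
  obtain ⟨-, hsplits, hdisj, hcover, -⟩ := hpart
  simp only [UTree.pull2Fam] at hres
  have hres2 : ((B1 ∪ B2) ∩ X).card = 2 := by
    rcases (famResolvedU_pull_iff hunres).1 hres with h | h
    · exact h
    · rw [compl_inter_eq] at h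
      have hle := card_le_card (inter_subset_right : (B1 ∪ B2) ∩ X ⊆ X)
      have := card_sdiff_of_subset (inter_subset_right : (B1 ∪ B2) ∩ X ⊆ X)
      omega
  have hdisj12 : B1 ∩ B2 = ∅ := hdisj B1 hB1 B2 hB2 h12
  have hd12 : Disjoint (B1 ∩ X) (B2 ∩ X) := by
    rw [Finset.disjoint_left]
    intro a ha ha'
    have : a ∈ B1 ∩ B2 := mem_inter.2 ⟨(mem_inter.1 ha).1, (mem_inter.1 ha').1⟩
    rw [hdisj12] at this; simp at this
  have hsum : (B1 ∩ X).card + (B2 ∩ X).card = 2 := by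
    rw [← Finset.card_union_of_disjoint hd12, ← Finset.union_inter_distrib_right]
    exact hres2
  have hn1 : (B1 ∩ X).card ≠ 2 := fun h => hunres ⟨B1, hsplits B1 hB1, h⟩
  have hn2 : (B2 ∩ X).card ≠ 2 := fun h => hunres ⟨B2, hsplits B2 hB2, h⟩
  have hc1 : (B1 ∩ X).card = 1 := by omega
  have hc2 : (B2 ∩ X).card = 1 := by omega
  obtain ⟨x, hI1⟩ := Finset.card_eq_one.1 hc1
  obtain ⟨y, hI2⟩ := Finset.card_eq_one.1 hc2
  have hx1X : x ∈ B1 ∩ X := by rw [hI1]; simp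
  have hy2X : y ∈ B2 ∩ X := by rw [hI2]; simp
  have hxX : x ∈ X := (mem_inter.1 hx1X).2
  have hyX : y ∈ X := (mem_inter.1 hy2X).2
  have hx1 : x ∈ B1 := (mem_inter.1 hx1X).1
  have hy2 : y ∈ B2 := (mem_inter.1 hy2X).1
  have hxy : x ≠ y := by
    rintro rfl
    have : x ∈ B1 ∩ B2 := mem_inter.2 ⟨hx1, hy2⟩
    rw [hdisj12] at this; simp at this
  have hsubxy : ({x, y} : Finset (Fin n)) ⊆ X := by
    simp [Finset.insert_subset_iff, hxX, hyX]
  have hZW : (X \ {x, y}).card = 2 := by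
    rw [card_sdiff_of_subset hsubxy, hX4, Finset.card_pair hxy]
  obtain ⟨z, w, hzw, hZWeq⟩ := Finset.card_eq_two.1 hZW
  have hzmem : z ∈ X \ ({x, y} : Finset (Fin n)) := by rw [hZWeq]; simp
  have hwmem : w ∈ X \ ({x, y} : Finset (Fin n)) := by rw [hZWeq]; simp
  rw [mem_sdiff, mem_insert, mem_singleton] at hzmem hwmem
  push_neg at hzmem hwmem
  obtain ⟨hzX, hzx, hzy⟩ := hzmem
  obtain ⟨hwX, hwx, hwy⟩ := hwmem
  obtain ⟨B3, hB3, hz3⟩ := hcover z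
  obtain ⟨B4, hB4, hw4⟩ := hcover w
  have hblock : ∀ a : Fin n, ∀ B ∈ part, ∀ B' ∈ part, a ∈ B → a ∈ B' → B = B' := by
    intro a B hB B' hB' ha ha'
    by_contra hne
    have : a ∈ B ∩ B' := mem_inter.2 ⟨ha, ha'⟩
    rw [hdisj B hB B' hB' hne] at this; simp at this
  have h13 : B1 ≠ B3 := by
    rintro rfl
    have : z ∈ B1 ∩ X := mem_inter.2 ⟨hz3, hzX⟩
    rw [hI1, mem_singleton] at this
    exact hzx this
  have h23 : B2 ≠ B3 := by
    rintro rfl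
    have : z ∈ B2 ∩ X := mem_inter.2 ⟨hz3, hzX⟩
    rw [hI2, mem_singleton] at this
    exact hzy this
  have h14 : B1 ≠ B4 := by
    rintro rfl
    have : w ∈ B1 ∩ X := mem_inter.2 ⟨hw4, hwX⟩
    rw [hI1, mem_singleton] at this
    exact hwx this
  have h24 : B2 ≠ B4 := by
    rintro rfl
    have : w ∈ B2 ∩ X := mem_inter.2 ⟨hw4, hwX⟩
    rw [hI2, mem_singleton] at this
    exact hwy this
  have hXeq : X = {x, y, z, w} := by
    apply Finset.Subset.antisymm
    · intro a ha
      by_cases h : a ∈ ({x, y} : Finset (Fin n))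
      · simp only [mem_insert, mem_singleton] at h ⊢; tauto
      · have : a ∈ X \ ({x, y} : Finset (Fin n)) := mem_sdiff.2 ⟨ha, h⟩
        rw [hZWeq] at this
        simp only [mem_insert, mem_singleton] at this ⊢; tauto
    · intro a ha
      simp only [mem_insert, mem_singleton] at ha
      rcases ha with rfl | rfl | rfl | rfl <;> assumption
  have hsub34 : ∀ B ∈ part, B ≠ B1 → B ≠ B2 → B ∩ X ⊆ {z, w} := by
    intro B hB hne1 hne2
    intro a ha
    obtain ⟨haB, haX⟩ := mem_inter.1 ha
    rw [hXeq] at haX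
    simp only [mem_insert, mem_singleton] at haX ⊢
    rcases haX with rfl | rfl | rfl | rfl
    · exact absurd (hblock a B hB B1 hB1 haB hx1) hne1
    · exact absurd (hblock a B hB B2 hB2 haB hy2) hne2
    · tauto
    · tauto
  have h34 : B3 ≠ B4 := by
    rintro rfl
    apply hunres
    refine ⟨B3, hsplits B3 hB3, ?_⟩
    have : B3 ∩ X = {z, w} := by
      apply Finset.Subset.antisymm (hsub34 B3 hB3 (Ne.symm h13) (Ne.symm h23))
      intro a ha
      simp only [mem_insert, mem_singleton] at ha
      rcases ha with rfl | rfl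
      · exact mem_inter.2 ⟨hz3, hzX⟩
      · exact mem_inter.2 ⟨hw4, hwX⟩
    rw [this]; exact Finset.card_pair hzw
  have hI3 : B3 ∩ X = {z} := by
    apply Finset.Subset.antisymm
    · intro a ha
      have := hsub34 B3 hB3 (Ne.symm h13) (Ne.symm h23) ha
      simp only [mem_insert, mem_singleton] at this ⊢
      rcases this with rfl | rfl
      · rfl
      · exact absurd (hblock a B3 hB3 B4 hB4 (mem_inter.1 ha).1 hw4) h34
    · intro a ha
      rw [mem_singleton] at ha; subst ha
      exact mem_inter.2 ⟨hz3, hzX⟩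
  have hI4 : B4 ∩ X = {w} := by
    apply Finset.Subset.antisymm
    · intro a ha
      have := hsub34 B4 hB4 (Ne.symm h14) (Ne.symm h24) ha
      simp only [mem_insert, mem_singleton] at this ⊢
      rcases this with rfl | rfl
      · exact absurd (hblock a B4 hB4 B3 hB3 (mem_inter.1 ha).1 hz3) (Ne.symm h34)
      · rfl
    · intro a ha
      rw [mem_singleton] at ha; subst ha
      exact mem_inter.2 ⟨hw4, hwX⟩
  exact ⟨x, y, z, w, B3, B4, hXeq, hxy, Ne.symm hzx, Ne.symm hwx, Ne.symm hzy,
    Ne.symm hwy, hzw, hB3, hB4, h13, h14, h23, h24, h34, hI1, hI2, hI3, hI4⟩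

end UnrootedStructure

set_option maxHeartbeats 3200000 in
/-- **Lemma.**  Let `P` (resp. `Q`) be a profile of fully resolved rooted
(resp. unrooted) phylogenies.  Rooted case: for every tree `T` and every unresolved
node of `T` — a cluster `C` with at least `3` children — there is a child `A` of
`C` such that `f_q ≥ a_q / 2`, where `f_q` and `a_q` count the votes of the profile
for and against the resolutions of the triplets newly resolved by
`Pull-Out(T, A)`.  Unrooted case: for every tree `T` and every unresolved node of
`T` — a node partition with at least `4` blocks — there are two distinct blocks
(neighbors) `B₁ ≠ B₂` with `f_{qr} ≥ a_{qr} / 2` for `Pull-2-Out(T, B₁, B₂)`. -/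
theorem exists_supported_pullout (n k : ℕ) :
    (∀ P : Fin k → RTree n, (∀ i, (P i).FullyResolved) →
      ∀ T : RTree n, ∀ C ∈ T.clusters, 3 ≤ (T.childSet C).card →
        ∃ A ∈ T.childSet C,
          famDisagree P T.clusters (T.pullOutFam C A) ≤
            2 * famAgree P T.clusters (T.pullOutFam C A)) ∧
    ∀ Q : Fin k → UTree n, (∀ i, (Q i).FullyResolved) →
      ∀ T : UTree n, ∀ part : Finset (Finset (Fin n)),
        T.IsNodePartition part → 4 ≤ part.card →
          ∃ B₁ ∈ part, ∃ B₂ ∈ part, B₁ ≠ B₂ ∧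
            famDisagreeU Q T.splits (T.pull2Fam B₁ B₂) ≤
              2 * famAgreeU Q T.splits (T.pull2Fam B₁ B₂) := by
  constructor
  · intro P hP T C hC h3
    by_contra hcon
    push_neg at hcon
    set s := T.childSet C with hs
    have hsne : s.Nonempty := Finset.card_pos.1 (by omega)
    have hkey : ∀ X ∈ triplets n,
        (∑ A ∈ s, if ¬famResolved T.clusters X ∧ famResolved (T.pullOutFam C A) X then
          3 * (Finset.univ.filter fun i : Fin k =>
            famRestrict (P i).clusters X = famRestrict (T.pullOutFam C A) X).card else 0)
        = (∑ A ∈ s, if ¬famResolved T.clusters X ∧ famResolved (T.pullOutFam C A) X then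
            k else 0) := by
      intro X hXt
      have hX3 : X.card = 3 := (Finset.mem_powersetCard.1 hXt).2
      by_cases hex : ∃ A ∈ s, ¬famResolved T.clusters X ∧ famResolved (T.pullOutFam C A) X
      case neg =>
        refine Finset.sum_congr rfl fun A hA => ?_
        rw [if_neg (fun h => hex ⟨A, hA, h⟩), if_neg (fun h => hex ⟨A, hA, h⟩)]
      obtain ⟨A0, hA0, hunres, hres0⟩ := hex
      obtain ⟨x, y, z, Ay, Az, hXeq, hxy, hxz, hyz, hAy, hAz, h0y, h0z, hyzA,
        hxA0, hyAy, hzAz⟩ := rooted_structure hC h3 hX3 hunres hA0 hres0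
      have hxC : x ∈ C := (childSet_mem hA0).2.1.subset hxA0
      have hyC : y ∈ C := (childSet_mem hAy).2.1.subset hyAy
      have hzC : z ∈ C := (childSet_mem hAz).2.1.subset hzAz
      have hynA0 : y ∉ A0 := not_mem_of_inter_empty hyAy (child_disjoint hAy hA0 h0y.symm)
      have hznA0 : z ∉ A0 := not_mem_of_inter_empty hzAz (child_disjoint hAz hA0 h0z.symm)
      have hxnAy : x ∉ Ay := not_mem_of_inter_empty hxA0 (child_disjoint hA0 hAy h0y)
      have hznAy : z ∉ Ay := not_mem_of_inter_empty hzAz (child_disjoint hAz hAy hyzA.symm)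
      have hxnAz : x ∉ Az := not_mem_of_inter_empty hxA0 (child_disjoint hA0 hAz h0z)
      have hynAz : y ∉ Az := not_mem_of_inter_empty hyAy (child_disjoint hAy hAz hyzA)
      have hI0 : (C \ A0) ∩ X = {y, z} := by
        ext a
        simp only [mem_inter, mem_sdiff, hXeq, mem_insert, mem_singleton]
        constructor
        · rintro ⟨⟨haC, hanA⟩, rfl | rfl | rfl⟩
          · exact absurd hxA0 hanA
          · exact Or.inl rfl
          · exact Or.inr rfl
        · rintro (rfl | rfl)
          · exact ⟨⟨hyC, hynA0⟩, Or.inr (Or.inl rfl)⟩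
          · exact ⟨⟨hzC, hznA0⟩, Or.inr (Or.inr rfl)⟩
      have hIy : (C \ Ay) ∩ X = {x, z} := by
        ext a
        simp only [mem_inter, mem_sdiff, hXeq, mem_insert, mem_singleton]
        constructor
        · rintro ⟨⟨haC, hanA⟩, rfl | rfl | rfl⟩
          · exact Or.inl rfl
          · exact absurd hyAy hanA
          · exact Or.inr rfl
        · rintro (rfl | rfl)
          · exact ⟨⟨hxC, hxnAy⟩, Or.inl rfl⟩
          · exact ⟨⟨hzC, hznAy⟩, Or.inr (Or.inr rfl)⟩
      have hIz : (C \ Az) ∩ X = {x, y} := by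
        ext a
        simp only [mem_inter, mem_sdiff, hXeq, mem_insert, mem_singleton]
        constructor
        · rintro ⟨⟨haC, hanA⟩, rfl | rfl | rfl⟩
          · exact Or.inl rfl
          · exact Or.inr rfl
          · exact absurd hzAz hanA
        · rintro (rfl | rfl)
          · exact ⟨⟨hxC, hxnAz⟩, Or.inl rfl⟩
          · exact ⟨⟨hyC, hynAz⟩, Or.inr (Or.inl rfl)⟩
      have hother : ∀ A ∈ s, A ≠ A0 → A ≠ Ay → A ≠ Az → (C \ A) ∩ X = X := by
        intro A hA h1 h2 h3'
        have hxn : x ∉ A := not_mem_of_inter_empty hxA0 (child_disjoint hA0 hA (Ne.symm h1))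
        have hyn : y ∉ A := not_mem_of_inter_empty hyAy (child_disjoint hAy hA (Ne.symm h2))
        have hzn : z ∉ A := not_mem_of_inter_empty hzAz (child_disjoint hAz hA (Ne.symm h3'))
        ext a
        simp only [mem_inter, mem_sdiff, hXeq, mem_insert, mem_singleton]
        constructor
        · rintro ⟨-, ha⟩; exact ha
        · rintro (rfl | rfl | rfl)
          · exact ⟨⟨hxC, hxn⟩, Or.inl rfl⟩
          · exact ⟨⟨hyC, hyn⟩, Or.inr (Or.inl rfl)⟩
          · exact ⟨⟨hzC, hzn⟩, Or.inr (Or.inr rfl)⟩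
      set t : Finset (Finset (Fin n)) := {A0, Ay, Az} with ht
      have hpred : ∀ A ∈ s, ((¬famResolved T.clusters X ∧
          famResolved (T.pullOutFam C A) X) ↔ A ∈ t) := by
        intro A hA
        constructor
        · rintro ⟨-, hresA⟩
          simp only [RTree.pullOutFam] at hresA
          rw [famResolved_insert_iff hunres] at hresA
          by_contra hmem
          simp only [ht, mem_insert, mem_singleton] at hmem
          push_neg at hmem
          rw [hother A hA hmem.1 hmem.2.1 hmem.2.2] at hresA
          omega
        · intro hmem
          refine ⟨hunres, ?_⟩
          simp only [RTree.pullOutFam]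
          rw [famResolved_insert_iff hunres]
          simp only [ht, mem_insert, mem_singleton] at hmem
          rcases hmem with rfl | rfl | rfl
          · rw [hI0]; exact Finset.card_pair hyz
          · rw [hIy]; exact Finset.card_pair hxz
          · rw [hIz]; exact Finset.card_pair hxy
      have hts : t ⊆ s := by
        intro A hA; simp only [ht, mem_insert, mem_singleton] at hA
        rcases hA with rfl | rfl | rfl <;> assumption
      have htrans : ∀ F : Finset (Fin n) → ℕ,
          (∑ A ∈ s, if ¬famResolved T.clusters X ∧
            famResolved (T.pullOutFam C A) X then F A else 0) = ∑ A ∈ t, F A := by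
        intro F
        have step : ∀ A ∈ s, (if ¬famResolved T.clusters X ∧
            famResolved (T.pullOutFam C A) X then F A else 0)
            = (if A ∈ t then F A else 0) := by
          intro A hA
          by_cases h : A ∈ t
          · rw [if_pos h, if_pos ((hpred A hA).2 h)]
          · rw [if_neg h, if_neg (fun hp => h ((hpred A hA).1 hp))]
        rw [Finset.sum_congr rfl step, Finset.sum_ite_mem,
          Finset.inter_eq_right.2 hts]
      rw [htrans, htrans]
      have hA0m : A0 ∉ ({Ay, Az} : Finset (Finset (Fin n))) := by simp [h0y, h0z]
      have hAym : Ay ∉ ({Az} : Finset (Finset (Fin n))) := by simp [hyzA]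
      rw [ht, Finset.sum_insert hA0m, Finset.sum_insert hAym, Finset.sum_singleton,
        Finset.sum_insert hA0m, Finset.sum_insert hAym, Finset.sum_singleton]
      have hbase : famRestrict T.clusters X = {{x}, {y}, {z}, X} :=
        restrict_unresolved3 T.univ_mem T.singleton_mem hXeq hX3 hunres
      have hR0 : famRestrict (T.pullOutFam C A0) X
          = insert {y, z} {{x}, {y}, {z}, X} := by
        simp only [RTree.pullOutFam]
        rw [famRestrict_insert (by rw [hI0]; simp), hI0, hbase]
      have hRy : famRestrict (T.pullOutFam C Ay) X
          = insert {x, z} {{x}, {y}, {z}, X} := by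
        simp only [RTree.pullOutFam]
        rw [famRestrict_insert (by rw [hIy]; simp), hIy, hbase]
      have hRz : famRestrict (T.pullOutFam C Az) X
          = insert {x, y} {{x}, {y}, {z}, X} := by
        simp only [RTree.pullOutFam]
        rw [famRestrict_insert (by rw [hIz]; simp), hIz, hbase]
      have hone : ∀ i : Fin k,
          ((if famRestrict (P i).clusters X = famRestrict (T.pullOutFam C A0) X
            then (1:ℕ) else 0)
          + ((if famRestrict (P i).clusters X = famRestrict (T.pullOutFam C Ay) X
            then (1:ℕ) else 0)
          + (if famRestrict (P i).clusters X = famRestrict (T.pullOutFam C Az) X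
            then (1:ℕ) else 0))) = 1 := by
        intro i
        obtain ⟨p, hpX, hp2, hpi⟩ := restrict_resolved3 (P i) hXeq hX3 (hP i X hXt)
        have hpnb : p ∉ ({{x}, {y}, {z}, X} : Finset (Finset (Fin n))) :=
          fun h => base3_card hXeq hX3 h hp2
        have c0 : (famRestrict (P i).clusters X = famRestrict (T.pullOutFam C A0) X)
            ↔ p = {y, z} := by rw [hpi, hR0, insert_left_cancel hpnb]
        have cy : (famRestrict (P i).clusters X = famRestrict (T.pullOutFam C Ay) X)
            ↔ p = {x, z} := by rw [hpi, hRy, insert_left_cancel hpnb]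
        have cz : (famRestrict (P i).clusters X = famRestrict (T.pullOutFam C Az) X)
            ↔ p = {x, y} := by rw [hpi, hRz, insert_left_cancel hpnb]
        rw [hXeq] at hpX
        rcases pair_subset3 hpX hp2 with hp | hp | hp
        · rw [if_neg (fun h => pair_ne hxy hxz (hp.symm.trans (c0.1 h))),
            if_neg (fun h => pair_ne' hxy.symm hyz (hp.symm.trans (cy.1 h))),
            if_pos (cz.2 hp)]
        · rw [if_neg (fun h => pair_ne hxy hxz (hp.symm.trans (c0.1 h))),
            if_pos (cy.2 hp),
            if_neg (fun h => pair_ne' hxz.symm hyz.symm (hp.symm.trans (cz.1 h)))]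
        · rw [if_pos (c0.2 hp),
            if_neg (fun h => pair_ne hxy.symm hyz (hp.symm.trans (cy.1 h))),
            if_neg (fun h => pair_ne' hxz.symm hyz.symm (hp.symm.trans (cz.1 h)))]
      have hsum1 : (∑ i : Fin k,
          ((if famRestrict (P i).clusters X = famRestrict (T.pullOutFam C A0) X
            then (1:ℕ) else 0)
          + ((if famRestrict (P i).clusters X = famRestrict (T.pullOutFam C Ay) X
            then (1:ℕ) else 0)
          + (if famRestrict (P i).clusters X = famRestrict (T.pullOutFam C Az) X
            then (1:ℕ) else 0)))) = k := by
        rw [Finset.sum_congr rfl (fun i _ => hone i)]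
        simp
      rw [Finset.sum_add_distrib, Finset.sum_add_distrib] at hsum1
      rw [Finset.card_filter, Finset.card_filter, Finset.card_filter]
      omega
    have hglob : ∑ A ∈ s, 3 * famAgree P T.clusters (T.pullOutFam C A)
        = ∑ A ∈ s, k * (famL T.clusters (T.pullOutFam C A)).card := by
      have lhs : ∀ A, 3 * famAgree P T.clusters (T.pullOutFam C A)
          = ∑ X ∈ triplets n, if ¬famResolved T.clusters X ∧
              famResolved (T.pullOutFam C A) X then
              3 * (Finset.univ.filter fun i : Fin k =>
                famRestrict (P i).clusters X
                  = famRestrict (T.pullOutFam C A) X).card else 0 := by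
        intro A
        rw [famAgree, Finset.mul_sum, famL, Finset.sum_filter]
      have rhs : ∀ A, k * (famL T.clusters (T.pullOutFam C A)).card
          = ∑ X ∈ triplets n, if ¬famResolved T.clusters X ∧
              famResolved (T.pullOutFam C A) X then k else 0 := by
        intro A
        rw [famL, ← Finset.sum_filter, Finset.sum_const, smul_eq_mul, mul_comm]
      calc ∑ A ∈ s, 3 * famAgree P T.clusters (T.pullOutFam C A)
          = ∑ A ∈ s, ∑ X ∈ triplets n, if ¬famResolved T.clusters X ∧
              famResolved (T.pullOutFam C A) X then
              3 * (Finset.univ.filter fun i : Fin k =>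
                famRestrict (P i).clusters X
                  = famRestrict (T.pullOutFam C A) X).card else 0 :=
            Finset.sum_congr rfl fun A _ => lhs A
        _ = ∑ X ∈ triplets n, ∑ A ∈ s, if ¬famResolved T.clusters X ∧
              famResolved (T.pullOutFam C A) X then
              3 * (Finset.univ.filter fun i : Fin k =>
                famRestrict (P i).clusters X
                  = famRestrict (T.pullOutFam C A) X).card else 0 :=
            Finset.sum_comm
        _ = ∑ X ∈ triplets n, ∑ A ∈ s, if ¬famResolved T.clusters X ∧
              famResolved (T.pullOutFam C A) X then k else 0 :=
            Finset.sum_congr rfl hkey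
        _ = ∑ A ∈ s, ∑ X ∈ triplets n, if ¬famResolved T.clusters X ∧
              famResolved (T.pullOutFam C A) X then k else 0 := Finset.sum_comm
        _ = ∑ A ∈ s, k * (famL T.clusters (T.pullOutFam C A)).card :=
            Finset.sum_congr rfl fun A _ => (rhs A).symm
    have hfa : ∀ A ∈ s, famAgree P T.clusters (T.pullOutFam C A)
        + famDisagree P T.clusters (T.pullOutFam C A)
        = k * (famL T.clusters (T.pullOutFam C A)).card := by
      intro A _
      rw [famAgree, famDisagree, ← Finset.sum_add_distrib]
      have step : ∀ X ∈ famL T.clusters (T.pullOutFam C A),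
          (Finset.univ.filter fun i : Fin k =>
            famRestrict (P i).clusters X = famRestrict (T.pullOutFam C A) X).card
          + (Finset.univ.filter fun i : Fin k =>
            famRestrict (P i).clusters X ≠ famRestrict (T.pullOutFam C A) X).card
          = k := by
        intro X _
        rw [Finset.card_filter_add_card_filter_not, Finset.card_fin]
      rw [Finset.sum_congr rfl step, Finset.sum_const, smul_eq_mul, mul_comm]
    have hstrict : ∑ A ∈ s, 2 * famAgree P T.clusters (T.pullOutFam C A)
        < ∑ A ∈ s, famDisagree P T.clusters (T.pullOutFam C A) :=
      Finset.sum_lt_sum_of_nonempty hsne fun A hA => hcon A hA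
    have hsplit : ∑ A ∈ s, (famAgree P T.clusters (T.pullOutFam C A)
        + famDisagree P T.clusters (T.pullOutFam C A))
        = ∑ A ∈ s, famAgree P T.clusters (T.pullOutFam C A)
        + ∑ A ∈ s, famDisagree P T.clusters (T.pullOutFam C A) :=
      Finset.sum_add_distrib
    have h1 : ∑ A ∈ s, (famAgree P T.clusters (T.pullOutFam C A)
        + famDisagree P T.clusters (T.pullOutFam C A))
        = ∑ A ∈ s, k * (famL T.clusters (T.pullOutFam C A)).card :=
      Finset.sum_congr rfl hfa
    rw [← Finset.mul_sum] at hglob hstrict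
    omega
  · intro Q hQ T part hpart hp4
    by_contra hcon
    push_neg at hcon
    set s := part.offDiag with hs
    have hsne : s.Nonempty := by
      obtain ⟨a, ha, b, hb, hab⟩ := Finset.one_lt_card.1 (by omega : 1 < part.card)
      exact ⟨(a, b), Finset.mem_offDiag.2 ⟨ha, hb, hab⟩⟩
    have hcon' : ∀ p ∈ s, 2 * famAgreeU Q T.splits (T.pull2Fam p.1 p.2)
        < famDisagreeU Q T.splits (T.pull2Fam p.1 p.2) := by
      intro p hp
      obtain ⟨h1, h2, h3⟩ := Finset.mem_offDiag.1 hp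
      exact hcon p.1 h1 p.2 h2 h3
    have hkey : ∀ X ∈ quartets n,
        (∑ p ∈ s, if ¬famResolvedU T.splits X ∧
            famResolvedU (T.pull2Fam p.1 p.2) X then
          3 * (Finset.univ.filter fun i : Fin k =>
            famRestrictU (Q i).splits X
              = famRestrictU (T.pull2Fam p.1 p.2) X).card else 0)
        = (∑ p ∈ s, if ¬famResolvedU T.splits X ∧
            famResolvedU (T.pull2Fam p.1 p.2) X then k else 0) := by
      intro X hXt
      have hX4 : X.card = 4 := (Finset.mem_powersetCard.1 hXt).2
      by_cases hex : ∃ p ∈ s, ¬famResolvedU T.splits X ∧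
          famResolvedU (T.pull2Fam p.1 p.2) X
      case neg =>
        refine Finset.sum_congr rfl fun p hp => ?_
        rw [if_neg (fun h => hex ⟨p, hp, h⟩), if_neg (fun h => hex ⟨p, hp, h⟩)]
      obtain ⟨⟨B1, B2⟩, hp12, hunres, hres0⟩ := hex
      obtain ⟨hB1, hB2, h12⟩ := Finset.mem_offDiag.1 hp12
      obtain ⟨x, y, z, w, B3, B4, hXeq, hxy, hxz, hxw, hyz, hyw, hzw,
        hB3, hB4, h13, h14, h23, h24, h34, hI1, hI2, hI3, hI4⟩ :=
        unrooted_structure hpart hX4 hunres hB1 hB2 h12 hres0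
      obtain ⟨-, hsplits, hdisj, hcover, -⟩ := hpart
      set fs : Finset (Finset (Fin n)) := {B1, B2, B3, B4} with hfs
      have hxX : x ∈ X := by simp [hXeq]
      have hyX : y ∈ X := by simp [hXeq]
      have hzX : z ∈ X := by simp [hXeq]
      have hwX : w ∈ X := by simp [hXeq]
      have hx1 : x ∈ B1 := by
        have : x ∈ B1 ∩ X := by rw [hI1]; simp
        exact (mem_inter.1 this).1
      have hy2 : y ∈ B2 := by
        have : y ∈ B2 ∩ X := by rw [hI2]; simp
        exact (mem_inter.1 this).1
      have hz3 : z ∈ B3 := by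
        have : z ∈ B3 ∩ X := by rw [hI3]; simp
        exact (mem_inter.1 this).1
      have hw4 : w ∈ B4 := by
        have : w ∈ B4 ∩ X := by rw [hI4]; simp
        exact (mem_inter.1 this).1
      have hBcard : ∀ B ∈ part, (B ∩ X).card = if B ∈ fs then 1 else 0 := by
        intro B hB
        by_cases hBfs : B ∈ fs
        · rw [if_pos hBfs]
          simp only [hfs, mem_insert, mem_singleton] at hBfs
          rcases hBfs with rfl | rfl | rfl | rfl
          · rw [hI1]; simp
          · rw [hI2]; simp
          · rw [hI3]; simp
          · rw [hI4]; simp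
        · rw [if_neg hBfs, Finset.card_eq_zero]
          ext a
          simp only [mem_inter, Finset.notMem_empty, iff_false]
          rintro ⟨haB, haX⟩
          rw [hXeq] at haX
          simp only [mem_insert, mem_singleton] at haX
          rcases haX with rfl | rfl | rfl | rfl
          · have : B = B1 := by
              by_contra hne
              have h0 := hdisj B hB B1 hB1 hne
              have : a ∈ B ∩ B1 := mem_inter.2 ⟨haB, hx1⟩
              rw [h0] at this; simp at this
            exact hBfs (by simp [hfs, this])
          · have : B = B2 := by
              by_contra hne
              have h0 := hdisj B hB B2 hB2 hne
              have : a ∈ B ∩ B2 := mem_inter.2 ⟨haB, hy2⟩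
              rw [h0] at this; simp at this
            exact hBfs (by simp [hfs, this])
          · have : B = B3 := by
              by_contra hne
              have h0 := hdisj B hB B3 hB3 hne
              have : a ∈ B ∩ B3 := mem_inter.2 ⟨haB, hz3⟩
              rw [h0] at this; simp at this
            exact hBfs (by simp [hfs, this])
          · have : B = B4 := by
              by_contra hne
              have h0 := hdisj B hB B4 hB4 hne
              have : a ∈ B ∩ B4 := mem_inter.2 ⟨haB, hw4⟩
              rw [h0] at this; simp at this
            exact hBfs (by simp [hfs, this])
      have hpred : ∀ p ∈ s, ((¬famResolvedU T.splits X ∧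
          famResolvedU (T.pull2Fam p.1 p.2) X) ↔ p ∈ fs.offDiag) := by
        rintro ⟨B, B'⟩ hp
        obtain ⟨hBp, hBp', hBB'⟩ := Finset.mem_offDiag.1 hp
        have hdisjBB : Disjoint (B ∩ X) (B' ∩ X) := by
          rw [Finset.disjoint_left]
          intro a ha ha'
          have h0 := hdisj B hBp B' hBp' hBB'
          have : a ∈ B ∩ B' := mem_inter.2 ⟨(mem_inter.1 ha).1, (mem_inter.1 ha').1⟩
          rw [h0] at this; simp at this
        have hcardU : ((B ∪ B') ∩ X).card = (B ∩ X).card + (B' ∩ X).card := by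
          rw [Finset.union_inter_distrib_right, Finset.card_union_of_disjoint hdisjBB]
        constructor
        · rintro ⟨-, hresP⟩
          simp only [UTree.pull2Fam] at hresP
          have h2 : ((B ∪ B') ∩ X).card = 2 := by
            rcases (famResolvedU_pull_iff hunres).1 hresP with h | h
            · exact h
            · rw [compl_inter_eq] at h
              have hle := card_le_card (inter_subset_right : (B ∪ B') ∩ X ⊆ X)
              have := card_sdiff_of_subset (inter_subset_right : (B ∪ B') ∩ X ⊆ X)
              omega
          have hc2 : (if B ∈ fs then 1 else 0) + (if B' ∈ fs then 1 else 0) = 2 := by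
            rw [← hBcard B hBp, ← hBcard B' hBp', ← hcardU]
            exact h2
          have hf1 : B ∈ fs := by
            by_contra hf
            rw [if_neg hf] at hc2
            by_cases hf' : B' ∈ fs
            · rw [if_pos hf'] at hc2; omega
            · rw [if_neg hf'] at hc2; omega
          have hf2 : B' ∈ fs := by
            by_contra hf
            rw [if_neg hf] at hc2
            rw [if_pos hf1] at hc2; omega
          exact Finset.mem_offDiag.2 ⟨hf1, hf2, hBB'⟩
        · intro hmem
          obtain ⟨hf1, hf2, -⟩ := Finset.mem_offDiag.1 hmem
          refine ⟨hunres, ?_⟩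
          simp only [UTree.pull2Fam]
          rw [famResolvedU_pull_iff hunres]
          left
          rw [hcardU, hBcard B hBp, hBcard B' hBp', if_pos hf1, if_pos hf2]
      have hts : fs.offDiag ⊆ s := by
        intro p hp
        obtain ⟨h1, h2, h3⟩ := Finset.mem_offDiag.1 hp
        have hsubfs : fs ⊆ part := by
          intro B hB; simp only [hfs, mem_insert, mem_singleton] at hB
          rcases hB with rfl | rfl | rfl | rfl <;> assumption
        exact Finset.mem_offDiag.2 ⟨hsubfs h1, hsubfs h2, h3⟩
      have htrans : ∀ F : Finset (Fin n) × Finset (Fin n) → ℕ,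
          (∑ p ∈ s, if ¬famResolvedU T.splits X ∧
            famResolvedU (T.pull2Fam p.1 p.2) X then F p else 0)
          = ∑ p ∈ fs.offDiag, F p := by
        intro F
        have step : ∀ p ∈ s, (if ¬famResolvedU T.splits X ∧
            famResolvedU (T.pull2Fam p.1 p.2) X then F p else 0)
            = (if p ∈ fs.offDiag then F p else 0) := by
          intro p hp
          by_cases h : p ∈ fs.offDiag
          · rw [if_pos h, if_pos ((hpred p hp).2 h)]
          · rw [if_neg h, if_neg (fun hh => h ((hpred p hp).1 hh))]
        rw [Finset.sum_congr rfl step, Finset.sum_ite_mem,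
          Finset.inter_eq_right.2 hts]
      rw [htrans, htrans]
      have hbase2 : ∀ D ∈ ({{x}, {y}, {z}, {w}, X \ {x}, X \ {y}, X \ {z}, X \ {w}} :
          Finset (Finset (Fin n))), D.card ≠ 2 := fun D hD => base4_card hXeq hX4 hD
      -- sdiff facts
      have hDxy : X \ {x, y} = {z, w} := by
        rw [hXeq]; ext e
        simp only [mem_sdiff, mem_insert, mem_singleton]
        constructor
        · rintro ⟨rfl | rfl | rfl | rfl, h2⟩ <;> tauto
        · rintro (rfl | rfl) <;> exact ⟨by tauto, by tauto⟩
      have hDxz : X \ {x, z} = {y, w} := by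
        rw [hXeq]; ext e
        simp only [mem_sdiff, mem_insert, mem_singleton]
        constructor
        · rintro ⟨rfl | rfl | rfl | rfl, h2⟩ <;> tauto
        · rintro (rfl | rfl) <;> exact ⟨by tauto, by tauto⟩
      have hDxw : X \ {x, w} = {y, z} := by
        rw [hXeq]; ext e
        simp only [mem_sdiff, mem_insert, mem_singleton]
        constructor
        · rintro ⟨rfl | rfl | rfl | rfl, h2⟩ <;> tauto
        · rintro (rfl | rfl) <;> exact ⟨by tauto, by tauto⟩
      have hDyz : X \ {y, z} = {x, w} := by
        rw [hXeq]; ext e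
        simp only [mem_sdiff, mem_insert, mem_singleton]
        constructor
        · rintro ⟨rfl | rfl | rfl | rfl, h2⟩ <;> tauto
        · rintro (rfl | rfl) <;> exact ⟨by tauto, by tauto⟩
      have hDyw : X \ {y, w} = {x, z} := by
        rw [hXeq]; ext e
        simp only [mem_sdiff, mem_insert, mem_singleton]
        constructor
        · rintro ⟨rfl | rfl | rfl | rfl, h2⟩ <;> tauto
        · rintro (rfl | rfl) <;> exact ⟨by tauto, by tauto⟩
      have hDzw : X \ {z, w} = {x, y} := by
        rw [hXeq]; ext e
        simp only [mem_sdiff, mem_insert, mem_singleton]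
        constructor
        · rintro ⟨rfl | rfl | rfl | rfl, h2⟩ <;> tauto
        · rintro (rfl | rfl) <;> exact ⟨by tauto, by tauto⟩
      -- union-intersection facts
      have hU12 : (B1 ∪ B2) ∩ X = {x, y} := by
        rw [Finset.union_inter_distrib_right, hI1, hI2, ← Finset.insert_eq]
      have hU21 : (B2 ∪ B1) ∩ X = {y, x} := by
        rw [Finset.union_inter_distrib_right, hI2, hI1, ← Finset.insert_eq]
      have hU13 : (B1 ∪ B3) ∩ X = {x, z} := by
        rw [Finset.union_inter_distrib_right, hI1, hI3, ← Finset.insert_eq]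
      have hU31 : (B3 ∪ B1) ∩ X = {z, x} := by
        rw [Finset.union_inter_distrib_right, hI3, hI1, ← Finset.insert_eq]
      have hU14 : (B1 ∪ B4) ∩ X = {x, w} := by
        rw [Finset.union_inter_distrib_right, hI1, hI4, ← Finset.insert_eq]
      have hU41 : (B4 ∪ B1) ∩ X = {w, x} := by
        rw [Finset.union_inter_distrib_right, hI4, hI1, ← Finset.insert_eq]
      have hU23 : (B2 ∪ B3) ∩ X = {y, z} := by
        rw [Finset.union_inter_distrib_right, hI2, hI3, ← Finset.insert_eq]
      have hU32 : (B3 ∪ B2) ∩ X = {z, y} := by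
        rw [Finset.union_inter_distrib_right, hI3, hI2, ← Finset.insert_eq]
      have hU24 : (B2 ∪ B4) ∩ X = {y, w} := by
        rw [Finset.union_inter_distrib_right, hI2, hI4, ← Finset.insert_eq]
      have hU42 : (B4 ∪ B2) ∩ X = {w, y} := by
        rw [Finset.union_inter_distrib_right, hI4, hI2, ← Finset.insert_eq]
      have hU34 : (B3 ∪ B4) ∩ X = {z, w} := by
        rw [Finset.union_inter_distrib_right, hI3, hI4, ← Finset.insert_eq]
      have hU43 : (B4 ∪ B3) ∩ X = {w, z} := by
        rw [Finset.union_inter_distrib_right, hI4, hI3, ← Finset.insert_eq]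
      -- restriction computations
      have e11 := restrictU_pull2_diag T hXeq hX4 hunres hI1 hxX (by simp) (by simp)
      have e22 := restrictU_pull2_diag T hXeq hX4 hunres hI2 hyX (by simp) (by simp)
      have e33 := restrictU_pull2_diag T hXeq hX4 hunres hI3 hzX (by simp) (by simp)
      have e44 := restrictU_pull2_diag T hXeq hX4 hunres hI4 hwX (by simp) (by simp)
      have e12 := restrictU_pull2 T hXeq hX4 hunres hU12 hxy hxX hyX
      have e21 := restrictU_pull2 T hXeq hX4 hunres hU21 hxy.symm hyX hxX
      have e13 := restrictU_pull2 T hXeq hX4 hunres hU13 hxz hxX hzX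
      have e31 := restrictU_pull2 T hXeq hX4 hunres hU31 hxz.symm hzX hxX
      have e14 := restrictU_pull2 T hXeq hX4 hunres hU14 hxw hxX hwX
      have e41 := restrictU_pull2 T hXeq hX4 hunres hU41 hxw.symm hwX hxX
      have e23 := restrictU_pull2 T hXeq hX4 hunres hU23 hyz hyX hzX
      have e32 := restrictU_pull2 T hXeq hX4 hunres hU32 hyz.symm hzX hyX
      have e24 := restrictU_pull2 T hXeq hX4 hunres hU24 hyw hyX hwX
      have e42 := restrictU_pull2 T hXeq hX4 hunres hU42 hyw.symm hwX hyX
      have e34 := restrictU_pull2 T hXeq hX4 hunres hU34 hzw hzX hwX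
      have e43 := restrictU_pull2 T hXeq hX4 hunres hU43 hzw.symm hwX hzX
      have nm1 : B1 ∉ ({B2, B3, B4} : Finset (Finset (Fin n))) := by
        simp [h12, h13, h14]
      have nm2 : B2 ∉ ({B3, B4} : Finset (Finset (Fin n))) := by simp [h23, h24]
      have nm3 : B3 ∉ ({B4} : Finset (Finset (Fin n))) := by simp [h34]
      have hfscard : fs.card = 4 := by
        rw [hfs, Finset.card_insert_of_notMem nm1, Finset.card_insert_of_notMem nm2,
          Finset.card_insert_of_notMem nm3, Finset.card_singleton]
      have htcard : fs.offDiag.card = 12 := by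
        rw [Finset.offDiag_card, hfscard]
      have hone : ∀ i : Fin k,
          (∑ p ∈ fs.offDiag, if famRestrictU (Q i).splits X
            = famRestrictU (T.pull2Fam p.1 p.2) X then (1:ℕ) else 0) = 4 := by
        intro i
        obtain ⟨p, hpX, hp2, hpi⟩ := restrictU_resolved (Q i) hXeq hX4 (hQ i X hXt)
        have hdiag0 : ∀ q ∈ fs.diag, (if famRestrictU (Q i).splits X
            = famRestrictU (T.pull2Fam q.1 q.2) X then (1:ℕ) else 0) = 0 := by
          rintro ⟨B, B'⟩ hq
          obtain ⟨hB, hBe⟩ := Finset.mem_diag.1 hq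
          simp only at hBe
          subst hBe
          have hdre : famRestrictU (T.pull2Fam B B) X
              = ({{x}, {y}, {z}, {w}, X \ {x}, X \ {y}, X \ {z}, X \ {w}} :
                Finset (Finset (Fin n))) := by
            simp only [hfs, mem_insert, mem_singleton] at hB
            rcases hB with rfl | rfl | rfl | rfl
            · exact e11
            · exact e22
            · exact e33
            · exact e44
          rw [if_neg (fun hcontra => insert2_ne_base hbase2 hp2
            (by rw [hpi, hdre] at hcontra; exact hcontra))]
        have hext : (∑ p ∈ fs.offDiag, if famRestrictU (Q i).splits X
            = famRestrictU (T.pull2Fam p.1 p.2) X then (1:ℕ) else 0)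
            = ∑ q ∈ fs ×ˢ fs, if famRestrictU (Q i).splits X
            = famRestrictU (T.pull2Fam q.1 q.2) X then (1:ℕ) else 0 := by
          rw [← Finset.diag_union_offDiag fs,
            Finset.sum_union (Finset.disjoint_diag_offDiag fs),
            Finset.sum_eq_zero hdiag0, zero_add]
        rw [hext, Finset.sum_product]
        have c11 : (famRestrictU (Q i).splits X
            = famRestrictU (T.pull2Fam B1 B1) X) ↔ False := by
          rw [hpi, e11]
          exact iff_false_intro (insert2_ne_base hbase2 hp2)
        have c22 : (famRestrictU (Q i).splits X
            = famRestrictU (T.pull2Fam B2 B2) X) ↔ False := by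
          rw [hpi, e22]
          exact iff_false_intro (insert2_ne_base hbase2 hp2)
        have c33 : (famRestrictU (Q i).splits X
            = famRestrictU (T.pull2Fam B3 B3) X) ↔ False := by
          rw [hpi, e33]
          exact iff_false_intro (insert2_ne_base hbase2 hp2)
        have c44 : (famRestrictU (Q i).splits X
            = famRestrictU (T.pull2Fam B4 B4) X) ↔ False := by
          rw [hpi, e44]
          exact iff_false_intro (insert2_ne_base hbase2 hp2)
        have c12 : (famRestrictU (Q i).splits X
            = famRestrictU (T.pull2Fam B1 B2) X) ↔ (p = {x, y} ∨ p = {z, w}) := by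
          rw [hpi, e12, insert2_pair_eq hbase2
            (by simp [Finset.insert_subset_iff, hxX, hyX]) hp2
            (Finset.card_pair hxy) hX4, hDxy]
        have c21 : (famRestrictU (Q i).splits X
            = famRestrictU (T.pull2Fam B2 B1) X) ↔ (p = {x, y} ∨ p = {z, w}) := by
          rw [hpi, e21, insert2_pair_eq hbase2
            (by simp [Finset.insert_subset_iff, hxX, hyX]) hp2
            (Finset.card_pair hxy.symm) hX4, Finset.pair_comm y x, hDxy]
        have c13 : (famRestrictU (Q i).splits X
            = famRestrictU (T.pull2Fam B1 B3) X) ↔ (p = {x, z} ∨ p = {y, w}) := by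
          rw [hpi, e13, insert2_pair_eq hbase2
            (by simp [Finset.insert_subset_iff, hxX, hzX]) hp2
            (Finset.card_pair hxz) hX4, hDxz]
        have c31 : (famRestrictU (Q i).splits X
            = famRestrictU (T.pull2Fam B3 B1) X) ↔ (p = {x, z} ∨ p = {y, w}) := by
          rw [hpi, e31, insert2_pair_eq hbase2
            (by simp [Finset.insert_subset_iff, hxX, hzX]) hp2
            (Finset.card_pair hxz.symm) hX4, Finset.pair_comm z x, hDxz]
        have c14 : (famRestrictU (Q i).splits X
            = famRestrictU (T.pull2Fam B1 B4) X) ↔ (p = {x, w} ∨ p = {y, z}) := by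
          rw [hpi, e14, insert2_pair_eq hbase2
            (by simp [Finset.insert_subset_iff, hxX, hwX]) hp2
            (Finset.card_pair hxw) hX4, hDxw]
        have c41 : (famRestrictU (Q i).splits X
            = famRestrictU (T.pull2Fam B4 B1) X) ↔ (p = {x, w} ∨ p = {y, z}) := by
          rw [hpi, e41, insert2_pair_eq hbase2
            (by simp [Finset.insert_subset_iff, hxX, hwX]) hp2
            (Finset.card_pair hxw.symm) hX4, Finset.pair_comm w x, hDxw]
        have c23 : (famRestrictU (Q i).splits X
            = famRestrictU (T.pull2Fam B2 B3) X) ↔ (p = {y, z} ∨ p = {x, w}) := by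
          rw [hpi, e23, insert2_pair_eq hbase2
            (by simp [Finset.insert_subset_iff, hyX, hzX]) hp2
            (Finset.card_pair hyz) hX4, hDyz]
        have c32 : (famRestrictU (Q i).splits X
            = famRestrictU (T.pull2Fam B3 B2) X) ↔ (p = {y, z} ∨ p = {x, w}) := by
          rw [hpi, e32, insert2_pair_eq hbase2
            (by simp [Finset.insert_subset_iff, hyX, hzX]) hp2
            (Finset.card_pair hyz.symm) hX4, Finset.pair_comm z y, hDyz]
        have c24 : (famRestrictU (Q i).splits X
            = famRestrictU (T.pull2Fam B2 B4) X) ↔ (p = {y, w} ∨ p = {x, z}) := by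
          rw [hpi, e24, insert2_pair_eq hbase2
            (by simp [Finset.insert_subset_iff, hyX, hwX]) hp2
            (Finset.card_pair hyw) hX4, hDyw]
        have c42 : (famRestrictU (Q i).splits X
            = famRestrictU (T.pull2Fam B4 B2) X) ↔ (p = {y, w} ∨ p = {x, z}) := by
          rw [hpi, e42, insert2_pair_eq hbase2
            (by simp [Finset.insert_subset_iff, hyX, hwX]) hp2
            (Finset.card_pair hyw.symm) hX4, Finset.pair_comm w y, hDyw]
        have c34 : (famRestrictU (Q i).splits X
            = famRestrictU (T.pull2Fam B3 B4) X) ↔ (p = {z, w} ∨ p = {x, y}) := by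
          rw [hpi, e34, insert2_pair_eq hbase2
            (by simp [Finset.insert_subset_iff, hzX, hwX]) hp2
            (Finset.card_pair hzw) hX4, hDzw]
        have c43 : (famRestrictU (Q i).splits X
            = famRestrictU (T.pull2Fam B4 B3) X) ↔ (p = {z, w} ∨ p = {x, y}) := by
          rw [hpi, e43, insert2_pair_eq hbase2
            (by simp [Finset.insert_subset_iff, hzX, hwX]) hp2
            (Finset.card_pair hzw.symm) hX4, Finset.pair_comm w z, hDzw]
        rw [hfs]
        simp only [Finset.sum_insert nm1, Finset.sum_insert nm2,
          Finset.sum_insert nm3, Finset.sum_singleton]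
        simp only [c11, c22, c33, c44, c12, c21, c13, c31, c14, c41, c23, c32,
          c24, c42, c34, c43, if_false]
        have hpsub : p ⊆ ({x, y, z, w} : Finset (Fin n)) := hXeq ▸ hpX
        rcases pair_subset4 hpsub hp2 with hp | hp | hp | hp | hp | hp <;> subst hp <;>
          simp [fpair_eq, hxy, hxz, hxw, hyz, hyw, hzw, hxy.symm, hxz.symm,
            hxw.symm, hyz.symm, hyw.symm, hzw.symm]
      calc (∑ p ∈ fs.offDiag,
            3 * (Finset.univ.filter fun i : Fin k => famRestrictU (Q i).splits X
              = famRestrictU (T.pull2Fam p.1 p.2) X).card)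
          = 3 * ∑ p ∈ fs.offDiag,
            (Finset.univ.filter fun i : Fin k => famRestrictU (Q i).splits X
              = famRestrictU (T.pull2Fam p.1 p.2) X).card := (Finset.mul_sum _ _ _).symm
        _ = 3 * ∑ p ∈ fs.offDiag, ∑ i : Fin k,
            (if famRestrictU (Q i).splits X
              = famRestrictU (T.pull2Fam p.1 p.2) X then (1:ℕ) else 0) := by
            rw [Finset.sum_congr rfl fun p _ => Finset.card_filter _ _]
        _ = 3 * ∑ i : Fin k, ∑ p ∈ fs.offDiag,
            (if famRestrictU (Q i).splits X
              = famRestrictU (T.pull2Fam p.1 p.2) X then (1:ℕ) else 0) := by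
            rw [Finset.sum_comm]
        _ = 3 * ∑ i : Fin k, 4 := by rw [Finset.sum_congr rfl fun i _ => hone i]
        _ = 12 * k := by simp [Finset.sum_const, Finset.card_univ, mul_comm]; ring
        _ = ∑ p ∈ fs.offDiag, k := by
            rw [Finset.sum_const, htcard, smul_eq_mul]
    have hglob : ∑ p ∈ s, 3 * famAgreeU Q T.splits (T.pull2Fam p.1 p.2)
        = ∑ p ∈ s, k * (famLU T.splits (T.pull2Fam p.1 p.2)).card := by
      have lhs : ∀ p : Finset (Fin n) × Finset (Fin n),
          3 * famAgreeU Q T.splits (T.pull2Fam p.1 p.2)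
          = ∑ X ∈ quartets n, if ¬famResolvedU T.splits X ∧
              famResolvedU (T.pull2Fam p.1 p.2) X then
              3 * (Finset.univ.filter fun i : Fin k =>
                famRestrictU (Q i).splits X
                  = famRestrictU (T.pull2Fam p.1 p.2) X).card else 0 := by
        intro p
        rw [famAgreeU, Finset.mul_sum, famLU, Finset.sum_filter]
      have rhs : ∀ p : Finset (Fin n) × Finset (Fin n),
          k * (famLU T.splits (T.pull2Fam p.1 p.2)).card
          = ∑ X ∈ quartets n, if ¬famResolvedU T.splits X ∧
              famResolvedU (T.pull2Fam p.1 p.2) X then k else 0 := by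
        intro p
        rw [famLU, ← Finset.sum_filter, Finset.sum_const, smul_eq_mul, mul_comm]
      calc ∑ p ∈ s, 3 * famAgreeU Q T.splits (T.pull2Fam p.1 p.2)
          = ∑ p ∈ s, ∑ X ∈ quartets n, if ¬famResolvedU T.splits X ∧
              famResolvedU (T.pull2Fam p.1 p.2) X then
              3 * (Finset.univ.filter fun i : Fin k =>
                famRestrictU (Q i).splits X
                  = famRestrictU (T.pull2Fam p.1 p.2) X).card else 0 :=
            Finset.sum_congr rfl fun p _ => lhs p
        _ = ∑ X ∈ quartets n, ∑ p ∈ s, if ¬famResolvedU T.splits X ∧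
              famResolvedU (T.pull2Fam p.1 p.2) X then
              3 * (Finset.univ.filter fun i : Fin k =>
                famRestrictU (Q i).splits X
                  = famRestrictU (T.pull2Fam p.1 p.2) X).card else 0 :=
            Finset.sum_comm
        _ = ∑ X ∈ quartets n, ∑ p ∈ s, if ¬famResolvedU T.splits X ∧
              famResolvedU (T.pull2Fam p.1 p.2) X then k else 0 :=
            Finset.sum_congr rfl hkey
        _ = ∑ p ∈ s, ∑ X ∈ quartets n, if ¬famResolvedU T.splits X ∧
              famResolvedU (T.pull2Fam p.1 p.2) X then k else 0 := Finset.sum_comm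
        _ = ∑ p ∈ s, k * (famLU T.splits (T.pull2Fam p.1 p.2)).card :=
            Finset.sum_congr rfl fun p _ => (rhs p).symm
    have hfa : ∀ p ∈ s, famAgreeU Q T.splits (T.pull2Fam p.1 p.2)
        + famDisagreeU Q T.splits (T.pull2Fam p.1 p.2)
        = k * (famLU T.splits (T.pull2Fam p.1 p.2)).card := by
      intro p _
      rw [famAgreeU, famDisagreeU, ← Finset.sum_add_distrib]
      have step : ∀ X ∈ famLU T.splits (T.pull2Fam p.1 p.2),
          (Finset.univ.filter fun i : Fin k =>
            famRestrictU (Q i).splits X = famRestrictU (T.pull2Fam p.1 p.2) X).card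
          + (Finset.univ.filter fun i : Fin k =>
            famRestrictU (Q i).splits X ≠ famRestrictU (T.pull2Fam p.1 p.2) X).card
          = k := by
        intro X _
        rw [Finset.card_filter_add_card_filter_not, Finset.card_fin]
      rw [Finset.sum_congr rfl step, Finset.sum_const, smul_eq_mul, mul_comm]
    have hstrict : ∑ p ∈ s, 2 * famAgreeU Q T.splits (T.pull2Fam p.1 p.2)
        < ∑ p ∈ s, famDisagreeU Q T.splits (T.pull2Fam p.1 p.2) :=
      Finset.sum_lt_sum_of_nonempty hsne hcon'
    have hsplit : ∑ p ∈ s, (famAgreeU Q T.splits (T.pull2Fam p.1 p.2)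
        + famDisagreeU Q T.splits (T.pull2Fam p.1 p.2))
        = ∑ p ∈ s, famAgreeU Q T.splits (T.pull2Fam p.1 p.2)
        + ∑ p ∈ s, famDisagreeU Q T.splits (T.pull2Fam p.1 p.2) :=
      Finset.sum_add_distrib
    have h1 : ∑ p ∈ s, (famAgreeU Q T.splits (T.pull2Fam p.1 p.2)
        + famDisagreeU Q T.splits (T.pull2Fam p.1 p.2))
        = ∑ p ∈ s, k * (famLU T.splits (T.pull2Fam p.1 p.2)).card :=
      Finset.sum_congr rfl hfa
    rw [← Finset.mul_sum] at hglob hstrict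
    omega
end
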